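/- arXiv:1109.4693 — 10 statements merged into one kernel-verified Lean document; each statement's English description precedes it below -/
import Mathlib

section
/- Let f and g be monic polynomials over F_q of degrees m and n with all roots nonzero. Then the composed multiplication f ⊙ g is irreducible over F_q if and only if f and g are both irreducible over F_q and gcd(m, n) = 1. -/
open Polynomial IntermediateField

section aux

variable (Fq : Type*) [Field Fq] [Fintype Fq]

omit [Fintype Fq] in
lemma pow_iterate_fix {x : AlgebraicClosure Fq} {q a : ℕ} (h : x ^ q ^ a = x) (j : ℕ) :
    x ^ q ^ (a * j) = x := by
  induction j with
  | zero => simp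
  | succ j ih =>
    rw [Nat.mul_succ, pow_add, pow_mul, ih, h]

local notation "K" => AlgebraicClosure Fq

lemma key (x : AlgebraicClosure Fq) (k : ℕ) :
    x ^ (Fintype.card Fq) ^ k = x ↔ (minpoly Fq x).natDegree ∣ k := by
  classical
  set q := Fintype.card Fq with hq
  have hx : IsIntegral Fq x := Algebra.IsIntegral.isIntegral x
  set d := (minpoly Fq x).natDegree with hdd
  have hdpos : 0 < d := minpoly.natDegree_pos hx
  -- Part A : x ^ q ^ d = x
  haveI : FiniteDimensional Fq Fq⟮x⟯ := IntermediateField.adjoin.finiteDimensional hx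
  haveI : Finite (Fq⟮x⟯) := Module.finite_of_finite Fq
  haveI : Fintype Fq⟮x⟯ := Fintype.ofFinite _
  have hcard : Fintype.card Fq⟮x⟯ = q ^ d := by
    rw [show Fintype.card ↥Fq⟮x⟯ = Fintype.card Fq ^ Module.finrank Fq ↥Fq⟮x⟯ from
      Module.card_eq_pow_finrank, IntermediateField.adjoin.finrank hx]
  have hA : x ^ q ^ d = x := by
    have := FiniteField.pow_card (IntermediateField.AdjoinSimple.gen Fq x)
    rw [hcard] at this
    have := congrArg (algebraMap Fq⟮x⟯ K) this
    rwa [map_pow, IntermediateField.AdjoinSimple.algebraMap_gen] at this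
  constructor
  · intro h
    rcases Nat.eq_zero_or_pos (k % d) with hr | hrpos
    · exact Nat.dvd_of_mod_eq_zero hr
    exfalso
    -- x ^ q ^ (k % d) = x with 0 < k % d < d : contradiction via counting
    set r := k % d with hrdef
    have hr1 : x ^ q ^ r = x := by
      have h1 : x ^ q ^ (d * (k / d)) = x := pow_iterate_fix Fq hA _
      calc x ^ q ^ r = (x ^ q ^ (d * (k / d))) ^ q ^ r := by rw [h1]
        _ = x ^ q ^ (d * (k / d) + r) := by rw [pow_add, pow_mul x]
        _ = x ^ q ^ k := by rw [Nat.div_add_mod]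
        _ = x := h
    have hrd : r < d := Nat.mod_lt _ hdpos
    -- characteristic setup
    obtain ⟨p, hp⟩ := CharP.exists Fq
    haveI := hp
    have hpprime : p.Prime := CharP.char_is_prime Fq p
    haveI : Fact p.Prime := ⟨hpprime⟩
    obtain ⟨s, -, hcardq⟩ := FiniteField.card Fq p
    have hcardq' : q = p ^ (s : ℕ) := by rw [hq]; exact_mod_cast hcardq
    -- the subfield of elements fixed by y ↦ y ^ q ^ r
    have hqr : ∀ y : K, iterateFrobenius K p ((s : ℕ) * r) y = y ^ q ^ r := by
      intro y
      rw [iterateFrobenius_def, pow_mul, hcardq']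
    set S₀ : Subfield K := RingHom.eqLocusField (iterateFrobenius K p ((s : ℕ) * r)) (RingHom.id K)
      with hS₀
    have hmemS₀ : ∀ y : K, y ∈ S₀ ↔ y ^ q ^ r = y := by
      intro y
      constructor
      · intro hy
        have : iterateFrobenius K p (s * r) y = RingHom.id K y := hy
        rwa [hqr, RingHom.id_apply] at this
      · intro hy
        show iterateFrobenius K p (s * r) y = RingHom.id K y
        rw [hqr, RingHom.id_apply, hy]
    set S : IntermediateField Fq K := S₀.toIntermediateField (fun a => by
      rw [hmemS₀, ← map_pow, FiniteField.pow_card_pow]) with hS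
    have hxS : x ∈ S := (hmemS₀ x).mpr hr1
    have hle : Fq⟮x⟯ ≤ S := by
      rw [IntermediateField.adjoin_le_iff]
      simpa using hxS
    -- counting
    set P : K[X] := X ^ (q ^ r) - X with hP
    have hq1 : 1 < q := Fintype.one_lt_card
    have hqrdeg : 1 < q ^ r := Nat.one_lt_pow (by omega) hq1
    have hPdeg : P.natDegree = q ^ r := by
      rw [hP, natDegree_sub_eq_left_of_natDegree_lt] <;>
        rw [natDegree_X_pow] <;> try rw [natDegree_X]
      omega
    have hPne : P ≠ 0 := by
      intro h0
      rw [h0, natDegree_zero] at hPdeg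
      omega
    have hmap : ∀ y : ↥Fq⟮x⟯, (y : K) ∈ P.roots.toFinset := by
      intro y
      rw [Multiset.mem_toFinset, mem_roots hPne]
      have hyS : (y : K) ∈ S₀ := hle y.2
      have hyfix : (y : K) ^ q ^ r = (y : K) := (hmemS₀ _).mp hyS
      simp only [IsRoot, hP, eval_sub, eval_pow, eval_X]
      rw [hyfix, sub_self]
    have hcount : Fintype.card ↥Fq⟮x⟯ ≤ q ^ r := by
      have h1 : Fintype.card ↥Fq⟮x⟯ ≤ P.roots.toFinset.card := by
        rw [← Fintype.card_coe]
        exact Fintype.card_le_of_injective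
          (fun y => ⟨(y : K), hmap y⟩)
          (fun a b hab => by
            have h2 : ((⟨(a : K), hmap a⟩ : {z // z ∈ P.roots.toFinset}) : K)
                = ((⟨(b : K), hmap b⟩ : {z // z ∈ P.roots.toFinset}) : K) :=
              congrArg Subtype.val hab
            exact Subtype.ext h2)
      calc Fintype.card ↥Fq⟮x⟯ ≤ P.roots.toFinset.card := h1
        _ ≤ Multiset.card P.roots := Multiset.toFinset_card_le _
        _ ≤ P.natDegree := P.card_roots'
        _ = q ^ r := hPdeg
    rw [hcard] at hcount
    have : d ≤ r := (Nat.pow_le_pow_iff_right hq1).mp hcount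
    omega
  · rintro ⟨j, rfl⟩
    exact pow_iterate_fix Fq hA j

end aux

/-- The multiset of roots of `f` in the algebraic closure of `F`. -/
noncomputable def acRoots (F : Type*) [Field F] (f : F[X]) : Multiset (AlgebraicClosure F) :=
  (f.map (algebraMap F (AlgebraicClosure F))).roots

/-- Composed multiplication: `(f ⊙ g)(x) = ∏_α ∏_β (x - αβ)` over all roots `α` of `f`
and `β` of `g` in the algebraic closure. -/
noncomputable def compMul (F : Type*) [Field F] (f g : F[X]) : (AlgebraicClosure F)[X] :=
  ((acRoots F f).bind fun α => (acRoots F g).map fun β => X - C (α * β)).prod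

/-- Brawley–Carlitz: `f ⊙ g` is irreducible over `F_q` iff `f` and `g` are irreducible
and their degrees are coprime.  `F` is the polynomial over `F_q` representing `f ⊙ g`. -/
theorem stmt3 (Fq : Type*) [Field Fq] [Fintype Fq] (f g : Fq[X]) (m n : ℕ)
    (hf : f.Monic) (hg : g.Monic) (hm : f.natDegree = m) (hn : g.natDegree = n)
    (h0f : (0 : AlgebraicClosure Fq) ∉ acRoots Fq f)
    (h0g : (0 : AlgebraicClosure Fq) ∉ acRoots Fq g)
    (F : Fq[X]) (hF : F.map (algebraMap Fq (AlgebraicClosure Fq)) = compMul Fq f g) :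
    Irreducible F ↔ Irreducible f ∧ Irreducible g ∧ Nat.Coprime m n := by
  classical
  set φ := algebraMap Fq (AlgebraicClosure Fq) with hφ
  have φinj : Function.Injective φ := φ.injective
  set q := Fintype.card Fq with hqdef
  -- cardinalities of root multisets
  have hcf : Multiset.card (acRoots Fq f) = m := by
    rw [acRoots, ← hm]
    exact ((natDegree_map _).symm.trans (IsAlgClosed.splits (f.map _)).natDegree_eq_card_roots).symm
  have hcg : Multiset.card (acRoots Fq g) = n := by
    rw [acRoots, ← hn]
    exact ((natDegree_map _).symm.trans (IsAlgClosed.splits (g.map _)).natDegree_eq_card_roots).symm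
  set M : Multiset (AlgebraicClosure Fq) :=
    (acRoots Fq f).bind fun α => (acRoots Fq g).map (α * ·) with hM
  have hFM : F.map φ = (M.map fun c => X - C c).prod := by
    rw [hF, compMul]
    congr 1
    rw [hM, Multiset.map_bind]
    simp only [Multiset.map_map, Function.comp_def]
  have hMcard : Multiset.card M = m * n := by
    rw [hM, Multiset.card_bind]
    simp only [Function.comp_def, Multiset.card_map, hcg]
    rw [Multiset.map_const', Multiset.sum_replicate, hcf, smul_eq_mul]
  have hmonicmap : (F.map φ).Monic := by
    rw [hFM]
    exact monic_multiset_prod_of_monic _ _ fun c _ => monic_X_sub_C c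
  have hFmonic : F.Monic := φinj.monic_map_iff.mpr hmonicmap
  have hFdeg : F.natDegree = m * n := by
    rw [← natDegree_map_eq_of_injective φinj F, hFM,
      natDegree_multiset_prod_X_sub_C_eq_card, hMcard]
  have hroots : (F.map φ).roots = M := by
    rw [hFM, roots_multiset_prod_X_sub_C]
  have haevalM : ∀ γ ∈ M, aeval γ F = 0 := by
    intro γ hγ
    have h1 : γ ∈ (F.map φ).roots := hroots ▸ hγ
    rw [aeval_def, ← eval_map]
    exact (mem_roots'.mp h1).2
  have hmemM : ∀ {α β : AlgebraicClosure Fq},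
      α ∈ acRoots Fq f → β ∈ acRoots Fq g → α * β ∈ M := fun hα hβ =>
    Multiset.mem_bind.mpr ⟨_, hα, Multiset.mem_map.mpr ⟨_, hβ, rfl⟩⟩
  have harootf : ∀ {α : AlgebraicClosure Fq}, α ∈ acRoots Fq f → aeval α f = 0 := by
    intro α hα
    rw [acRoots] at hα
    rw [aeval_def, ← eval_map]
    exact (mem_roots'.mp hα).2
  have harootg : ∀ {β : AlgebraicClosure Fq}, β ∈ acRoots Fq g → aeval β g = 0 := by
    intro β hβ
    rw [acRoots] at hβ
    rw [aeval_def, ← eval_map]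
    exact (mem_roots'.mp hβ).2
  constructor
  · -- F irreducible ⇒ f, g irreducible and coprime
    intro hFirr
    have hmn1 : 0 < m * n := hFdeg ▸ hFirr.natDegree_pos
    have hm1 : 0 < m := Nat.pos_of_ne_zero fun h => by simp [h] at hmn1
    have hn1 : 0 < n := Nat.pos_of_ne_zero fun h => by simp [h] at hmn1
    obtain ⟨α, hα⟩ := Multiset.card_pos_iff_exists_mem.mp (by rw [hcf]; exact hm1)
    obtain ⟨β, hβ⟩ := Multiset.card_pos_iff_exists_mem.mp (by rw [hcg]; exact hn1)
    have hγM := hmemM hα hβ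
    have hαint : IsIntegral Fq α := Algebra.IsIntegral.isIntegral α
    have hβint : IsIntegral Fq β := Algebra.IsIntegral.isIntegral β
    have hγint : IsIntegral Fq (α * β) := Algebra.IsIntegral.isIntegral _
    have hFeq : minpoly Fq (α * β) = F :=
      (minpoly.eq_of_irreducible_of_monic hFirr (haevalM _ hγM) hFmonic).symm
    set a := (minpoly Fq α).natDegree with ha
    set b := (minpoly Fq β).natDegree with hb
    have hdvdf : minpoly Fq α ∣ f := minpoly.dvd Fq α (harootf hα)
    have hdvdg : minpoly Fq β ∣ g := minpoly.dvd Fq β (harootg hβ)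
    have ham : a ≤ m := hm ▸ natDegree_le_of_dvd hdvdf hf.ne_zero
    have hbn : b ≤ n := hn ▸ natDegree_le_of_dvd hdvdg hg.ne_zero
    have hapos : 0 < a := minpoly.natDegree_pos hαint
    have hbpos : 0 < b := minpoly.natDegree_pos hβint
    have hfix_ab : (α * β) ^ q ^ (a * b) = α * β := by
      rw [mul_pow, (key Fq α (a * b)).mpr (Dvd.intro b rfl),
        (key Fq β (a * b)).mpr (Dvd.intro_left a rfl)]
    have hdvd_mn_ab : m * n ∣ a * b := by
      have h1 := (key Fq (α * β) (a * b)).mp hfix_ab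
      rwa [hFeq, hFdeg] at h1
    have hab : a * b = m * n :=
      le_antisymm (Nat.mul_le_mul ham hbn) (Nat.le_of_dvd (by positivity) hdvd_mn_ab)
    have ham' : a = m := by
      refine le_antisymm ham (Nat.le_of_mul_le_mul_right ?_ hn1)
      calc m * n = a * b := hab.symm
        _ ≤ a * n := Nat.mul_le_mul_left a hbn
    have hbn' : b = n := by
      refine Nat.eq_of_mul_eq_mul_left hm1 ?_
      rw [← ham', hab, ham']
    have hfeq : f = minpoly Fq α :=
      eq_of_monic_of_dvd_of_natDegree_le (minpoly.monic hαint) hf hdvdf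
        (by rw [hm, ← ha, ham'])
    have hgeq : g = minpoly Fq β :=
      eq_of_monic_of_dvd_of_natDegree_le (minpoly.monic hβint) hg hdvdg
        (by rw [hn, ← hb, hbn'])
    refine ⟨hfeq ▸ minpoly.irreducible hαint, hgeq ▸ minpoly.irreducible hβint, ?_⟩
    -- coprimality
    have hfix_lcm : (α * β) ^ q ^ Nat.lcm m n = α * β := by
      rw [mul_pow, (key Fq α _).mpr (by rw [← ha, ham']; exact Nat.dvd_lcm_left m n),
        (key Fq β _).mpr (by rw [← hb, hbn']; exact Nat.dvd_lcm_right m n)]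
    have hdvd_lcm : m * n ∣ Nat.lcm m n := by
      have h1 := (key Fq (α * β) _).mp hfix_lcm
      rwa [hFeq, hFdeg] at h1
    have hlcm : Nat.lcm m n = m * n :=
      Nat.dvd_antisymm (Nat.lcm_dvd (dvd_mul_right m n) (dvd_mul_left n m)) hdvd_lcm
    have hgl := Nat.gcd_mul_lcm m n
    rw [hlcm] at hgl
    have : Nat.gcd m n * (m * n) = 1 * (m * n) := by rw [one_mul, hgl]
    exact Nat.eq_of_mul_eq_mul_right hmn1 this
  · -- converse
    rintro ⟨hfi, hgi, hcop⟩
    have hm1 : 0 < m := hm ▸ hfi.natDegree_pos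
    have hn1 : 0 < n := hn ▸ hgi.natDegree_pos
    obtain ⟨α, hα⟩ := Multiset.card_pos_iff_exists_mem.mp (by rw [hcf]; exact hm1)
    obtain ⟨β, hβ⟩ := Multiset.card_pos_iff_exists_mem.mp (by rw [hcg]; exact hn1)
    have hα0 : α ≠ 0 := fun h => h0f (h ▸ hα)
    have hβ0 : β ≠ 0 := fun h => h0g (h ▸ hβ)
    have hαint : IsIntegral Fq α := Algebra.IsIntegral.isIntegral α
    have hβint : IsIntegral Fq β := Algebra.IsIntegral.isIntegral β
    have hγint : IsIntegral Fq (α * β) := Algebra.IsIntegral.isIntegral _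
    have hminα : (minpoly Fq α).natDegree = m := by
      rw [← minpoly.eq_of_irreducible_of_monic hfi (harootf hα) hf, hm]
    have hminβ : (minpoly Fq β).natDegree = n := by
      rw [← minpoly.eq_of_irreducible_of_monic hgi (harootg hβ) hg, hn]
    have hkα : ∀ k, α ^ q ^ k = α ↔ m ∣ k := fun k => by
      rw [key Fq α k, hminα]
    have hkβ : ∀ k, β ^ q ^ k = β ↔ n ∣ k := fun k => by
      rw [key Fq β k, hminβ]
    set d := (minpoly Fq (α * β)).natDegree with hd
    have hd_dvd : d ∣ m * n := by
      rw [← key Fq (α * β) (m * n), mul_pow,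
        (hkα _).mpr (dvd_mul_right m n), (hkβ _).mpr (dvd_mul_left n m)]
    have hdmn : d = m * n := by
      by_contra hne
      obtain ⟨c, hc⟩ := hd_dvd
      have hc0 : c ≠ 0 := fun h => by
        rw [h, mul_zero] at hc
        exact absurd hc (Nat.mul_pos hm1 hn1).ne'
      have hc1 : c ≠ 1 := fun h => hne (by rw [hc, h, mul_one])
      obtain ⟨ℓ, hℓp, t, ht⟩ : ∃ ℓ, ℓ.Prime ∧ ∃ t, c = ℓ * t := by
        obtain ⟨ℓ, hℓp, hℓd⟩ := Nat.exists_prime_and_dvd hc1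
        exact ⟨ℓ, hℓp, hℓd⟩
      have hℓmn : ℓ ∣ m * n := ⟨d * t, by rw [hc, ht]; ring⟩
      have hdfix : ∀ e, d ∣ e → (α * β) ^ q ^ e = α * β := fun e he =>
        (key Fq (α * β) e).mpr he
      rcases (Nat.Prime.dvd_mul hℓp).mp hℓmn with hdm | hdn
      · obtain ⟨u, hu⟩ := hdm
        have hu0 : 0 < u := Nat.pos_of_ne_zero fun h => by
          rw [h, mul_zero] at hu; omega
        have he : u * n = d * t := by
          have h2 : ℓ * (u * n) = ℓ * (d * t) := by
            calc ℓ * (u * n) = (ℓ * u) * n := by ring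
              _ = m * n := by rw [hu]
              _ = d * (ℓ * t) := by rw [hc, ht]
              _ = ℓ * (d * t) := by ring
          exact Nat.eq_of_mul_eq_mul_left hℓp.pos h2
        have hfix : (α * β) ^ q ^ (u * n) = α * β := by
          rw [he]; exact hdfix _ ⟨t, rfl⟩
        rw [mul_pow, (hkβ _).mpr (dvd_mul_left n u)] at hfix
        have hαfix : α ^ q ^ (u * n) = α := mul_right_cancel₀ hβ0 hfix
        have hmdvd : m ∣ u := hcop.dvd_of_dvd_mul_right ((hkα _).mp hαfix)
        have h3 : ℓ * u ≤ u := hu ▸ Nat.le_of_dvd hu0 hmdvd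
        have h4 : u < 2 * u := by omega
        have h5 : 2 * u ≤ ℓ * u := Nat.mul_le_mul_right u hℓp.two_le
        exact absurd h3 (Nat.not_le.mpr (lt_of_lt_of_le h4 h5))
      · obtain ⟨v, hv⟩ := hdn
        have hv0 : 0 < v := Nat.pos_of_ne_zero fun h => by
          rw [h, mul_zero] at hv; omega
        have he : m * v = d * t := by
          have h2 : ℓ * (m * v) = ℓ * (d * t) := by
            calc ℓ * (m * v) = m * (ℓ * v) := by ring
              _ = m * n := by rw [hv]
              _ = d * (ℓ * t) := by rw [hc, ht]
              _ = ℓ * (d * t) := by ring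
          exact Nat.eq_of_mul_eq_mul_left hℓp.pos h2
        have hfix : (α * β) ^ q ^ (m * v) = α * β := by
          rw [he]; exact hdfix _ ⟨t, rfl⟩
        rw [mul_pow, (hkα _).mpr (dvd_mul_right m v)] at hfix
        have hβfix : β ^ q ^ (m * v) = β := mul_left_cancel₀ hα0 hfix
        have hndvd : n ∣ v := (hcop.symm).dvd_of_dvd_mul_left ((hkβ _).mp hβfix)
        have h3 : ℓ * v ≤ v := hv ▸ Nat.le_of_dvd hv0 hndvd
        have h4 : v < 2 * v := by omega
        have h5 : 2 * v ≤ ℓ * v := Nat.mul_le_mul_right v hℓp.two_le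
        exact absurd h3 (Nat.not_le.mpr (lt_of_lt_of_le h4 h5))
    have hdvdF : minpoly Fq (α * β) ∣ F := minpoly.dvd Fq _ (haevalM _ (hmemM hα hβ))
    have hFeq : F = minpoly Fq (α * β) :=
      eq_of_monic_of_dvd_of_natDegree_le (minpoly.monic hγint) hFmonic hdvdF
        (by rw [hFdeg, ← hd, hdmn])
    exact hFeq ▸ minpoly.irreducible hγint
end

section
/- Let f be a monic irreducible polynomial over F_q of degree n and order t (i.e., t is the multiplicative order of any root of f), and let r be a positive integer. If f(x) divides f(x^r) in F_q[x], then r ≡ q^i (mod t) for some i with 0 ≤ i ≤ n−1. -/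
open Polynomial

theorem stmt5 (Fq : Type*) [Field Fq] [Fintype Fq] (f : Fq[X]) (n t r : ℕ)
    (hf : f.Monic) (hirr : Irreducible f) (hn : f.natDegree = n)
    (h0 : f.coeff 0 ≠ 0) (hr : 0 < r)
    (α : AlgebraicClosure Fq) (hα : aeval α f = 0) (ht : t = orderOf α)
    (hdvd : f ∣ f.comp (X ^ r)) :
    ∃ i < n, r ≡ (Fintype.card Fq) ^ i [MOD t] := by
  classical
  set q := Fintype.card Fq with hqdef
  have hq1 : 1 < q := Fintype.one_lt_card
  have hq0 : 0 < q := by omega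
  -- characteristic setup
  set p := ringChar Fq with hpdef
  haveI : CharP Fq p := ringChar.charP Fq
  obtain ⟨k, hp, hqpk⟩ := FiniteField.card Fq p
  haveI : Fact p.Prime := ⟨hp⟩
  haveI : CharP (AlgebraicClosure Fq) p :=
    charP_of_injective_algebraMap (algebraMap Fq (AlgebraicClosure Fq)).injective p
  -- the q-power Frobenius on the algebraic closure
  set ψ : AlgebraicClosure Fq →+* AlgebraicClosure Fq :=
    iterateFrobenius (AlgebraicClosure Fq) p k with hψdef
  have hψ : ∀ x : AlgebraicClosure Fq, ψ x = x ^ q := by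
    intro x; rw [hψdef, iterateFrobenius_def, ← hqpk]
  have hψinj : Function.Injective ψ := ψ.injective
  have hit : ∀ (x : AlgebraicClosure Fq) (l : ℕ), ψ^[l] x = x ^ q ^ l := by
    intro x l
    induction l generalizing x with
    | zero => simp
    | succ l ih => rw [Function.iterate_succ_apply, ih, hψ, ← pow_mul, ← pow_succ']
  -- cancellation lemma for Frobenius powers of α
  have hcancel : ∀ i j : ℕ, i ≤ j → α ^ q ^ i = α ^ q ^ j → α ^ q ^ (j - i) = α := by
    intro i j hij he
    apply Function.Injective.iterate hψinj i
    rw [hit, hit, ← pow_mul, ← pow_add, show j - i + i = j from by omega]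
    exact he.symm
  -- basic facts
  have hmin : f = minpoly Fq α := minpoly.eq_of_irreducible_of_monic hirr hα hf
  have hα0 : α ≠ 0 := by
    intro h
    apply h0
    have h2 := hα
    rw [h, aeval_def, eval₂_at_zero] at h2
    exact (_root_.map_eq_zero (algebraMap Fq (AlgebraicClosure Fq))).mp h2
  have hn1 : 0 < n := hn ▸ hirr.natDegree_pos
  -- powers α ^ q ^ i are roots of f
  have key : ∀ x : AlgebraicClosure Fq, aeval (x ^ q) f = (aeval x f) ^ q := by
    intro x
    rw [← expand_aeval, FiniteField.expand_card, map_pow]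
  have keyi : ∀ i : ℕ, aeval (α ^ q ^ i) f = 0 := by
    intro i
    induction i with
    | zero => simpa using hα
    | succ i ih => rw [pow_succ, pow_mul, key, ih, zero_pow (by omega)]
  -- α ^ r is a root of f
  have hroot_r : aeval (α ^ r) f = 0 := by
    obtain ⟨g, hg⟩ := hdvd
    have h2 : aeval α (f.comp (X ^ r)) = 0 := by rw [hg, map_mul, hα, zero_mul]
    rwa [aeval_comp, map_pow, aeval_X] at h2
  -- root set of f in the algebraic closure
  have hmapne : f.map (algebraMap Fq (AlgebraicClosure Fq)) ≠ 0 := (hf.map _).ne_zero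
  have hmem : ∀ x : AlgebraicClosure Fq, aeval x f = 0 →
      x ∈ (f.map (algebraMap Fq (AlgebraicClosure Fq))).roots.toFinset := by
    intro x hx
    rw [Multiset.mem_toFinset, mem_roots hmapne, IsRoot, eval_map, ← aeval_def]
    exact hx
  have hcardroots : (f.map (algebraMap Fq (AlgebraicClosure Fq))).roots.toFinset.card ≤ n := by
    refine le_trans (Multiset.toFinset_card_le _) ?_
    calc Multiset.card (f.map (algebraMap Fq (AlgebraicClosure Fq))).roots
        ≤ (f.map (algebraMap Fq (AlgebraicClosure Fq))).natDegree := card_roots' _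
      _ = n := by rw [hf.natDegree_map, hn]
  -- there exists a positive period: α ^ q ^ m = α
  have hex : ∃ m, 0 < m ∧ α ^ q ^ m = α := by
    obtain ⟨i, hi, j, hj, hij, he⟩ :=
      Finset.exists_ne_map_eq_of_card_lt_of_maps_to
        (s := Finset.range (n + 1))
        (t := (f.map (algebraMap Fq (AlgebraicClosure Fq))).roots.toFinset)
        (by rw [Finset.card_range]; omega)
        (fun i _ => hmem _ (keyi i))
    rcases lt_or_gt_of_ne hij with h | h
    · exact ⟨j - i, by omega, hcancel i j (by omega) he⟩
    · exact ⟨i - j, by omega, hcancel j i (by omega) he.symm⟩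
  -- minimal period m
  set m := Nat.find hex with hmdef
  obtain ⟨hm0, hmfix⟩ : 0 < m ∧ α ^ q ^ m = α := Nat.find_spec hex
  have hmmin : ∀ l, 0 < l → α ^ q ^ l = α → m ≤ l := fun l h1 h2 => Nat.find_le ⟨h1, h2⟩
  -- shifting by m
  have hshift : ∀ a, α ^ q ^ (a + m) = α ^ q ^ a := by
    intro a
    rw [pow_add, mul_comm, pow_mul, hmfix]
  -- injectivity on range m
  have hinj : ∀ i < m, ∀ j < m, α ^ q ^ i = α ^ q ^ j → i = j := by
    have key2 : ∀ i j, i < j → j < m → α ^ q ^ i ≠ α ^ q ^ j := by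
      intro i j hij hjm he
      have h3 := hcancel i j (by omega) he
      have := hmmin (j - i) (by omega) h3
      omega
    intro i hi j hj he
    rcases lt_trichotomy i j with h | h | h
    · exact absurd he (key2 i j h hj)
    · exact h
    · exact absurd he.symm (key2 j i h hi)
  -- the set S of conjugates
  set S : Finset (AlgebraicClosure Fq) :=
    (Finset.range m).image (fun i => α ^ q ^ i) with hSdef
  have hScard : S.card = m := by
    rw [hSdef, Finset.card_image_of_injOn, Finset.card_range]
    intro i hi j hj he
    exact hinj i (Finset.mem_range.mp hi) j (Finset.mem_range.mp hj) he
  have hSsub : S ⊆ (f.map (algebraMap Fq (AlgebraicClosure Fq))).roots.toFinset := by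
    intro x hx
    rw [hSdef, Finset.mem_image] at hx
    obtain ⟨i, _, rfl⟩ := hx
    exact hmem _ (keyi i)
  have hmn : m ≤ n := by
    have h4 := Finset.card_le_card hSsub
    rw [hScard] at h4
    omega
  -- the product polynomial over the conjugates
  set g : (AlgebraicClosure Fq)[X] := ∏ i ∈ Finset.range m, (X - C (α ^ q ^ i)) with hgdef
  have hgmonic : g.Monic := monic_prod_of_monic _ _ fun i _ => monic_X_sub_C _
  have hgdeg : g.natDegree = m := by
    rw [hgdef, natDegree_prod _ _ fun i _ => X_sub_C_ne_zero _]
    simp only [natDegree_X_sub_C]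
    rw [Finset.sum_const, Finset.card_range, smul_eq_mul, mul_one]
  have hgfixed : g.map ψ = g := by
    rw [hgdef, Polynomial.map_prod]
    have hterm : ∀ i : ℕ, (X - C (α ^ q ^ i)).map ψ = X - C (α ^ q ^ (i + 1)) := by
      intro i
      rw [Polynomial.map_sub, map_X, map_C, hψ, ← pow_mul, ← pow_succ]
    simp only [hterm]
    have hu0 : (X - C (α ^ q ^ m) : (AlgebraicClosure Fq)[X]) = X - C (α ^ q ^ 0) := by
      rw [show m = 0 + m from by omega, hshift 0]
    have hcancel2 : (∏ i ∈ Finset.range m, (X - C (α ^ q ^ (i + 1)))) * (X - C (α ^ q ^ 0)) =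
        (∏ i ∈ Finset.range m, (X - C (α ^ q ^ i))) * (X - C (α ^ q ^ 0)) := by
      rw [← Finset.prod_range_succ' (fun i => (X : (AlgebraicClosure Fq)[X]) - C (α ^ q ^ i)) m,
        Finset.prod_range_succ (fun i => (X : (AlgebraicClosure Fq)[X]) - C (α ^ q ^ i)) m, hu0]
    exact mul_right_cancel₀ (X_sub_C_ne_zero _) hcancel2
  -- fixed points of the q-power map lie in Fq
  have hfix : ∀ c : AlgebraicClosure Fq, c ^ q = c →
      c ∈ Set.range (algebraMap Fq (AlgebraicClosure Fq)) := by
    intro c hc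
    set T := (X ^ q - X : (AlgebraicClosure Fq)[X]).roots.toFinset with hTdef
    set im := Finset.univ.image (algebraMap Fq (AlgebraicClosure Fq)) with himdef
    have hne : (X ^ q - X : (AlgebraicClosure Fq)[X]) ≠ 0 :=
      FiniteField.X_pow_card_sub_X_ne_zero _ hq1
    have himsub : im ⊆ T := by
      intro x hx
      rw [himdef, Finset.mem_image] at hx
      obtain ⟨a, _, rfl⟩ := hx
      rw [hTdef, Multiset.mem_toFinset, mem_roots hne, IsRoot, eval_sub, eval_pow, eval_X,
        ← map_pow, FiniteField.pow_card, sub_self]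
    have himcard : im.card = q := by
      rw [himdef, Finset.card_image_of_injective _ (algebraMap Fq (AlgebraicClosure Fq)).injective,
        Finset.card_univ]
    have hTcard : T.card ≤ q := by
      refine le_trans (Multiset.toFinset_card_le _) ?_
      calc Multiset.card (X ^ q - X : (AlgebraicClosure Fq)[X]).roots
          ≤ (X ^ q - X : (AlgebraicClosure Fq)[X]).natDegree := card_roots' _
        _ = q := FiniteField.X_pow_card_sub_X_natDegree_eq _ hq1
    have hTeq : im = T := Finset.eq_of_subset_of_card_le himsub (himcard ▸ hTcard)
    have hcT : c ∈ T := by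
      rw [hTdef, Multiset.mem_toFinset, mem_roots hne, IsRoot, eval_sub, eval_pow, eval_X, hc,
        sub_self]
    rw [← hTeq, himdef, Finset.mem_image] at hcT
    obtain ⟨a, _, ha⟩ := hcT
    exact ⟨a, ha⟩
  -- lift g to Fq[X]
  have hlift : ∃ g₀ : Fq[X], g₀.map (algebraMap Fq (AlgebraicClosure Fq)) = g := by
    rw [← mem_lifts, lifts_iff_coeff_lifts]
    intro j
    apply hfix
    have h5 := congrArg (fun h : (AlgebraicClosure Fq)[X] => h.coeff j) hgfixed
    simpa [coeff_map, hψ] using h5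
  obtain ⟨g₀, hg₀⟩ := hlift
  have hg₀ne : g₀ ≠ 0 := by
    intro h
    rw [h, Polynomial.map_zero] at hg₀
    exact hgmonic.ne_zero hg₀.symm
  have hg₀deg : g₀.natDegree = m := by
    rw [← hgdeg, ← hg₀,
      natDegree_map_eq_of_injective (algebraMap Fq (AlgebraicClosure Fq)).injective]
  have haevalg₀ : aeval α g₀ = 0 := by
    rw [aeval_def, ← eval_map, hg₀, hgdef, eval_prod]
    refine Finset.prod_eq_zero (Finset.mem_range.mpr hm0) ?_
    simp
  have hnm : n ≤ m := by
    have hdvd0 : f ∣ g₀ := hmin ▸ minpoly.dvd Fq α haevalg₀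
    have h6 := natDegree_le_of_dvd hdvd0 hg₀ne
    omega
  have hmn' : m = n := le_antisymm hmn hnm
  -- the root set equals S
  have hSeq : S = (f.map (algebraMap Fq (AlgebraicClosure Fq))).roots.toFinset :=
    Finset.eq_of_subset_of_card_le hSsub (by rw [hScard, hmn']; exact hcardroots)
  have hrS : α ^ r ∈ S := by rw [hSeq]; exact hmem _ hroot_r
  rw [hSdef, Finset.mem_image] at hrS
  obtain ⟨i, hi, he⟩ := hrS
  refine ⟨i, by rw [← hmn']; exact Finset.mem_range.mp hi, ?_⟩
  -- transfer to units
  set αu : (AlgebraicClosure Fq)ˣ := Units.mk0 α hα0 with hαu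
  have horder : orderOf αu = t := by rw [ht, ← orderOf_units]; rfl
  have heu : αu ^ r = αu ^ q ^ i := by
    ext
    simpa [hαu] using he.symm
  rw [← horder]
  exact pow_eq_pow_iff_modEq.mp heu
end

section
/- Let r be an odd prime and q a prime power coprime to r such that q is a primitive root modulo r and r^2 does not divide q^{r−1} − 1. Then, for every k ≥ 0, the polynomial Φ_r(x^{r^k}) = x^{(r−1)r^k} + x^{(r−2)r^k} + ⋯ + x^{r^k} + 1 is irreducible over F_q. -/
open Polynomial IntermediateField

lemma pow_cast_eq_one_iff' (q d n : ℕ) (hq : 0 < q) :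
    ((q : ZMod n) ^ d = 1) ↔ n ∣ q ^ d - 1 := by
  have h1 : 1 ≤ q ^ d := Nat.one_le_pow _ _ hq
  rw [← Nat.cast_pow, ← Nat.cast_one, ZMod.natCast_eq_natCast_iff, Nat.ModEq.comm,
    Nat.modEq_iff_dvd' h1]

lemma cyclotomic_irreducible_of_orderOf_eq_totient' (Fq : Type*) [Field Fq] [Fintype Fq]
    {n : ℕ} (hn : 0 < n) (hne : ((n : ℕ) : Fq) ≠ 0)
    (hord : orderOf ((Fintype.card Fq : ZMod n)) = n.totient) :
    Irreducible (cyclotomic n Fq) := by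
  set q := Fintype.card Fq with hq
  have hq0 : 0 < q := Fintype.card_pos
  set N : ℕ+ := ⟨n, hn⟩ with hN
  haveI : NeZero (((N : ℕ) : Fq)) := ⟨hne⟩
  set L := CyclotomicField N Fq with hL
  haveI : FiniteDimensional Fq L :=
    IsCyclotomicExtension.finiteDimensional {(N : ℕ)} Fq L
  obtain ⟨ζ, hζ⟩ := IsCyclotomicExtension.exists_isPrimitiveRoot Fq (B := L) (Set.mem_singleton (N : ℕ)) N.ne_zero
  have hint : IsIntegral Fq ζ := IsIntegral.of_finite Fq ζ
  have hζn : IsPrimitiveRoot ζ n := hζ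
  have hmd : minpoly Fq ζ ∣ cyclotomic n Fq := by
    apply minpoly.dvd
    rw [aeval_def, ← eval_map, map_cyclotomic]
    exact hζn.isRoot_cyclotomic hn
  set m := (minpoly Fq ζ).natDegree with hm
  have hmle : m ≤ n.totient := by
    have h := Polynomial.natDegree_le_of_dvd hmd (cyclotomic_ne_zero n Fq)
    rwa [natDegree_cyclotomic] at h
  haveI := IntermediateField.adjoin.finiteDimensional hint
  haveI : Finite (↥Fq⟮ζ⟯) := Module.finite_of_finite Fq
  haveI : Fintype (↥Fq⟮ζ⟯) := Fintype.ofFinite _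
  have hcard : Fintype.card (↥Fq⟮ζ⟯) = q ^ m := by
    rw [Module.card_eq_pow_finrank (K := Fq) (V := ↥Fq⟮ζ⟯), IntermediateField.adjoin.finrank hint]
  set ζ' : ↥Fq⟮ζ⟯ := IntermediateField.AdjoinSimple.gen Fq ζ with hζ'def
  have hζ' : IsPrimitiveRoot ζ' n := by
    apply IsPrimitiveRoot.of_map_of_injective (f := algebraMap (↥Fq⟮ζ⟯) L)
    · rw [IntermediateField.AdjoinSimple.algebraMap_gen]
      exact hζn
    · exact (algebraMap (↥Fq⟮ζ⟯) L).injective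
  have hu : IsUnit ζ' := hζ'.isUnit hn.ne'
  have horder : orderOf hu.unit = n := by
    rw [← orderOf_units, IsUnit.unit_spec, ← hζ'.eq_orderOf]
  have hdvd : n ∣ q ^ m - 1 := by
    have h := orderOf_dvd_natCard hu.unit
    rwa [horder, Nat.card_units, Nat.card_eq_fintype_card, hcard] at h
  have hpow : ((q : ZMod n)) ^ m = 1 := (pow_cast_eq_one_iff' q m n hq0).mpr hdvd
  have htotdvd : n.totient ∣ m := hord ▸ orderOf_dvd_of_pow_eq_one hpow
  have hmpos : 0 < m := minpoly.natDegree_pos hint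
  have hmeq : m = n.totient := le_antisymm hmle (Nat.le_of_dvd hmpos htotdvd)
  obtain ⟨c, hc⟩ := hmd
  have hmin0 : minpoly Fq ζ ≠ 0 := minpoly.ne_zero hint
  have hc0 : c ≠ 0 := by
    rintro rfl
    rw [mul_zero] at hc
    exact cyclotomic_ne_zero n Fq hc
  have hcdeg : c.natDegree = 0 := by
    have h := congrArg natDegree hc
    rw [natDegree_cyclotomic, natDegree_mul hmin0 hc0, ← hm, hmeq] at h
    omega
  have hclead : c.leadingCoeff = 1 := by
    have h := congrArg leadingCoeff hc
    rw [leadingCoeff_mul, (minpoly.monic hint).leadingCoeff, one_mul,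
      (cyclotomic.monic n Fq).leadingCoeff] at h
    exact h.symm
  have hc1 : c = 1 := by
    rw [Polynomial.eq_C_of_natDegree_eq_zero hcdeg]
    rw [Polynomial.leadingCoeff, hcdeg] at hclead
    rw [hclead, map_one]
  rw [hc, hc1, mul_one]
  exact minpoly.irreducible hint

-- helper: n ∣ q^d - 1  ↔  (q : ZMod n)^d = 1
lemma pow_cast_eq_one_iff (q d n : ℕ) (hq : 0 < q) :
    ((q : ZMod n) ^ d = 1) ↔ n ∣ q ^ d - 1 := by
  have h1 : 1 ≤ q ^ d := Nat.one_le_pow _ _ hq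
  rw [← Nat.cast_pow, ← Nat.cast_one, ZMod.natCast_eq_natCast_iff, Nat.ModEq.comm,
    Nat.modEq_iff_dvd' h1]

lemma order_lift (q r : ℕ) (hr : r.Prime) (hrodd : Odd r) (hq : 1 < q)
    (hcop : Nat.Coprime q r) (hprim : orderOf ((q : ZMod r)) = r - 1)
    (hsq : ¬ (r ^ 2 ∣ q ^ (r - 1) - 1)) (k : ℕ) :
    orderOf ((q : ZMod (r ^ (k + 1)))) = (r ^ (k + 1)).totient := by
  haveI : Fact r.Prime := ⟨hr⟩
  have hq0 : 0 < q := lt_trans one_pos hq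
  set n := r ^ (k + 1) with hn
  haveI : NeZero n := ⟨pow_ne_zero _ hr.pos.ne'⟩
  set d := orderOf ((q : ZMod n)) with hd
  -- q is a unit mod n
  have hcopn : Nat.Coprime q n := hcop.pow_right _
  have hu : IsUnit ((q : ZMod n)) := (ZMod.isUnit_iff_coprime q n).mpr hcopn
  -- d divides totient n
  have hdvdtot : d ∣ n.totient := by
    have hdu : d = orderOf hu.unit := by rw [hd, ← orderOf_units, IsUnit.unit_spec]
    rw [← ZMod.card_units_eq_totient n, hdu]
    exact orderOf_dvd_card
  -- n ∣ q^d - 1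
  have hpow : ((q : ZMod n)) ^ d = 1 := pow_orderOf_eq_one _
  have hdvd1 : n ∣ q ^ d - 1 := (pow_cast_eq_one_iff q d n hq0).mp hpow
  -- r ∣ q^(r-1) - 1
  have hr1 : r ∣ q ^ (r - 1) - 1 := by
    rw [← pow_cast_eq_one_iff q (r-1) r hq0, ← hprim]
    exact pow_orderOf_eq_one _
  -- r - 1 divides d
  have hr1d : (r - 1) ∣ d := by
    have hrn : r ∣ n := dvd_pow_self r (Nat.succ_ne_zero k)
    have : r ∣ q ^ d - 1 := hrn.trans hdvd1
    rw [← pow_cast_eq_one_iff q d r hq0] at this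
    rw [← hprim]
    exact orderOf_dvd_of_pow_eq_one this
  -- totient n = r^k * (r-1)
  have htot : n.totient = r ^ k * (r - 1) := by
    rw [hn, Nat.totient_prime_pow hr (Nat.succ_pos k)]
    simp
  -- write d = (r-1) * r^j
  obtain ⟨m, hm⟩ := hr1d
  have hr2 := hr.two_le
  have hmdvd : m ∣ r ^ k := by
    have h2 : (r - 1) * m ∣ (r - 1) * r ^ k := by
      rw [← hm]
      rw [htot, mul_comm] at hdvdtot
      exact hdvdtot
    exact (mul_dvd_mul_iff_left (by omega : r - 1 ≠ 0)).mp h2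
  obtain ⟨j, hjk, hjm⟩ := (Nat.dvd_prime_pow hr).mp hmdvd
  -- not r ∣ q^(r-1)
  have hnd : ¬ r ∣ q ^ (r - 1) := (hr.coprime_iff_not_dvd).mp ((hcop.pow_left _).symm)
  -- LTE
  have e1 : emultiplicity r (q ^ (r - 1) - 1) = (1 : ℕ) := by
    rw [emultiplicity_eq_coe]
    constructor
    · simpa using hr1
    · simpa using hsq
  have e2 : emultiplicity r (r ^ j) = (j : ℕ) := Nat.Prime.emultiplicity_pow_self hr
  have hdq : q ^ d = (q ^ (r - 1)) ^ (r ^ j) := by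
    rw [hm, hjm, pow_mul]
  have hlte := Nat.emultiplicity_pow_sub_pow hr hrodd (x := q ^ (r - 1)) (y := 1) hr1 hnd (r ^ j)
  simp only [one_pow] at hlte
  have hle : ((k + 1 : ℕ) : ℕ∞) ≤ emultiplicity r (q ^ d - 1) :=
    le_emultiplicity_of_pow_dvd hdvd1
  rw [hdq, hlte, e1, e2] at hle
  have hle' : k + 1 ≤ 1 + j := by exact_mod_cast hle
  have hjk' : j = k := le_antisymm hjk (by omega)
  rw [hm, hjm, hjk', htot, mul_comm]

theorem stmt7 (Fq : Type*) [Field Fq] [Fintype Fq] (r : ℕ)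
    (hr : r.Prime) (hrodd : Odd r) (hcop : Nat.Coprime (Fintype.card Fq) r)
    (hprim : orderOf ((Fintype.card Fq : ZMod r)) = r - 1)
    (hsq : ¬ (r ^ 2 ∣ (Fintype.card Fq) ^ (r - 1) - 1)) :
    ∀ k : ℕ, Irreducible ((cyclotomic r Fq).comp (X ^ r ^ k)) := by
  intro k
  set q := Fintype.card Fq with hq
  have hq1 : 1 < q := Fintype.one_lt_card
  -- the composition is the cyclotomic polynomial of index r^(k+1)
  have hexp : ∀ j : ℕ, cyclotomic (r ^ (j + 1)) Fq = expand Fq (r ^ j) (cyclotomic r Fq) := by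
    intro j
    induction j with
    | zero => simp [Polynomial.expand_one]
    | succ j ih =>
      have hdvd : r ∣ r ^ (j + 1) := dvd_pow_self r (Nat.succ_ne_zero j)
      have h1 : expand Fq r (cyclotomic (r ^ (j + 1)) Fq) = cyclotomic (r ^ (j + 1) * r) Fq :=
        cyclotomic_expand_eq_cyclotomic hr hdvd Fq
      rw [← pow_succ, ih, Polynomial.expand_expand] at h1
      rw [← h1, pow_succ, mul_comm]
  have hcomp : (cyclotomic r Fq).comp (X ^ r ^ k) = cyclotomic (r ^ (k + 1)) Fq := by
    rw [hexp k, Polynomial.expand_eq_comp_X_pow]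
  rw [hcomp]
  -- the characteristic does not divide r^(k+1)
  have hne : ((r ^ (k + 1) : ℕ) : Fq) ≠ 0 := by
    intro h0
    set p := ringChar Fq with hp
    haveI : CharP Fq p := ringChar.charP Fq
    obtain ⟨f, hpprime, hcardq⟩ := FiniteField.card Fq p
    have hpr : p ∣ r ^ (k + 1) := (CharP.cast_eq_zero_iff Fq p _).mp h0
    have hpr' : p ∣ r := hpprime.dvd_of_dvd_pow hpr
    have hpq : p ∣ q := by
      rw [hq, hcardq]
      exact dvd_pow_self p f.pos.ne'
    have : p ∣ 1 := hcop ▸ Nat.dvd_gcd hpq hpr'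
    exact hpprime.one_lt.ne' (Nat.dvd_one.mp this)
  exact cyclotomic_irreducible_of_orderOf_eq_totient' Fq (pow_pos hr.pos _) hne
    (order_lift q r hr hrodd hq1 hcop hprim hsq k)
end

section
/- Let r be a prime, q a prime power coprime to r, and f an irreducible monic polynomial over F_q of degree n with f(0) ≠ 0 such that (i) f(x) divides f(x^r), (ii) q is a primitive root modulo r, and (iii) gcd(n, r−1) = 1. Then F(x) = f(x^r)/f(x) is an irreducible polynomial over F_q of degree n(r−1), and moreover F = f ⊙ Φ_r, the composed multiplication of f with the r-th cyclotomic polynomial. -/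
open Polynomial IntermediateField


section Frob

variable (Fq : Type*) [Field Fq] [Fintype Fq]

lemma exists_frob_pow (k : ℕ) :
    ∃ g : AlgebraicClosure Fq →+* AlgebraicClosure Fq,
      ∀ x, g x = x ^ Fintype.card Fq ^ k := by
  haveI : CharP (AlgebraicClosure Fq) (ringChar Fq) :=
    charP_of_injective_algebraMap (algebraMap Fq (AlgebraicClosure Fq)).injective _
  haveI hp : Fact (ringChar Fq).Prime := ⟨CharP.char_is_prime Fq _⟩
  obtain ⟨s, hsp, hs⟩ := FiniteField.card Fq (ringChar Fq)
  refine ⟨iterateFrobenius _ (ringChar Fq) (s * k), fun x => ?_⟩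
  rw [iterateFrobenius_def, hs, ← pow_mul]

lemma aeval_pow_card_pow (k : ℕ) (f : Fq[X]) (x : AlgebraicClosure Fq) :
    aeval (x ^ Fintype.card Fq ^ k) f = (aeval x f) ^ Fintype.card Fq ^ k := by
  obtain ⟨g, hg⟩ := exists_frob_pow Fq k
  have hcomp : g.comp (algebraMap Fq (AlgebraicClosure Fq)) = algebraMap Fq (AlgebraicClosure Fq) :=
    RingHom.ext fun c => by
      rw [RingHom.comp_apply, hg, ← map_pow, FiniteField.pow_card_pow]
  rw [← hg (aeval x f), aeval_def, aeval_def, hom_eval₂, hcomp, hg]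

lemma minpoly_natDegree_dvd_iff (x : AlgebraicClosure Fq) (k : ℕ) :
    x ^ Fintype.card Fq ^ k = x ↔ (minpoly Fq x).natDegree ∣ k := by
  classical
  set q := Fintype.card Fq with hq_def
  have hq : 1 < q := Fintype.one_lt_card
  have hint : IsIntegral Fq x := Algebra.IsIntegral.isIntegral x
  set d := (minpoly Fq x).natDegree with hd_def
  have hd0 : 0 < d := minpoly.natDegree_pos hint
  haveI : FiniteDimensional Fq Fq⟮x⟯ := IntermediateField.adjoin.finiteDimensional hint
  haveI : Finite (↥Fq⟮x⟯) := Module.finite_of_finite Fq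
  haveI : Fintype (↥Fq⟮x⟯) := Fintype.ofFinite _
  have hcardL : Fintype.card (↥Fq⟮x⟯) = q ^ d := by
    rw [Module.card_eq_pow_finrank (K := Fq), IntermediateField.adjoin.finrank hint]
  -- x is fixed by the d-th power of Frobenius
  have hxd : x ^ q ^ d = x := by
    set y : ↥Fq⟮x⟯ := ⟨x, IntermediateField.mem_adjoin_simple_self Fq x⟩ with hy
    have h1 : y ^ Fintype.card (↥Fq⟮x⟯) = y := FiniteField.pow_card y
    rw [hcardL] at h1
    have := congrArg (Subtype.val) h1
    simpa using this
  have hfix : ∀ m, d ∣ m → x ^ q ^ m = x := by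
    rintro m ⟨t, rfl⟩
    induction t with
    | zero => simp
    | succ t ih =>
        rw [Nat.mul_succ, pow_add, pow_mul, ih, hxd]
  have hcount : ∀ j, 0 < j → x ^ q ^ j = x → d ≤ j := by
    intro j hj hxj
    obtain ⟨g, hg⟩ := exists_frob_pow Fq j
    set Sb : Subfield (AlgebraicClosure Fq) :=
      { carrier := {y | y ^ q ^ j = y}
        mul_mem' := fun ha hb => by
          simp only [Set.mem_setOf_eq] at *
          rw [mul_pow, ha, hb]
        one_mem' := by simp
        add_mem' := fun {a b} ha hb => by
          simp only [Set.mem_setOf_eq] at *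
          rw [← hg, map_add, hg, hg, ha, hb]
        zero_mem' := by
          simp only [Set.mem_setOf_eq]
          exact zero_pow (by positivity)
        neg_mem' := fun {a} ha => by
          simp only [Set.mem_setOf_eq] at *
          rw [← hg, map_neg, hg, ha]
        inv_mem' := fun a ha => by
          simp only [Set.mem_setOf_eq] at *
          rw [inv_pow, ha] } with hSb
    have halg : ∀ c : Fq, algebraMap Fq (AlgebraicClosure Fq) c ∈ Sb := fun c => by
      show _ ^ _ = _
      rw [← map_pow, FiniteField.pow_card_pow]
    set Sf := Sb.toIntermediateField halg with hSf
    have hxS : x ∈ Sf := hxj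
    have hLS : Fq⟮x⟯ ≤ Sf := by
      rw [IntermediateField.adjoin_le_iff]
      exact Set.singleton_subset_iff.mpr hxS
    set P : (AlgebraicClosure Fq)[X] := X ^ q ^ j - X with hP_def
    have hqj1 : 1 < q ^ j := Nat.one_lt_pow (by omega) hq
    have hc : P.coeff (q ^ j) = 1 := by
      rw [hP_def, coeff_sub, coeff_X_pow, if_pos rfl, coeff_X, if_neg (by omega), sub_zero]
    have hP : P ≠ 0 := fun h => by simp [h] at hc
    have hPdeg : P.natDegree ≤ q ^ j := by
      refine le_trans (natDegree_sub_le _ _) ?_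
      simp [natDegree_X_pow, natDegree_X]
      omega
    have hroot : ∀ y : ↥Fq⟮x⟯, (y : AlgebraicClosure Fq) ∈ P.roots.toFinset := by
      intro y
      have hy : (y : AlgebraicClosure Fq) ^ q ^ j = y := hLS y.2
      rw [Multiset.mem_toFinset, mem_roots hP]
      show P.eval _ = 0
      rw [hP_def]
      simp [hy]
    have hinj : Function.Injective
        (fun y : ↥Fq⟮x⟯ => (⟨(y : AlgebraicClosure Fq), hroot y⟩ : {z // z ∈ P.roots.toFinset})) := by
      intro a b hab
      simp only [Subtype.mk.injEq] at hab
      exact Subtype.ext hab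
    have hcle : Fintype.card (↥Fq⟮x⟯) ≤ Fintype.card {z // z ∈ P.roots.toFinset} :=
      Fintype.card_le_of_injective _ hinj
    rw [hcardL, Fintype.card_coe] at hcle
    have h2 : P.roots.toFinset.card ≤ q ^ j :=
      le_trans (Multiset.toFinset_card_le _) (le_trans (card_roots' P) hPdeg)
    exact (Nat.pow_le_pow_iff_right hq).mp (le_trans hcle h2)
  constructor
  · intro hxk
    by_cases hx0 : x = 0
    · have hdx : d = 1 := by
        rw [hd_def, hx0, ← minpoly.eq_of_irreducible_of_monic (A := Fq)
          (x := (0 : AlgebraicClosure Fq)) irreducible_X (by simp) monic_X, natDegree_X]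
      rw [hdx]
      exact one_dvd k
    · rcases Nat.eq_zero_or_pos k with rfl | hk
      · exact dvd_zero d
      have hqm1 : ∀ m : ℕ, 0 < q ^ m := fun m => Nat.pow_pos (by omega)
      have key : ∀ m, x ^ q ^ m = x ↔ x ^ (q ^ m - 1) = 1 := by
        intro m
        constructor
        · intro h
          apply mul_right_cancel₀ hx0
          rw [one_mul, ← pow_succ, Nat.sub_add_cancel (hqm1 m), h]
        · intro h
          conv_lhs => rw [show q ^ m = (q ^ m - 1) + 1 from (Nat.sub_add_cancel (hqm1 m)).symm]
          rw [pow_add, pow_one, h, one_mul]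
      have hed : x ^ (q ^ d - 1) = 1 := (key d).mp hxd
      have hqe : q.Coprime (orderOf x) := by
        have h1 : orderOf x ∣ q ^ d - 1 := orderOf_dvd_of_pow_eq_one hed
        have h2 : Nat.gcd q (orderOf x) ∣ 1 := by
          have ha : Nat.gcd q (orderOf x) ∣ q ^ d := dvd_pow (Nat.gcd_dvd_left _ _) (by omega)
          have hb : Nat.gcd q (orderOf x) ∣ q ^ d - 1 := dvd_trans (Nat.gcd_dvd_right _ _) h1
          have := Nat.dvd_sub ha hb
          rwa [Nat.sub_sub_self (Nat.one_le_pow _ _ (by omega))] at this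
        exact Nat.dvd_one.mp h2
      set u := ZMod.unitOfCoprime q hqe with hu
      have hiff2 : ∀ t, x ^ q ^ t = x ↔ u ^ t = 1 := by
        intro t
        rw [key t, ← orderOf_dvd_iff_pow_eq_one (x := x)]
        constructor
        · intro h
          apply Units.ext
          rw [Units.val_pow_eq_pow_val, ZMod.coe_unitOfCoprime, Units.val_one]
          have h2 : (1 : ℕ) ≡ q ^ t [MOD orderOf x] := (Nat.modEq_iff_dvd' (hqm1 t)).mpr h
          calc ((q : ℕ) : ZMod (orderOf x)) ^ t = ((q ^ t : ℕ) : ZMod (orderOf x)) := by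
                push_cast; ring
            _ = ((1 : ℕ) : ZMod (orderOf x)) := (ZMod.natCast_eq_natCast_iff _ _ _).mpr h2.symm
            _ = 1 := Nat.cast_one
        · intro h
          have hval : ((q : ℕ) : ZMod (orderOf x)) ^ t = 1 := by
            have := congrArg Units.val h
            rwa [Units.val_pow_eq_pow_val, ZMod.coe_unitOfCoprime, Units.val_one] at this
          have h3 : ((q ^ t : ℕ) : ZMod (orderOf x)) = ((1 : ℕ) : ZMod (orderOf x)) := by
            calc ((q ^ t : ℕ) : ZMod (orderOf x)) = ((q : ℕ) : ZMod (orderOf x)) ^ t := by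
                  push_cast; ring
              _ = 1 := hval
              _ = ((1 : ℕ) : ZMod (orderOf x)) := Nat.cast_one.symm
          have h2 : (1 : ℕ) ≡ q ^ t [MOD orderOf x] :=
            ((ZMod.natCast_eq_natCast_iff _ _ _).mp h3).symm
          exact (Nat.modEq_iff_dvd' (hqm1 t)).mp h2
      have hmk : ∀ t, x ^ q ^ t = x ↔ orderOf u ∣ t := fun t =>
        (hiff2 t).trans orderOf_dvd_iff_pow_eq_one.symm
      have hmd : orderOf u ∣ d := (hmk d).mp hxd
      have hm0 : 0 < orderOf u := orderOf_pos u
      have hdm : d ≤ orderOf u := hcount _ hm0 ((hmk _).mpr dvd_rfl)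
      have hmd' : orderOf u = d := le_antisymm (Nat.le_of_dvd hd0 hmd) hdm
      exact hmd' ▸ (hmk k).mp hxk
  · exact hfix k

end Frob
set_option maxHeartbeats 2000000 in
theorem stmt9 (Fq : Type*) [Field Fq] [Fintype Fq] (r n : ℕ)
    (hr : r.Prime) (hcop : Nat.Coprime r (Fintype.card Fq))
    (f : Fq[X]) (hmon : f.Monic) (hirr : Irreducible f) (hn : f.natDegree = n)
    (h0 : f.coeff 0 ≠ 0)
    (hdvd : f ∣ f.comp (X ^ r))
    (hprim : orderOf ((Fintype.card Fq : ZMod r)) = r - 1)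
    (hgcd : Nat.Coprime n (r - 1))
    (F : Fq[X]) (hF : f * F = f.comp (X ^ r)) :
    Irreducible F ∧ F.natDegree = n * (r - 1) ∧
      F.map (algebraMap Fq (AlgebraicClosure Fq)) = compMul Fq f (cyclotomic r Fq) := by
  classical
  set q := Fintype.card Fq with hq_def
  have hq : 1 < q := Fintype.one_lt_card
  have hr2 : 2 ≤ r := hr.two_le
  have hn0 : 0 < n := hn ▸ hirr.natDegree_pos
  set φ := algebraMap Fq (AlgebraicClosure Fq) with hφ_def
  have hφinj : Function.Injective φ := φ.injective
  have hqpow_pos : ∀ k : ℕ, 0 < q ^ k := fun k => Nat.pow_pos (by omega)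
  -- basic facts about F
  have hf0 : f ≠ 0 := hmon.ne_zero
  have hcomp_monic : (f.comp (X ^ r : Fq[X])).Monic :=
    hmon.comp (monic_X_pow r) (by rw [natDegree_X_pow]; omega)
  have hF0 : F ≠ 0 := by
    rintro rfl
    rw [mul_zero] at hF
    exact hcomp_monic.ne_zero hF.symm
  have hdegcomp : (f.comp (X ^ r : Fq[X])).natDegree = n * r := by
    rw [natDegree_comp, natDegree_X_pow, hn]
  have hdegF : F.natDegree = n * (r - 1) := by
    have h1 := congrArg natDegree hF
    rw [natDegree_mul hf0 hF0, hn, hdegcomp] at h1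
    have h2 : n * r = n * (r - 1) + n := by
      conv_lhs => rw [show r = (r - 1) + 1 by omega]
      ring
    omega
  have hFmon : F.Monic := by
    have h1 := hcomp_monic
    rw [← hF] at h1
    exact hmon.of_mul_monic_left h1
  -- roots of f in the algebraic closure
  set fK := f.map φ with hfK
  have hfKmon : fK.Monic := hmon.map φ
  have hfK0 : fK ≠ 0 := hfKmon.ne_zero
  set T := fK.roots with hT
  have hsep : f.Separable := PerfectField.separable_of_irreducible hirr
  have hTnodup : T.Nodup := nodup_roots (hsep.map (f := φ))
  have hTcard : Multiset.card T = n := by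
    rw [hT, hfK, ← (IsAlgClosed.splits (f.map φ)).natDegree_eq_card_roots, natDegree_map, hn]
  have hmemT : ∀ a, a ∈ T ↔ aeval a f = 0 := fun a => by
    rw [hT, mem_roots hfK0, IsRoot.def, hfK, eval_map, ← aeval_def]
  have hT0 : ∀ a ∈ T, a ≠ 0 := by
    intro a ha h0a
    rw [hmemT] at ha
    rw [h0a] at ha
    have h1 : aeval (0 : AlgebraicClosure Fq) f = φ (f.coeff 0) := by
      rw [aeval_def, ← eval_map, ← coeff_zero_eq_eval_zero, coeff_map]
    exact h0 (hφinj (by rw [← h1, ha, map_zero]))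
  -- a distinguished root α
  have hTne : T ≠ 0 := by
    intro h
    rw [h] at hTcard
    simp at hTcard
    omega
  obtain ⟨α, hαT⟩ := Multiset.exists_mem_of_ne_zero hTne
  have hα : aeval α f = 0 := (hmemT α).mp hαT
  have hα0 : α ≠ 0 := hT0 α hαT
  have hminα : f = minpoly Fq α := minpoly.eq_of_irreducible_of_monic hirr hα hmon
  have hαdeg : ∀ k, α ^ q ^ k = α ↔ n ∣ k := by
    intro k
    rw [hq_def, minpoly_natDegree_dvd_iff Fq α k, ← hminα, hn]
  have hcongr : ∀ s t : ℕ, s ≤ t → (α ^ q ^ s = α ^ q ^ t ↔ n ∣ t - s) := by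
    intro s t hst
    obtain ⟨g, hg⟩ := exists_frob_pow Fq s
    have hgi : Function.Injective g := g.injective
    have h1 : α ^ q ^ t = g (α ^ q ^ (t - s)) := by
      rw [hg, ← hq_def, ← pow_mul, ← pow_add, Nat.sub_add_cancel hst]
    constructor
    · intro h
      have h2 : g α = g (α ^ q ^ (t - s)) := by
        rw [hg, ← hq_def, ← h1, ← h]
      exact (hαdeg _).mp (hgi h2).symm
    · intro h
      rw [h1, (hαdeg _).mpr h, hg, hq_def]
  -- the roots of f are the Frobenius orbit of α
  have horbit : T = (Multiset.range n).map (fun i => α ^ q ^ i) := by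
    have hOno : ((Multiset.range n).map (fun i => α ^ q ^ i)).Nodup := by
      refine Multiset.Nodup.map_on ?_ (Multiset.nodup_range n)
      intro i hi j hj hij
      rw [Multiset.mem_range] at hi hj
      rcases le_total i j with h | h
      · have h2 := (hcongr i j h).mp hij
        rcases Nat.eq_zero_or_pos (j - i) with h0 | hpos
        · omega
        · have := Nat.le_of_dvd hpos h2; omega
      · have h2 := (hcongr j i h).mp hij.symm
        rcases Nat.eq_zero_or_pos (i - j) with h0 | hpos
        · omega
        · have := Nat.le_of_dvd hpos h2; omega
    have hOsub : ∀ a ∈ (Multiset.range n).map (fun i => α ^ q ^ i), a ∈ T := by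
      intro a ha
      obtain ⟨i, _, rfl⟩ := Multiset.mem_map.mp ha
      rw [hmemT, hq_def, aeval_pow_card_pow, ← hq_def, hα, zero_pow (by positivity)]
    have hcard2 : Multiset.card T ≤ Multiset.card ((Multiset.range n).map (fun i => α ^ q ^ i)) := by
      rw [hTcard, Multiset.card_map, Multiset.card_range]
    exact (Multiset.eq_of_le_of_card_le ((Multiset.le_iff_subset hOno).mpr hOsub) hcard2).symm
  -- α^r is a root, hence a Frobenius conjugate of α
  have hαr : aeval (α ^ r) f = 0 := by
    have h1 : aeval α (f.comp (X ^ r)) = aeval (α ^ r) f := by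
      rw [aeval_comp, map_pow, aeval_X]
    rw [← h1, ← hF, map_mul, hα, zero_mul]
  obtain ⟨i₀, hi₀n, hi₀⟩ : ∃ i₀, i₀ < n ∧ α ^ r = α ^ q ^ i₀ := by
    have hαrT : α ^ r ∈ T := (hmemT _).mpr hαr
    rw [horbit] at hαrT
    obtain ⟨i, hi, h⟩ := Multiset.mem_map.mp hαrT
    exact ⟨i, Multiset.mem_range.mp hi, h.symm⟩
  -- the multiplicative order of α
  have hcancel : ∀ (y : AlgebraicClosure Fq), y ≠ 0 → ∀ m : ℕ, 0 < m →
      (y ^ m = y ↔ y ^ (m - 1) = 1) := by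
    intro y hy m hm
    constructor
    · intro h
      apply mul_right_cancel₀ hy
      rw [one_mul, ← pow_succ, Nat.sub_add_cancel hm, h]
    · intro h
      conv_lhs => rw [show m = (m - 1) + 1 by omega]
      rw [pow_add, pow_one, h, one_mul]
  have hαfin : α ^ (q ^ n - 1) = 1 :=
    (hcancel α hα0 _ (hqpow_pos n)).mp ((hαdeg n).mpr dvd_rfl)
  set e := orderOf α with he_def
  have hαe : α ^ e = 1 := pow_orderOf_eq_one α
  have he0 : 0 < e := by
    refine orderOf_pos_iff.mpr (isOfFinOrder_iff_pow_eq_one.mpr ⟨q ^ n - 1, ?_, hαfin⟩)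
    have := Nat.one_lt_pow (n := n) (a := q) (by omega) hq
    omega
  have hα1 : ∀ m, α ^ m = 1 ↔ e ∣ m := fun m => orderOf_dvd_iff_pow_eq_one.symm
  -- α^a = α^b iff a ≡ b mod e
  set αu : (AlgebraicClosure Fq)ˣ := Units.mk0 α hα0 with hαu
  have hαuord : orderOf αu = e := by rw [he_def, ← orderOf_units]; rfl
  have hmodeq : ∀ a b : ℕ, α ^ a = α ^ b ↔ a ≡ b [MOD e] := by
    intro a b
    rw [← hαuord, ← pow_eq_pow_iff_modEq (x := αu)]
    constructor
    · intro h
      exact Units.ext (by rw [Units.val_pow_eq_pow_val, Units.val_pow_eq_pow_val]; exact h)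
    · intro h
      have := congrArg Units.val h
      rwa [Units.val_pow_eq_pow_val, Units.val_pow_eq_pow_val] at this
  -- e is coprime to r
  have hecop : e.Coprime r := by
    by_contra hne
    have hrcop : ¬ r.Coprime e := fun hc => hne hc.symm
    have hre : r ∣ e := by rwa [hr.coprime_iff_not_dvd, not_not] at hrcop
    have h3 : q ^ i₀ ≡ r [MOD r] := Nat.ModEq.of_dvd hre ((hmodeq _ _).mp hi₀.symm)
    have h4 : r ∣ q ^ i₀ :=
      (Nat.modEq_zero_iff_dvd).mp (h3.trans ((Nat.modEq_zero_iff_dvd).mpr dvd_rfl))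
    have h5 : r ∣ q := hr.dvd_of_dvd_pow h4
    have h6 : r ∣ Nat.gcd r q := Nat.dvd_gcd dvd_rfl h5
    rw [Nat.Coprime] at hcop
    rw [hcop] at h6
    have := Nat.le_of_dvd (by omega) h6
    omega
  -- the characteristic and r
  haveI : CharP (AlgebraicClosure Fq) (ringChar Fq) := charP_of_injective_algebraMap hφinj _
  have hp : (ringChar Fq).Prime := CharP.char_is_prime Fq _
  have hrK : ((r : ℕ) : AlgebraicClosure Fq) ≠ 0 := by
    rw [Ne, CharP.cast_eq_zero_iff _ (ringChar Fq)]
    intro hpr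
    obtain ⟨s, hsp, hs⟩ := FiniteField.card Fq (ringChar Fq)
    have hpq : ringChar Fq ∣ q := by
      rw [hq_def, hs]
      exact dvd_pow_self _ (by positivity)
    have h6 : ringChar Fq ∣ Nat.gcd r q := Nat.dvd_gcd hpr hpq
    rw [Nat.Coprime] at hcop
    rw [hcop] at h6
    have := Nat.le_of_dvd (by omega) h6
    have := hp.two_le
    omega
  haveI : NeZero ((r : ℕ) : AlgebraicClosure Fq) := ⟨hrK⟩
  -- the primitive r-th roots of unity
  set μ' := (cyclotomic r (AlgebraicClosure Fq)).roots with hμ'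
  have hcyc0 : cyclotomic r (AlgebraicClosure Fq) ≠ 0 := cyclotomic_ne_zero r _
  have hμ'card : Multiset.card μ' = r - 1 := by
    have h1 := (IsAlgClosed.splits (cyclotomic r (AlgebraicClosure Fq))).natDegree_eq_card_roots
    rw [hμ', ← h1, natDegree_cyclotomic, Nat.totient_prime hr]
  obtain ⟨β, hβμ⟩ : ∃ b, b ∈ μ' := by
    refine Multiset.exists_mem_of_ne_zero (fun h => ?_)
    rw [h] at hμ'card
    simp at hμ'card
    omega
  have hβprim : IsPrimitiveRoot β r := by
    have hb := hβμ
    rw [hμ', mem_roots hcyc0] at hb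
    exact isRoot_cyclotomic_iff.mp hb
  have hβord : orderOf β = r := hβprim.eq_orderOf.symm
  have hβ0 : β ≠ 0 := hβprim.ne_zero (by omega)
  have hβ1 : ∀ m, β ^ m = 1 ↔ r ∣ m := fun m => by
    rw [← hβord]; exact orderOf_dvd_iff_pow_eq_one.symm
  have hβdeg : ∀ k, β ^ q ^ k = β ↔ (r - 1) ∣ k := by
    intro k
    rw [hcancel β hβ0 _ (hqpow_pos k), hβ1]
    constructor
    · intro h
      have h1 : (1 : ℕ) ≡ q ^ k [MOD r] := (Nat.modEq_iff_dvd' (hqpow_pos k)).mpr h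
      have h3 : ((q ^ k : ℕ) : ZMod r) = ((1 : ℕ) : ZMod r) :=
        (ZMod.natCast_eq_natCast_iff _ _ _).mpr h1.symm
      push_cast at h3
      have h4 : orderOf ((q : ℕ) : ZMod r) ∣ k := orderOf_dvd_of_pow_eq_one h3
      rwa [hprim] at h4
    · intro h
      rw [← hprim] at h
      have h2 : ((q : ℕ) : ZMod r) ^ k = 1 := orderOf_dvd_iff_pow_eq_one.mp h
      have h3 : ((q ^ k : ℕ) : ZMod r) = ((1 : ℕ) : ZMod r) := by push_cast; exact h2
      exact (Nat.modEq_iff_dvd' (hqpow_pos k)).mp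
        ((ZMod.natCast_eq_natCast_iff _ _ _).mp h3).symm
  -- the element x = α β and its order
  set x := α * β with hx_def
  have hx0 : x ≠ 0 := mul_ne_zero hα0 hβ0
  set βu : (AlgebraicClosure Fq)ˣ := Units.mk0 β hβ0 with hβu
  have hβuord : orderOf βu = r := by rw [← hβord, ← orderOf_units]; rfl
  have hxuval : ((αu * βu : (AlgebraicClosure Fq)ˣ) : AlgebraicClosure Fq) = x := rfl
  have hxuord : orderOf (αu * βu) = e * r := by
    rw [Commute.orderOf_mul_eq_mul_orderOf_of_coprime (Commute.all _ _)
      (by rw [hαuord, hβuord]; exact hecop), hαuord, hβuord]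
  have hxord : orderOf x = e * r := by
    rw [← hxuval, orderOf_units, hxuord]
  have hx1 : ∀ m, x ^ m = 1 ↔ (e * r) ∣ m := fun m => by
    rw [← hxord]; exact orderOf_dvd_iff_pow_eq_one.symm
  have hxdeg : ∀ k, x ^ q ^ k = x ↔ (n * (r - 1)) ∣ k := by
    intro k
    rw [hcancel x hx0 _ (hqpow_pos k), hx1]
    constructor
    · intro h
      have hek : e ∣ q ^ k - 1 := dvd_trans (dvd_mul_right e r) h
      have hrk : r ∣ q ^ k - 1 := dvd_trans (dvd_mul_left r e) h
      have hn1 : n ∣ k := (hαdeg k).mp ((hcancel α hα0 _ (hqpow_pos k)).mpr ((hα1 _).mpr hek))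
      have hr1 : (r - 1) ∣ k := (hβdeg k).mp ((hcancel β hβ0 _ (hqpow_pos k)).mpr ((hβ1 _).mpr hrk))
      exact hgcd.mul_dvd_of_dvd_of_dvd hn1 hr1
    · intro h
      have hn1 : n ∣ k := dvd_trans (dvd_mul_right n (r - 1)) h
      have hr1 : (r - 1) ∣ k := dvd_trans (dvd_mul_left (r - 1) n) h
      have h1 : α ^ (q ^ k - 1) = 1 := (hcancel α hα0 _ (hqpow_pos k)).mp ((hαdeg k).mpr hn1)
      have h2 : β ^ (q ^ k - 1) = 1 := (hcancel β hβ0 _ (hqpow_pos k)).mp ((hβdeg k).mpr hr1)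
      exact hecop.mul_dvd_of_dvd_of_dvd ((hα1 _).mp h1) ((hβ1 _).mp h2)
  have hdx : (minpoly Fq x).natDegree = n * (r - 1) := by
    have hiff : ∀ k, (minpoly Fq x).natDegree ∣ k ↔ (n * (r - 1)) ∣ k := fun k =>
      (minpoly_natDegree_dvd_iff Fq x k).symm.trans ((hq_def ▸ hxdeg k))
    exact Nat.dvd_antisymm ((hiff _).mpr dvd_rfl) ((hiff _).mp dvd_rfl)
  -- x is a root of F
  have hβr : β ^ r = 1 := hβprim.pow_eq_one
  have hxr : x ^ r = α ^ r := by rw [hx_def, mul_pow, hβr, mul_one]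
  have hxcomp : aeval x (f.comp (X ^ r)) = 0 := by
    rw [aeval_comp, map_pow, aeval_X, hxr, hαr]
  have hxf : aeval x f ≠ 0 := by
    intro hxf0
    have hxT : x ∈ T := (hmemT x).mpr hxf0
    rw [horbit] at hxT
    obtain ⟨i, hi, hxi⟩ := Multiset.mem_map.mp hxT
    have h1 : x ^ e = 1 := by rw [← hxi, pow_right_comm, hαe, one_pow]
    have h2 : (e * r) ∣ e := (hx1 e).mp h1
    have h3 := Nat.le_of_dvd he0 h2
    nlinarith
  have hxF : aeval x F = 0 := by
    have h1 := hxcomp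
    rw [← hF, map_mul] at h1
    exact (mul_eq_zero.mp h1).resolve_left hxf
  -- F is the minimal polynomial of x
  have hxint : IsIntegral Fq x := Algebra.IsIntegral.isIntegral x
  have hFeq : F = minpoly Fq x := by
    obtain ⟨c, hc⟩ := minpoly.dvd Fq x hxF
    have hc0 : c ≠ 0 := by
      rintro rfl
      rw [mul_zero] at hc
      exact hF0 hc
    have hdeg : F.natDegree = (minpoly Fq x).natDegree + c.natDegree := by
      rw [hc, natDegree_mul (minpoly.ne_zero hxint) hc0]
    have hcdeg : c.natDegree = 0 := by rw [hdegF, hdx] at hdeg; omega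
    have hlc : c = C (c.coeff 0) := eq_C_of_natDegree_eq_zero hcdeg
    have h1 : (1 : Fq) = c.leadingCoeff := by
      have h2 : F.leadingCoeff = (minpoly Fq x).leadingCoeff * c.leadingCoeff := by
        rw [hc, leadingCoeff_mul]
      rwa [hFmon.leadingCoeff, (minpoly.monic hxint).leadingCoeff, one_mul] at h2
    have h2 : c = 1 := by
      rw [hlc, show c.coeff 0 = c.leadingCoeff by rw [Polynomial.leadingCoeff, hcdeg], ← h1, map_one]
    rw [hc, h2, mul_one]
  have hFirr : Irreducible F := hFeq ▸ minpoly.irreducible hxint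
  refine ⟨hFirr, hdegF, ?_⟩
  -- Part 3 : the composed multiplication identity
  set FK := F.map φ with hFK
  have hFKmon : FK.Monic := hFmon.map φ
  have hmapeq : fK * FK = fK.comp (X ^ r) := by
    rw [hfK, hFK, ← Polynomial.map_mul, hF, map_comp]
    congr 1
    rw [Polynomial.map_pow, map_X]
  have hfKsplit : fK = (T.map fun a => X - C a).prod := by
    rw [hT]
    exact (IsAlgClosed.splits fK).eq_prod_roots_of_monic hfKmon
  have hcompprod : fK.comp (X ^ r) = (T.map fun a => X ^ r - C a).prod := by
    conv_lhs => rw [hfKsplit]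
    rw [multiset_prod_comp, Multiset.map_map]
    congr 1
    apply Multiset.map_congr rfl
    intro a _
    simp [sub_comp]
  have hTne0 : (0 : (AlgebraicClosure Fq)[X]) ∉ (T.map fun a => X ^ r - C a) := by
    intro h
    obtain ⟨a, _, h0'⟩ := Multiset.mem_map.mp h
    exact (monic_X_pow_sub_C a (by omega : r ≠ 0)).ne_zero h0'
  have hrootscomp : (fK.comp (X ^ r)).roots = T.bind (fun a => (X ^ r - C a).roots) := by
    rw [hcompprod, roots_multiset_prod _ hTne0, Multiset.bind_map]
  -- roots of X^r - 1
  set μ := ((X : (AlgebraicClosure Fq)[X]) ^ r - 1).roots with hμ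
  have hXr1 : ((X : (AlgebraicClosure Fq)[X]) ^ r - 1) = (X - 1) * cyclotomic r _ := by
    rw [← prod_cyclotomic_eq_X_pow_sub_one (by omega) (AlgebraicClosure Fq), hr.divisors,
      Finset.prod_pair (by omega : (1:ℕ) ≠ r), cyclotomic_one]
  have hX1C : (X - 1 : (AlgebraicClosure Fq)[X]) = X - C 1 := by rw [map_one]
  have hXr1ne : ((X : (AlgebraicClosure Fq)[X]) ^ r - 1) ≠ 0 := by
    rw [hXr1]
    refine mul_ne_zero ?_ hcyc0
    rw [hX1C]
    exact X_sub_C_ne_zero 1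
  have hμeq : μ = 1 ::ₘ μ' := by
    rw [hμ, hXr1, roots_mul (by rw [← hXr1]; exact hXr1ne), hX1C, roots_X_sub_C, hμ',
      Multiset.singleton_add]
  have hμnodup : μ.Nodup := nodup_roots ((X_pow_sub_one_separable_iff).mpr hrK)
  have hμcard : Multiset.card μ = r := by
    rw [hμeq, Multiset.card_cons, hμ'card]
    omega
  -- roots of X^r - a^r
  have hrootsXrC : ∀ a : AlgebraicClosure Fq, a ≠ 0 →
      (X ^ r - C (a ^ r)).roots = μ.map (fun z => a * z) := by
    intro a ha
    have hZno : (μ.map (fun z => a * z)).Nodup := hμnodup.map (mul_right_injective₀ ha)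
    have hne : (X ^ r - C (a ^ r) : (AlgebraicClosure Fq)[X]) ≠ 0 :=
      (monic_X_pow_sub_C _ (by omega : r ≠ 0)).ne_zero
    have hsub : ∀ y ∈ μ.map (fun z => a * z), y ∈ (X ^ r - C (a ^ r)).roots := by
      intro y hy
      obtain ⟨z, hz, rfl⟩ := Multiset.mem_map.mp hy
      have hz1 : z ^ r = 1 := by
        have h1 := (mem_roots hXr1ne).mp (hμ ▸ hz)
        rw [IsRoot.def, eval_sub, eval_pow, eval_X, eval_one, sub_eq_zero] at h1
        exact h1
      rw [mem_roots hne]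
      show eval _ _ = 0
      simp [mul_pow, hz1]
    refine (Multiset.eq_of_le_of_card_le ((Multiset.le_iff_subset hZno).mpr hsub) ?_).symm
    calc Multiset.card (X ^ r - C (a ^ r)).roots ≤ r := by
          have h1 := card_roots' (X ^ r - C (a ^ r) : (AlgebraicClosure Fq)[X])
          rwa [natDegree_X_pow_sub_C] at h1
      _ = Multiset.card (μ.map fun z => a * z) := by rw [Multiset.card_map, hμcard]
  -- the map a ↦ a^r permutes T
  have hψmem : ∀ a ∈ T, a ^ r ∈ T := by
    intro a ha
    rw [hmemT] at ha ⊢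
    have h1 : aeval a (f.comp (X ^ r)) = aeval (a ^ r) f := by
      rw [aeval_comp, map_pow, aeval_X]
    rw [← h1, ← hF, map_mul, ha, zero_mul]
  have hψinj : ∀ a ∈ T, ∀ b ∈ T, a ^ r = b ^ r → a = b := by
    intro a ha b hb hab
    rw [horbit] at ha hb
    obtain ⟨i, hi, rfl⟩ := Multiset.mem_map.mp ha
    obtain ⟨j, hj, rfl⟩ := Multiset.mem_map.mp hb
    rw [Multiset.mem_range] at hi hj
    have hpow : ∀ i : ℕ, (α ^ q ^ i) ^ r = α ^ q ^ (i₀ + i) := by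
      intro i
      rw [pow_right_comm α (q ^ i) r, hi₀, ← pow_mul, ← pow_add]
    rw [hpow i, hpow j] at hab
    suffices hij : i = j by rw [hij]
    rcases le_total i j with h | h
    · have h2 := (hcongr (i₀ + i) (i₀ + j) (by omega)).mp hab
      rw [show i₀ + j - (i₀ + i) = j - i by omega] at h2
      rcases Nat.eq_zero_or_pos (j - i) with h0 | hpos
      · omega
      · have := Nat.le_of_dvd hpos h2; omega
    · have h2 := (hcongr (i₀ + j) (i₀ + i) (by omega)).mp hab.symm
      rw [show i₀ + i - (i₀ + j) = i - j by omega] at h2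
      rcases Nat.eq_zero_or_pos (i - j) with h0 | hpos
      · omega
      · have := Nat.le_of_dvd hpos h2; omega
  have hψT : T.map (fun a => a ^ r) = T := by
    have hno : (T.map fun a => a ^ r).Nodup := Multiset.Nodup.map_on hψinj hTnodup
    have hsub : ∀ y ∈ T.map (fun a => a ^ r), y ∈ T := by
      intro y hy
      obtain ⟨a, ha, rfl⟩ := Multiset.mem_map.mp hy
      exact hψmem a ha
    exact Multiset.eq_of_le_of_card_le ((Multiset.le_iff_subset hno).mpr hsub)
      (by rw [Multiset.card_map])
  -- compute the roots of FK
  have hrootsmul : T + FK.roots = T.bind (fun a => (X ^ r - C a).roots) := by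
    rw [← hrootscomp, ← hmapeq, roots_mul (mul_ne_zero hfK0 hFKmon.ne_zero), hT]
  have hbindeq : T.bind (fun a => (X ^ r - C a).roots)
      = T + T.bind (fun a => μ'.map (fun z => a * z)) := by
    conv_lhs => rw [← hψT, Multiset.bind_map]
    have hstep : ∀ a ∈ T, (X ^ r - C (a ^ r)).roots = {a} + μ'.map (fun z => a * z) := by
      intro a ha
      rw [hrootsXrC a (hT0 a ha), hμeq, Multiset.map_cons, mul_one, ← Multiset.singleton_add]
    rw [Multiset.bind_congr hstep, Multiset.bind_add]
    congr 1
    rw [Multiset.bind_singleton]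
    exact Multiset.map_id' T
  have hFKroots : FK.roots = T.bind (fun a => μ'.map (fun z => a * z)) := by
    have h1 : T + FK.roots = T + T.bind (fun a => μ'.map (fun z => a * z)) :=
      hrootsmul.trans hbindeq
    exact add_left_cancel h1
  -- conclude
  show FK = compMul Fq f (cyclotomic r Fq)
  have hac1 : acRoots Fq f = T := by
    unfold acRoots
    rw [← hφ_def, hT, hfK]
  have hac2 : acRoots Fq (cyclotomic r Fq) = μ' := by
    unfold acRoots
    rw [map_cyclotomic, hμ']
  rw [compMul, hac1, hac2]
  rw [(IsAlgClosed.splits FK).eq_prod_roots_of_monic hFKmon, hFKroots,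
    Multiset.map_bind]
  congr 1
  apply Multiset.bind_congr
  intro a _
  rw [Multiset.map_map]
  rfl
end

section
/- Let n = p_1^{e_1} ⋯ p_s^{e_s} be the factorization of a positive integer n into powers of distinct primes, and suppose gcd(n, q) = 1 where q is a prime power. Then over F_q (or over any field containing all relevant roots of unity), Φ_n = Φ_{p_1^{e_1}} ⊙ Φ_{p_2^{e_2}} ⊙ ⋯ ⊙ Φ_{p_s^{e_s}}, where ⊙ denotes composed multiplication. In particular, every product ξ_1 ξ_2 ⋯ ξ_s of primitive p_i^{e_i}-th roots of unity is a primitive n-th root of unity, and all such products are distinct. -/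
open Polynomial

private lemma myOrderOf_prod {M : Type*} [CommMonoid M] {ι : Type*} [DecidableEq ι]
    (t : Finset ι) (f : ι → M)
    (h : ∀ i ∈ t, ∀ j ∈ t, i ≠ j → Nat.Coprime (orderOf (f i)) (orderOf (f j))) :
    orderOf (∏ i ∈ t, f i) = ∏ i ∈ t, orderOf (f i) := by
  induction t using Finset.induction_on with
  | empty => simp
  | @insert a t' ha ih =>
    have ih' := ih (fun i hi j hj hij =>
      h i (Finset.mem_insert_of_mem hi) j (Finset.mem_insert_of_mem hj) hij)
    rw [Finset.prod_insert ha, Finset.prod_insert ha,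
      Commute.orderOf_mul_eq_mul_orderOf_of_coprime (Commute.all _ _), ih']
    rw [ih']
    exact Nat.Coprime.prod_right fun j hj =>
      h a (Finset.mem_insert_self a t') j (Finset.mem_insert_of_mem hj)
        (fun hc => ha (hc ▸ hj))

private lemma myTotient_prod {ι : Type*} [DecidableEq ι] (t : Finset ι) (f : ι → ℕ)
    (h : ∀ i ∈ t, ∀ j ∈ t, i ≠ j → Nat.Coprime (f i) (f j)) :
    Nat.totient (∏ i ∈ t, f i) = ∏ i ∈ t, Nat.totient (f i) := by
  induction t using Finset.induction_on with
  | empty => simp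
  | @insert a t' ha ih =>
    have ih' := ih (fun i hi j hj hij =>
      h i (Finset.mem_insert_of_mem hi) j (Finset.mem_insert_of_mem hj) hij)
    have hc : Nat.Coprime (f a) (∏ i ∈ t', f i) :=
      Nat.Coprime.prod_right fun j hj =>
        h a (Finset.mem_insert_self a t') j (Finset.mem_insert_of_mem hj)
          (fun hcc => ha (hcc ▸ hj))
    rw [Finset.prod_insert ha, Finset.prod_insert ha, Nat.totient_mul hc, ih']

private lemma myExists_primRoot (K : Type*) [Field K] [IsAlgClosed K] (m : ℕ) (hm : 0 < m)
    [NeZero (m : K)] : ∃ ζ : K, IsPrimitiveRoot ζ m := by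
  have hdeg : (cyclotomic m K).degree ≠ 0 := by
    rw [degree_cyclotomic]
    exact_mod_cast (Nat.totient_pos.mpr hm).ne'
  obtain ⟨z, hz⟩ := IsAlgClosed.exists_root _ hdeg
  exact ⟨z, isRoot_cyclotomic_iff.1 hz⟩

/-- if `n = p₁^{e₁} ⋯ p_s^{e_s}` with the `pᵢ` distinct primes and
`gcd(n, q) = 1`, then over the algebraic closure of `F_q` the cyclotomic polynomial `Φ_n`
is the composed multiplication of the `Φ_{pᵢ^{eᵢ}}`, i.e. it equals the product of
`X - ξ₁⋯ξ_s` over all tuples of primitive `pᵢ^{eᵢ}`-th roots of unity; in particular every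
such product of primitive roots is a primitive `n`-th root of unity and distinct tuples
give distinct products. -/
theorem stmt11 (Fq : Type*) [Field Fq] [Fintype Fq] (s : ℕ) (p e : Fin s → ℕ)
    (hp : ∀ i, (p i).Prime) (he : ∀ i, 0 < e i) (hdist : Function.Injective p)
    (n : ℕ) (hn : n = ∏ i, p i ^ e i)
    (hcop : Nat.Coprime n (Fintype.card Fq)) :
    (cyclotomic n (AlgebraicClosure Fq) =
        ∏ ξ : (∀ i : Fin s,
            {x : AlgebraicClosure Fq // x ∈ primitiveRoots (p i ^ e i) (AlgebraicClosure Fq)}),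
          (X - C (∏ i, (ξ i : AlgebraicClosure Fq)))) ∧
    (∀ ξ : Fin s → AlgebraicClosure Fq,
        (∀ i, IsPrimitiveRoot (ξ i) (p i ^ e i)) → IsPrimitiveRoot (∏ i, ξ i) n) ∧
    (∀ ξ ζ : Fin s → AlgebraicClosure Fq,
        (∀ i, IsPrimitiveRoot (ξ i) (p i ^ e i)) → (∀ i, IsPrimitiveRoot (ζ i) (p i ^ e i)) →
        (∏ i, ξ i) = (∏ i, ζ i) → ξ = ζ) := by
  classical
  set K := AlgebraicClosure Fq
  set m : Fin s → ℕ := fun i => p i ^ e i with hm_def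
  have hm : ∀ i, 0 < m i := fun i => pow_pos (hp i).pos _
  have hn0 : 0 < n := hn ▸ Finset.prod_pos (fun i _ => hm i)
  have hcopm : ∀ i j, i ≠ j → Nat.Coprime (m i) (m j) := fun i j hij =>
    Nat.Coprime.pow _ _ ((Nat.coprime_primes (hp i) (hp j)).2 fun h => hij (hdist h))
  -- characteristic
  haveI : CharP Fq (ringChar Fq) := ringChar.charP Fq
  obtain ⟨k, hrprime, hcard⟩ := FiniteField.card Fq (ringChar Fq)
  have hcopr : Nat.Coprime (ringChar Fq) n := by
    refine (hcop.coprime_dvd_right ?_).symm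
    rw [hcard]
    exact dvd_pow_self _ k.pos.ne'
  have hnd : ¬ ringChar Fq ∣ n := (Nat.Prime.coprime_iff_not_dvd hrprime).mp hcopr
  haveI : NeZero (n : K) := NeZero.of_not_dvd K (p := ringChar Fq) hnd
  have hmdvd : ∀ i, m i ∣ n := fun i => hn ▸ Finset.dvd_prod_of_mem _ (Finset.mem_univ i)
  haveI hNm : ∀ i, NeZero ((m i : K)) := fun i =>
    NeZero.of_not_dvd K (p := ringChar Fq) (fun hd => hnd (dvd_trans hd (hmdvd i)))
  -- part 2
  have key2 : ∀ ξ : Fin s → K,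
      (∀ i, IsPrimitiveRoot (ξ i) (m i)) → IsPrimitiveRoot (∏ i, ξ i) n := by
    intro ξ hξ
    have hord : ∀ i, orderOf (ξ i) = m i := fun i => ((hξ i).eq_orderOf).symm
    have h1 : orderOf (∏ i, ξ i) = ∏ i, orderOf (ξ i) :=
      myOrderOf_prod Finset.univ ξ (fun i _ j _ hij => by
        rw [hord, hord]; exact hcopm i j hij)
    have h2 : orderOf (∏ i, ξ i) = n := by
      rw [h1, hn]; exact Finset.prod_congr rfl fun i _ => hord i
    have := IsPrimitiveRoot.orderOf (∏ i, ξ i)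
    rwa [h2] at this
  -- part 3
  have key3 : ∀ ξ ζ : Fin s → K,
      (∀ i, IsPrimitiveRoot (ξ i) (m i)) → (∀ i, IsPrimitiveRoot (ζ i) (m i)) →
      (∏ i, ξ i) = (∏ i, ζ i) → ξ = ζ := by
    intro ξ ζ hξ hζ hprod
    have hζ0 : ∀ i, ζ i ≠ 0 := fun i => (hζ i).ne_zero (hm i).ne'
    set g : Fin s → K := fun i => ξ i * (ζ i)⁻¹ with hg_def
    have hg1 : ∀ i, g i ^ m i = 1 := by
      intro i
      rw [hg_def]
      simp only [mul_pow, inv_pow, (hξ i).pow_eq_one, (hζ i).pow_eq_one, inv_one, mul_one]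
    have hgprod : ∏ i, g i = 1 := by
      rw [hg_def]
      rw [Finset.prod_mul_distrib, Finset.prod_inv_distrib, hprod, mul_inv_cancel₀]
      exact Finset.prod_ne_zero_iff.2 fun i _ => hζ0 i
    have hj1 : ∀ j, g j = 1 := by
      intro j
      set N := ∏ i ∈ Finset.univ.erase j, m i with hN_def
      have h1 : g j ^ N = 1 := by
        have hz : ∀ i ∈ Finset.univ.erase j, g i ^ N = 1 := by
          intro i hi
          obtain ⟨c, hc⟩ : m i ∣ N := Finset.dvd_prod_of_mem _ hi
          rw [hc, pow_mul, hg1, one_pow]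
        calc g j ^ N = g j ^ N * ∏ i ∈ Finset.univ.erase j, g i ^ N := by
              rw [Finset.prod_congr rfl hz, Finset.prod_const_one, mul_one]
          _ = ∏ i, g i ^ N := Finset.mul_prod_erase Finset.univ (fun i => g i ^ N)
              (Finset.mem_univ j)
          _ = (∏ i, g i) ^ N := Finset.prod_pow _ _ _
          _ = 1 := by rw [hgprod, one_pow]
      have hcop' : Nat.Coprime (m j) N :=
        Nat.Coprime.prod_right fun i hi =>
          hcopm j i (fun hc => (Finset.mem_erase.1 hi).1 hc.symm)
      have : orderOf (g j) ∣ Nat.gcd (m j) N :=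
        Nat.dvd_gcd (orderOf_dvd_of_pow_eq_one (hg1 j)) (orderOf_dvd_of_pow_eq_one h1)
      rw [hcop'] at this
      exact orderOf_eq_one_iff.1 (Nat.dvd_one.1 this)
    funext j
    exact (mul_inv_eq_one₀ (hζ0 j)).1 (hj1 j)
  refine ⟨?_, key2, key3⟩
  -- part 1
  obtain ⟨z, hz⟩ := myExists_primRoot K n hn0
  have hcard_i : ∀ i, (primitiveRoots (m i) K).card = Nat.totient (m i) := by
    intro i
    haveI := hNm i
    obtain ⟨ζi, hζi⟩ := myExists_primRoot K (m i) (hm i)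
    exact hζi.card_primitiveRoots
  have hcardPi : Fintype.card (∀ i : Fin s, {x : K // x ∈ primitiveRoots (m i) K})
      = Nat.totient n := by
    rw [Fintype.card_pi]
    simp only [Fintype.card_coe]
    rw [hn, myTotient_prod Finset.univ m (fun i _ j _ hij => hcopm i j hij)]
    exact Finset.prod_congr rfl fun i _ => hcard_i i
  set F : (∀ i : Fin s, {x : K // x ∈ primitiveRoots (m i) K}) → K :=
    fun ξ => ∏ i, (ξ i : K) with hF_def
  have hFmem : ∀ ξ, F ξ ∈ primitiveRoots n K := by
    intro ξ
    refine (mem_primitiveRoots hn0).2 (key2 _ fun i => ?_)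
    exact (mem_primitiveRoots (hm i)).1 (ξ i).2
  have hFinj : Function.Injective F := by
    intro ξ ζ h
    have := key3 (fun i => (ξ i : K)) (fun i => (ζ i : K))
      (fun i => (mem_primitiveRoots (hm i)).1 (ξ i).2)
      (fun i => (mem_primitiveRoots (hm i)).1 (ζ i).2) h
    funext i
    exact Subtype.ext (congrFun this i)
  set T := Finset.image F Finset.univ with hT_def
  have hsub : T ⊆ primitiveRoots n K := by
    intro b hb
    obtain ⟨a, _, rfl⟩ := Finset.mem_image.1 hb
    exact hFmem a
  have hTcard : T.card = (primitiveRoots n K).card := by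
    rw [hT_def, Finset.card_image_of_injective _ hFinj, Finset.card_univ, hcardPi,
      hz.card_primitiveRoots]
  have hTeq : T = primitiveRoots n K := Finset.eq_of_subset_of_card_le hsub hTcard.ge
  rw [cyclotomic_eq_prod_X_sub_primitiveRoots hz]
  refine (Finset.prod_bij (fun ξ _ => F ξ) (fun a _ => hFmem a)
    (fun a₁ _ a₂ _ h => hFinj h) ?_ (fun a _ => rfl)).symm
  intro b hb
  rw [← hTeq, hT_def] at hb
  obtain ⟨a, ha, rfl⟩ := Finset.mem_image.1 hb
  exact ⟨a, ha, rfl⟩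
end

section
/- Let m and n be coprime positive integers with gcd(mn, q) = 1, and let Φ_m = ∏_i f_i and Φ_n = ∏_j g_j be the factorizations into monic irreducible polynomials over F_q. Then Φ_{mn} = ∏_i ∏_j (f_i ⊙ g_j), and if moreover gcd(ord_m(q), ord_n(q)) = 1, every f_i ⊙ g_j is irreducible over F_q, so this is the complete factorization of Φ_{mn} over F_q. -/
open Polynomial

open IntermediateField

lemma zmod_pow_eq_one_iff {k q t : ℕ} (hq : 0 < q) :
    ((q : ZMod k)) ^ t = 1 ↔ k ∣ q ^ t - 1 := by
  have h1 : 1 ≤ q ^ t := Nat.one_le_pow _ _ hq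
  rw [← Nat.cast_pow, ← Nat.cast_one (R := ZMod k), ZMod.natCast_eq_natCast_iff]
  constructor
  · intro h; exact (Nat.modEq_iff_dvd' h1).mp h.symm
  · intro h; exact ((Nat.modEq_iff_dvd' h1).mpr h).symm

lemma key_deg (Fq : Type*) [Field Fq] [Fintype Fq] {k : ℕ} (hk : 0 < k)
    (hco : Nat.Coprime k (Fintype.card Fq)) {f : Fq[X]} (hfm : f.Monic) (hfi : Irreducible f)
    (hdvd : f ∣ cyclotomic k Fq) :
    f.natDegree = orderOf ((Fintype.card Fq : ZMod k)) := by
  classical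
  set q := Fintype.card Fq with hq
  have hq1 : 1 < q := Fintype.one_lt_card
  have hq0 : 0 < q := by omega
  set K := AlgebraicClosure Fq
  set φ := algebraMap Fq K with hφ
  have hφinj : Function.Injective φ := φ.injective
  -- k ≠ 0 in K
  have hkK : ((k : K)) ≠ 0 := by
    intro h0
    have : ((k : Fq)) = 0 := by
      apply hφinj; rw [map_natCast, map_zero, h0]
    have hrc : ringChar Fq ∣ k := (CharP.cast_eq_zero_iff Fq (ringChar Fq) k).mp this
    have hrq : ringChar Fq ∣ q := (CharP.cast_eq_zero_iff Fq (ringChar Fq) q).mp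
      (FiniteField.cast_card_eq_zero Fq)
    have : ringChar Fq ∣ 1 := hco ▸ Nat.dvd_gcd hrc hrq
    exact CharP.ringChar_ne_one (R := Fq) (Nat.dvd_one.mp this)
  haveI : NeZero ((k : K)) := ⟨hkK⟩
  -- a root of f in K
  have hfd : 0 < f.natDegree := hfi.natDegree_pos
  obtain ⟨ζ, hζ0⟩ : ∃ ζ : K, (f.map φ).eval ζ = 0 := by
    obtain ⟨ζ, hζ⟩ := IsAlgClosed.exists_root (f.map φ)
      (by rw [degree_map]; exact (degree_pos_of_irreducible hfi).ne')
    exact ⟨ζ, hζ⟩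
  have haev : aeval ζ f = 0 := by rw [aeval_def, ← eval_map]; exact hζ0
  have hmin : f = minpoly Fq ζ := minpoly.eq_of_irreducible_of_monic hfi haev hfm
  have hint : IsIntegral Fq ζ := ⟨f, hfm, haev⟩
  -- ζ is a primitive k-th root of unity
  have hprim : IsPrimitiveRoot ζ k := by
    rw [← isRoot_cyclotomic_iff (R := K) (n := k)]
    have : (f.map φ) ∣ cyclotomic k K := by
      rw [← map_cyclotomic k φ]; exact Polynomial.map_dvd φ hdvd
    obtain ⟨c, hc⟩ := this
    rw [IsRoot.def, hc, eval_mul, hζ0, zero_mul]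
  have hζne : ζ ≠ 0 := hprim.ne_zero hk.ne'
  -- the field Fq⟮ζ⟯
  set d := f.natDegree with hd
  haveI : FiniteDimensional Fq Fq⟮ζ⟯ := IntermediateField.adjoin.finiteDimensional hint
  have hfinrank : Module.finrank Fq Fq⟮ζ⟯ = d := by
    rw [IntermediateField.adjoin.finrank hint, ← hmin]
  haveI : Finite (Fq⟮ζ⟯ : IntermediateField Fq K) := Module.finite_of_finite Fq
  haveI : Fintype (Fq⟮ζ⟯ : IntermediateField Fq K) := Fintype.ofFinite _
  have hcardE : Fintype.card Fq⟮ζ⟯ = q ^ d := by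
    rw [Module.card_eq_pow_finrank (K := Fq) (V := Fq⟮ζ⟯), hfinrank]
  set e := orderOf ((q : ZMod k)) with he
  -- direction 1 : e ∣ d
  have hzd : ζ ^ q ^ d = ζ := by
    have h1 := FiniteField.pow_card (IntermediateField.AdjoinSimple.gen Fq ζ)
    rw [hcardE] at h1
    have h2 := congrArg (algebraMap Fq⟮ζ⟯ K) h1
    rwa [map_pow, IntermediateField.AdjoinSimple.algebraMap_gen] at h2
  have hed : e ∣ d := by
    apply orderOf_dvd_of_pow_eq_one
    rw [zmod_pow_eq_one_iff hq0]
    apply (hprim.pow_eq_one_iff_dvd _).mp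
    have h1 : 1 ≤ q ^ d := Nat.one_le_pow _ _ hq0
    have : ζ ^ (q ^ d - 1) * ζ = ζ := by
      rw [← pow_succ, Nat.sub_add_cancel h1, hzd]
    calc ζ ^ (q ^ d - 1) = ζ ^ (q ^ d - 1) * ζ * ζ⁻¹ := by rw [mul_assoc, mul_inv_cancel₀ hζne, mul_one]
    _ = 1 := by rw [this, mul_inv_cancel₀ hζne]
  -- direction 2 : d ≤ e
  haveI : NeZero k := ⟨hk.ne'⟩
  have he0 : 0 < e := by
    have heq : e = orderOf (ZMod.unitOfCoprime q hco.symm) := by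
      rw [he, ← orderOf_units, ZMod.coe_unitOfCoprime]
    rw [heq]
    exact orderOf_pos _
  -- direction 2 : d ≤ e
  have hkdvd : k ∣ q ^ e - 1 := (zmod_pow_eq_one_iff hq0).mp (pow_orderOf_eq_one _)
  have h1e : 1 ≤ q ^ e := Nat.one_le_pow _ _ hq0
  have hζe : ζ ^ q ^ e = ζ := by
    have hz1 : ζ ^ (q ^ e - 1) = 1 := (hprim.pow_eq_one_iff_dvd _).mpr hkdvd
    calc ζ ^ q ^ e = ζ ^ (q ^ e - 1 + 1) := by rw [Nat.sub_add_cancel h1e]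
    _ = ζ := by rw [pow_succ, hz1, one_mul]
  set p := ringChar Fq with hpdef
  haveI : CharP Fq p := ringChar.charP Fq
  obtain ⟨s, hp, hcard⟩ := FiniteField.card Fq p
  haveI : Fact p.Prime := ⟨hp⟩
  haveI : CharP K p := charP_of_injective_algebraMap hφinj p
  set t := (s : ℕ) * e with htdef
  have ht : p ^ t = q ^ e := by rw [htdef, pow_mul, ← hcard]
  set ψ := iterateFrobenius K p t with hψ
  have hψapp : ∀ x : K, ψ x = x ^ q ^ e := fun x => by rw [hψ, iterateFrobenius_def, ht]
  set T : IntermediateField Fq K := Subfield.toIntermediateField (RingHom.eqLocusField ψ (RingHom.id K))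
    (fun a => by
      show ψ (φ a) = φ a
      rw [hψapp, ← map_pow]
      congr 1
      exact FiniteField.pow_card_pow e a) with hT
  have hζT : ζ ∈ T := by show ψ ζ = ζ; rw [hψapp, hζe]
  have hET : Fq⟮ζ⟯ ≤ T := by
    rw [IntermediateField.adjoin_le_iff]
    intro x hx
    rw [Set.mem_singleton_iff] at hx
    subst hx
    exact hζT
  set Pe : K[X] := X ^ q ^ e - X with hPe
  have hPe0 : Pe ≠ 0 := FiniteField.X_pow_card_pow_sub_X_ne_zero K he0.ne' hq1
  have hPedeg : Pe.natDegree = q ^ e := FiniteField.X_pow_card_pow_sub_X_natDegree_eq K he0.ne' hq1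
  have hroot : ∀ x : Fq⟮ζ⟯, (x : K) ∈ Pe.roots := by
    intro x
    rw [mem_roots hPe0]
    have hxT : ψ (x : K) = (x : K) := hET x.2
    rw [hψapp] at hxT
    simp only [hPe, IsRoot.def, eval_sub, eval_pow, eval_X, sub_eq_zero]
    exact hxT
  have hcardle : q ^ d ≤ q ^ e := by
    calc q ^ d = Fintype.card Fq⟮ζ⟯ := hcardE.symm
    _ ≤ Fintype.card {y // y ∈ Pe.roots.toFinset} := Fintype.card_le_of_injective
        (fun x => (⟨(x : K), Multiset.mem_toFinset.mpr (hroot x)⟩ : {y // y ∈ Pe.roots.toFinset}))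
        (by intro a b hab
            rw [Subtype.mk.injEq] at hab
            exact Subtype.ext hab)
    _ = Pe.roots.toFinset.card := Fintype.card_coe _
    _ ≤ Multiset.card Pe.roots := Pe.roots.toFinset_card_le
    _ ≤ Pe.natDegree := Pe.card_roots'
    _ = q ^ e := hPedeg
  have hde : d ≤ e := (Nat.pow_le_pow_iff_right hq1).mp hcardle
  exact Nat.le_antisymm hde (Nat.le_of_dvd hfd hed)

lemma orderOf_zmod_mul {m n : ℕ} (q : ℕ) (hmn : Nat.Coprime m n) :
    orderOf ((q : ZMod (m * n))) = Nat.lcm (orderOf ((q : ZMod m))) (orderOf ((q : ZMod n))) := by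
  let e := ZMod.chineseRemainder hmn
  have h1 : orderOf (e ((q : ZMod (m * n)))) = orderOf ((q : ZMod (m * n))) :=
    orderOf_injective e.toRingHom.toMonoidHom e.injective _
  rw [← h1, map_natCast]
  rw [Prod.orderOf]
  simp

lemma prod_bind_sum_right {α β M : Type*} [CommMonoid M] {ι : Type*} (s : Finset ι)
    (A : Multiset α) (B : ι → Multiset β) (h : α → β → M) :
    ∏ j ∈ s, ((A.bind fun a => (B j).map (h a)).prod) =
      (A.bind fun a => ((∑ j ∈ s, B j)).map (h a)).prod := by
  classical
  induction s using Finset.cons_induction with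
  | empty => simp
  | cons j s hj ih =>
    rw [Finset.prod_cons, ih, Finset.sum_cons, ← Multiset.prod_add, ← Multiset.bind_add]
    have hfun : (fun a => Multiset.map (h a) (B j + ∑ x ∈ s, B x)) =
        fun a => Multiset.map (h a) (B j) + Multiset.map (h a) (∑ x ∈ s, B x) := by
      funext a; rw [Multiset.map_add]
    rw [hfun]

lemma prod_bind_sum_left {α M : Type*} [CommMonoid M] {ι : Type*} (s : Finset ι)
    (A : ι → Multiset α) (F : α → Multiset M) :
    ∏ i ∈ s, (((A i).bind F).prod) = (((∑ i ∈ s, A i)).bind F).prod := by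
  classical
  induction s using Finset.cons_induction with
  | empty => simp
  | cons i s hi ih =>
    rw [Finset.prod_cons, ih, Finset.sum_cons, Multiset.add_bind, Multiset.prod_add]

lemma acRoots_prod (F : Type*) [Field F] {ι : Type*} (s : Finset ι) (f : ι → F[X])
    (hf : ∀ i ∈ s, f i ≠ 0) : acRoots F (∏ i ∈ s, f i) = ∑ i ∈ s, acRoots F (f i) := by
  classical
  induction s using Finset.cons_induction with
  | empty => simp [acRoots]
  | cons i s hi ih =>
    rw [Finset.prod_cons, Finset.sum_cons, ← ih (fun j hj => hf j (Finset.mem_cons_of_mem hj))]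
    unfold acRoots
    rw [Polynomial.map_mul, roots_mul]
    exact mul_ne_zero (Polynomial.map_ne_zero (hf i (Finset.mem_cons_self i s)))
      (Polynomial.map_ne_zero (by
        apply Finset.prod_ne_zero_iff.mpr
        exact fun j hj => hf j (Finset.mem_cons_of_mem hj)))

theorem stmt12 (Fq : Type*) [Field Fq] [Fintype Fq] (m n : ℕ)
    (hm : 0 < m) (hn : 0 < n) (hmn : Nat.Coprime m n)
    (hq : Nat.Coprime (m * n) (Fintype.card Fq))
    (I J : ℕ) (f : Fin I → Fq[X]) (g : Fin J → Fq[X])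
    (hfm : ∀ i, (f i).Monic) (hfi : ∀ i, Irreducible (f i))
    (hgm : ∀ j, (g j).Monic) (hgi : ∀ j, Irreducible (g j))
    (hΦm : cyclotomic m Fq = ∏ i, f i) (hΦn : cyclotomic n Fq = ∏ j, g j) :
    ((cyclotomic (m * n) Fq).map (algebraMap Fq (AlgebraicClosure Fq)) =
        ∏ i, ∏ j, compMul Fq (f i) (g j)) ∧
    (Nat.Coprime (orderOf ((Fintype.card Fq : ZMod m))) (orderOf ((Fintype.card Fq : ZMod n))) →
      ∀ i j (P : Fq[X]),
        P.map (algebraMap Fq (AlgebraicClosure Fq)) = compMul Fq (f i) (g j) →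
        Irreducible P) := by
  classical
  set q := Fintype.card Fq with hqdef
  set K := AlgebraicClosure Fq with hK
  set φ := algebraMap Fq K with hφ
  have hφinj : Function.Injective φ := φ.injective
  have hq1 : 1 < q := Fintype.one_lt_card
  have hcoprime_ne : ∀ k : ℕ, Nat.Coprime k q → ((k : K)) ≠ 0 := by
    intro k hco h0
    have h1 : ((k : Fq)) = 0 := by apply hφinj; rw [map_natCast, map_zero, h0]
    have hrc : ringChar Fq ∣ k := (CharP.cast_eq_zero_iff Fq (ringChar Fq) k).mp h1
    have hrq : ringChar Fq ∣ q := (CharP.cast_eq_zero_iff Fq (ringChar Fq) q).mp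
      (FiniteField.cast_card_eq_zero Fq)
    have : ringChar Fq ∣ 1 := hco ▸ Nat.dvd_gcd hrc hrq
    exact CharP.ringChar_ne_one (R := Fq) (Nat.dvd_one.mp this)
  have hcom : Nat.Coprime m q := Nat.Coprime.coprime_dvd_left (dvd_mul_right m n) hq
  have hcon : Nat.Coprime n q := Nat.Coprime.coprime_dvd_left (dvd_mul_left n m) hq
  haveI hNm : NeZero ((m : K)) := ⟨hcoprime_ne m hcom⟩
  haveI hNn : NeZero ((n : K)) := ⟨hcoprime_ne n hcon⟩
  haveI hNmn : NeZero (((m * n : ℕ) : K)) := ⟨hcoprime_ne _ hq⟩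
  have hmn0 : 0 < m * n := Nat.mul_pos hm hn
  -- roots of cyclotomics over K
  have hrootsm : acRoots Fq (cyclotomic m Fq) = (primitiveRoots m K).val := by
    have h1 : acRoots Fq (cyclotomic m Fq) = (cyclotomic m K).roots :=
      congrArg Polynomial.roots (map_cyclotomic m (algebraMap Fq K))
    exact h1.trans cyclotomic.roots_eq_primitiveRoots_val
  have hrootsn : acRoots Fq (cyclotomic n Fq) = (primitiveRoots n K).val := by
    have h1 : acRoots Fq (cyclotomic n Fq) = (cyclotomic n K).roots :=
      congrArg Polynomial.roots (map_cyclotomic n (algebraMap Fq K))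
    exact h1.trans cyclotomic.roots_eq_primitiveRoots_val
  -- existence of primitive roots in K
  have hex : ∀ k : ℕ, 0 < k → (∀ _h : NeZero ((k : K)), ∃ ζ : K, IsPrimitiveRoot ζ k) := by
    intro k hk hnz
    obtain ⟨ζ, hζ⟩ := IsAlgClosed.exists_root (cyclotomic k K) (by
      rw [degree_cyclotomic]
      exact_mod_cast (Nat.totient_pos.mpr hk).ne')
    exact ⟨ζ, isRoot_cyclotomic_iff.mp hζ⟩
  obtain ⟨ζm, hζm⟩ := hex m hm hNm
  obtain ⟨ζn, hζn⟩ := hex n hn hNn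
  have hmulprim : ∀ {α β : K}, IsPrimitiveRoot α m → IsPrimitiveRoot β n →
      IsPrimitiveRoot (α * β) (m * n) := by
    intro α β hα hβ
    have h1 : orderOf (α * β) = m * n := by
      rw [(Commute.all α β).orderOf_mul_eq_mul_orderOf_of_coprime
        (by rw [← hα.eq_orderOf, ← hβ.eq_orderOf]; exact hmn)]
      rw [← hα.eq_orderOf, ← hβ.eq_orderOf]
    have h2 := IsPrimitiveRoot.orderOf (α * β)
    rwa [h1] at h2
  have hζmn : IsPrimitiveRoot (ζm * ζn) (m * n) := hmulprim hζm hζn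
  set A : Multiset K := (primitiveRoots m K).val with hA
  set B : Multiset K := (primitiveRoots n K).val with hB
  have hmemA : ∀ α ∈ A, IsPrimitiveRoot α m := by
    intro α hα
    rw [hA, Finset.mem_val, mem_primitiveRoots hm] at hα
    exact hα
  have hmemB : ∀ β ∈ B, IsPrimitiveRoot β n := by
    intro β hβ
    rw [hB, Finset.mem_val, mem_primitiveRoots hn] at hβ
    exact hβ
  set M : Multiset K := A.bind (fun α => B.map (fun β => α * β)) with hM
  have hAnd : A.Nodup := (primitiveRoots m K).nodup
  have hBnd : B.Nodup := (primitiveRoots n K).nodup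
  -- cancellation
  have hcancel : ∀ {α α' β β' : K}, IsPrimitiveRoot α m → IsPrimitiveRoot α' m →
      IsPrimitiveRoot β n → IsPrimitiveRoot β' n → α * β = α' * β' → α = α' := by
    intro α α' β β' hα hα' hβ hβ' heq
    have hα'0 : α' ≠ 0 := hα'.ne_zero hm.ne'
    have hβ0 : β ≠ 0 := hβ.ne_zero hn.ne'
    set x := α * α'⁻¹ with hx
    have hxm : x ^ m = 1 := by
      rw [hx, mul_pow, inv_pow, hα.pow_eq_one, hα'.pow_eq_one, inv_one, mul_one]
    have hxalt : x = β' * β⁻¹ := by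
      rw [hx]
      rw [← div_eq_mul_inv, ← div_eq_mul_inv, div_eq_div_iff hα'0 hβ0]
      rw [heq]; ring
    have hxn : x ^ n = 1 := by
      rw [hxalt, mul_pow, inv_pow, hβ'.pow_eq_one, hβ.pow_eq_one, inv_one, mul_one]
    have hdvd1 : orderOf x ∣ 1 := by
      have := Nat.dvd_gcd (orderOf_dvd_of_pow_eq_one hxm) (orderOf_dvd_of_pow_eq_one hxn)
      rwa [hmn] at this
    have hx1 : x = 1 := orderOf_eq_one_iff.mp (Nat.dvd_one.mp hdvd1)
    rw [hx] at hx1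
    rw [mul_inv_eq_one₀ hα'0] at hx1
    exact hx1
  have hMnd : M.Nodup := by
    rw [hM, Multiset.nodup_bind]
    constructor
    · intro α hα
      have hα0 : α ≠ 0 := (hmemA α hα).ne_zero hm.ne'
      exact hBnd.map (fun β β' h => mul_left_cancel₀ hα0 h)
    · apply Multiset.Nodup.pairwise ?_ hAnd
      intro α hα α' hα' hne
      show Disjoint (B.map (fun β => α * β)) (B.map (fun β => α' * β))
      rw [Multiset.disjoint_left]
      rintro x hx hx'
      obtain ⟨β, hβ, rfl⟩ := Multiset.mem_map.mp hx
      obtain ⟨β', hβ', heq⟩ := Multiset.mem_map.mp hx'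
      exact hne (hcancel (hmemA α hα) (hmemA α' hα') (hmemB β hβ) (hmemB β' hβ')
        heq.symm)
  have hMsub : M ⊆ (primitiveRoots (m * n) K).val := by
    intro x hx
    obtain ⟨α, hα, hx2⟩ := Multiset.mem_bind.mp hx
    obtain ⟨β, hβ, rfl⟩ := Multiset.mem_map.mp hx2
    rw [Finset.mem_val, mem_primitiveRoots hmn0]
    exact hmulprim (hmemA α hα) (hmemB β hβ)
  have hcardA : Multiset.card A = m.totient := hζm.card_primitiveRoots
  have hcardB : Multiset.card B = n.totient := hζn.card_primitiveRoots
  have hcardM : Multiset.card M = (m * n).totient := by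
    rw [hM, Multiset.card_bind]
    have : Multiset.map (Multiset.card ∘ fun α => B.map (fun β => α * β)) A =
        Multiset.map (fun _ => Multiset.card B) A := by
      apply Multiset.map_congr rfl
      intro α _
      simp [Multiset.card_map]
    rw [this, Multiset.map_const', Multiset.sum_replicate, smul_eq_mul, hcardA, hcardB,
      Nat.totient_mul hmn]
  have hMeq : M = (primitiveRoots (m * n) K).val := by
    apply Multiset.eq_of_le_of_card_le ((Multiset.le_iff_subset hMnd).mpr hMsub)
    rw [hcardM, ← hζmn.card_primitiveRoots]
    exact le_rfl
  -- decompositions of A and B as sums of roots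
  have hAsum : A = ∑ i, acRoots Fq (f i) := by
    rw [← hrootsm, hΦm, acRoots_prod Fq Finset.univ f (fun i _ => (hfi i).ne_zero)]
  have hBsum : B = ∑ j, acRoots Fq (g j) := by
    rw [← hrootsn, hΦn, acRoots_prod Fq Finset.univ g (fun j _ => (hgi j).ne_zero)]
  -- Part 1
  have hpart1 : (cyclotomic (m * n) Fq).map φ = ∏ i, ∏ j, compMul Fq (f i) (g j) := by
    calc (cyclotomic (m * n) Fq).map φ = cyclotomic (m * n) K := by rw [map_cyclotomic]
    _ = ((cyclotomic (m * n) K).roots.map (fun a => X - C a)).prod :=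
        (IsAlgClosed.splits _).eq_prod_roots_of_monic (cyclotomic.monic _ K)
    _ = (M.map (fun a => X - C a)).prod := by
        rw [cyclotomic.roots_eq_primitiveRoots_val, hMeq]
    _ = (A.bind fun α => B.map (fun β => X - C (α * β))).prod := by
        rw [hM, Multiset.map_bind]
        simp only [Multiset.map_map, Function.comp]
    _ = ∏ i, ((acRoots Fq (f i)).bind fun α => B.map (fun β => X - C (α * β))).prod := by
        rw [hAsum, ← prod_bind_sum_left]
    _ = ∏ i, ∏ j, compMul Fq (f i) (g j) := by
        apply Finset.prod_congr rfl
        intro i _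
        rw [hBsum, ← prod_bind_sum_right]
        rfl
  refine ⟨hpart1, ?_⟩
  -- Part 2
  intro hco i j P hP
  set dm := orderOf ((q : ZMod m)) with hdm
  set dn := orderOf ((q : ZMod n)) with hdn
  have hfdeg : (f i).natDegree = dm :=
    key_deg Fq hm hcom (hfm i) (hfi i) (hΦm ▸ Finset.dvd_prod_of_mem f (Finset.mem_univ i))
  have hgdeg : (g j).natDegree = dn :=
    key_deg Fq hn hcon (hgm j) (hgi j) (hΦn ▸ Finset.dvd_prod_of_mem g (Finset.mem_univ j))
  have hordmn : orderOf ((q : ZMod (m * n))) = dm * dn := by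
    rw [orderOf_zmod_mul q hmn, ← hdm, ← hdn, Nat.Coprime.lcm_eq_mul hco]
  have hAicard : Multiset.card (acRoots Fq (f i)) = (f i).natDegree :=
    IsAlgClosed.card_roots_map_eq_natDegree_of_injective (f i) hφinj
  have hBjcard : Multiset.card (acRoots Fq (g j)) = (g j).natDegree :=
    IsAlgClosed.card_roots_map_eq_natDegree_of_injective (g j) hφinj
  set t : Multiset K[X] :=
    (acRoots Fq (f i)).bind fun α => (acRoots Fq (g j)).map fun β => X - C (α * β) with htdef
  have hmono : ∀ pl ∈ t, pl.Monic := by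
    intro pl hpl
    obtain ⟨α, hα, hpl2⟩ := Multiset.mem_bind.mp hpl
    obtain ⟨β, hβ, rfl⟩ := Multiset.mem_map.mp hpl2
    exact monic_X_sub_C _
  have hcompMul : compMul Fq (f i) (g j) = t.prod := rfl
  have hcardt : Multiset.card t = dm * dn := by
    rw [htdef, Multiset.card_bind]
    have : Multiset.map (Multiset.card ∘ fun α => (acRoots Fq (g j)).map (fun β => X - C (α * β)))
        (acRoots Fq (f i)) =
        Multiset.map (fun _ => Multiset.card (acRoots Fq (g j))) (acRoots Fq (f i)) := by
      apply Multiset.map_congr rfl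
      intro α _
      simp [Multiset.card_map]
    rw [this, Multiset.map_const', Multiset.sum_replicate, smul_eq_mul, hAicard, hBjcard,
      hfdeg, hgdeg]
  have hPdeg : P.natDegree = dm * dn := by
    have h1 : (P.map φ).natDegree = P.natDegree := natDegree_map φ
    rw [← h1, hP, hcompMul, natDegree_multiset_prod_of_monic t hmono]
    have h2 : Multiset.map natDegree t = Multiset.replicate (Multiset.card t) 1 := by
      rw [Multiset.eq_replicate]
      refine ⟨Multiset.card_map _ _, ?_⟩
      intro b hb
      obtain ⟨pl, hpl, rfl⟩ := Multiset.mem_map.mp hb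
      obtain ⟨α, hα, hpl2⟩ := Multiset.mem_bind.mp hpl
      obtain ⟨β, hβ, rfl⟩ := Multiset.mem_map.mp hpl2
      exact natDegree_X_sub_C _
    rw [h2, Multiset.sum_replicate, smul_eq_mul, mul_one, hcardt]
  have hPmonic : P.Monic := by
    rw [← Polynomial.monic_map_iff (f := φ), hP, hcompMul]
    have : t.prod = (t.map id).prod := by rw [Multiset.map_id]
    rw [this]
    exact monic_multiset_prod_of_monic _ _ (fun pl hpl => hmono pl hpl)
  have hP0 : P ≠ 0 := hPmonic.ne_zero
  have hPdvd : P ∣ cyclotomic (m * n) Fq := by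
    rw [← map_dvd_map' φ, hP, hpart1]
    exact dvd_trans
      (Finset.dvd_prod_of_mem (fun j => compMul Fq (f i) (g j)) (Finset.mem_univ j))
      (Finset.dvd_prod_of_mem (fun i => ∏ j, compMul Fq (f i) (g j)) (Finset.mem_univ i))
  have hdmpos : 0 < dm := by rw [← hfdeg]; exact (hfi i).natDegree_pos
  have hdnpos : 0 < dn := by rw [← hgdeg]; exact (hgi j).natDegree_pos
  have hPdpos : 0 < P.natDegree := by rw [hPdeg]; exact Nat.mul_pos hdmpos hdnpos
  have hPnotunit : ¬IsUnit P := by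
    intro hu
    rw [Polynomial.natDegree_eq_zero_of_isUnit hu] at hPdpos
    exact lt_irrefl 0 hPdpos
  obtain ⟨Q, hQirr, hQdvd⟩ := WfDvdMonoid.exists_irreducible_factor hPnotunit hP0
  have hQ0 : Q ≠ 0 := hQirr.ne_zero
  have hQn_monic : (normalize Q).Monic := monic_normalize hQ0
  have hQn_irr : Irreducible (normalize Q) := (associated_normalize Q).irreducible hQirr
  have hQnP : normalize Q ∣ P := dvd_trans (normalize_dvd_iff.mpr dvd_rfl) hQdvd
  have hQn_dvd : normalize Q ∣ cyclotomic (m * n) Fq := dvd_trans hQnP hPdvd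
  have hQdeg : (normalize Q).natDegree = dm * dn := by
    rw [key_deg Fq hmn0 hq hQn_monic hQn_irr hQn_dvd, ← hqdef, hordmn]
  obtain ⟨Rr, hR⟩ := hQnP
  have hRr0 : Rr ≠ 0 := by
    rintro rfl
    rw [mul_zero] at hR
    exact hP0 hR
  have hRdeg : Rr.natDegree = 0 := by
    have h3 := congrArg natDegree hR
    rw [natDegree_mul hQn_monic.ne_zero hRr0, hQdeg, hPdeg] at h3
    omega
  obtain ⟨c, hc⟩ := Polynomial.natDegree_eq_zero.mp hRdeg
  have hc0 : c ≠ 0 := by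
    rintro rfl
    rw [map_zero] at hc
    exact hRr0 hc.symm
  have hassoc : Associated (normalize Q) P :=
    ⟨(Polynomial.isUnit_C.mpr hc0.isUnit).unit, by
      rw [IsUnit.unit_spec, hc, ← hR]⟩
  exact hassoc.irreducible hQn_irr
end

section
/- Let q be an odd prime power, r ≥ 3 odd with gcd(r, q) = 1, d_r = ord_r(q), and K = v_2(q^{d_r} − 1). Then for every n with 1 ≤ n ≤ K, the multiplicative order of q modulo 2^n r equals d_r. Consequently every monic irreducible factor of Φ_{2^n r} over F_q has degree d_r for n ≤ K. -/
open Polynomial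

theorem stmt15 (Fq : Type*) [Field Fq] [Fintype Fq] (hodd : Odd (Fintype.card Fq))
    (r : ℕ) (hr : 3 ≤ r) (hrodd : Odd r) (hcop : Nat.Coprime r (Fintype.card Fq))
    (d K : ℕ) (hd : d = orderOf ((Fintype.card Fq : ZMod r)))
    (hK : K = padicValNat 2 ((Fintype.card Fq) ^ d - 1)) :
    ∀ n : ℕ, 1 ≤ n → n ≤ K →
      orderOf ((Fintype.card Fq : ZMod (2 ^ n * r))) = d ∧
      ∀ h : Fq[X], h.Monic → Irreducible h → h ∣ cyclotomic (2 ^ n * r) Fq →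
        h.natDegree = d := by
  intro n hn1 hnK
  set q := Fintype.card Fq with hq
  have hq2 : 2 ≤ q := Fintype.one_lt_card
  haveI : NeZero r := ⟨by omega⟩
  -- `d ≥ 1`
  have hd1 : 1 ≤ d := by
    rw [hd]
    have : ((ZMod.unitOfCoprime q hcop.symm : (ZMod r)ˣ) : ZMod r) = (q : ZMod r) :=
      ZMod.coe_unitOfCoprime q hcop.symm
    rw [← this, orderOf_units]
    exact (orderOf_pos _)
  -- key cast lemma
  have key : ∀ M j : ℕ, M ∣ q ^ j - 1 → ((q : ZMod M)) ^ j = 1 := by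
    intro M j hMj
    have h1 : 1 ≤ q ^ j := Nat.one_le_pow _ _ (by omega)
    have h0 : ((q ^ j - 1 : ℕ) : ZMod M) = 0 :=
      (ZMod.natCast_eq_zero_iff _ _).mpr hMj
    calc ((q : ZMod M)) ^ j = ((q ^ j : ℕ) : ZMod M) := by push_cast; ring
      _ = (((q ^ j - 1) + 1 : ℕ) : ZMod M) := by rw [Nat.sub_add_cancel h1]
      _ = 1 := by rw [Nat.cast_add, h0, Nat.cast_one, zero_add]
  have hqd1 : 1 ≤ q ^ d := Nat.one_le_pow _ _ (by omega)
  have hr_dvd : r ∣ q ^ d - 1 := by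
    have hpow : ((q : ZMod r)) ^ d = 1 := by rw [hd]; exact pow_orderOf_eq_one _
    have : ((q ^ d - 1 : ℕ) : ZMod r) = 0 := by
      rw [Nat.cast_sub hqd1]
      push_cast
      rw [hpow]; ring
    exact (ZMod.natCast_eq_zero_iff _ _).mp this
  have h2n : (2 : ℕ) ^ n ∣ q ^ d - 1 :=
    dvd_trans (pow_dvd_pow 2 hnK) (hK ▸ pow_padicValNat_dvd)
  have hcop2r : Nat.Coprime (2 ^ n) r := (Nat.Coprime.pow_left _ hrodd.coprime_two_left)
  have hm_dvd : 2 ^ n * r ∣ q ^ d - 1 := hcop2r.mul_dvd_of_dvd_of_dvd h2n hr_dvd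
  haveI : NeZero (2 ^ n * r) := ⟨by positivity⟩
  have hordm : orderOf ((q : ZMod (2 ^ n * r))) = d := by
    apply Nat.dvd_antisymm
    · exact orderOf_dvd_of_pow_eq_one (key _ d hm_dvd)
    · have hmap := orderOf_map_dvd
        (ZMod.castHom (dvd_mul_left r (2 ^ n)) (ZMod r)).toMonoidHom
        ((q : ZMod (2 ^ n * r)))
      simp only [RingHom.toMonoidHom_eq_coe, MonoidHom.coe_coe, map_natCast] at hmap
      rw [hd]; exact hmap
  refine ⟨hordm, ?_⟩
  intro h hmono hirr hdvd
  haveI : Fact (Irreducible h) := ⟨hirr⟩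
  have hh0 : h ≠ 0 := hmono.ne_zero
  set k := h.natDegree with hkdef
  have hk0 : 0 < k := hirr.natDegree_pos
  -- the field L = Fq[X]/(h)
  set L := AdjoinRoot h with hL
  let pb := AdjoinRoot.powerBasis hh0
  haveI : Module.Finite Fq L := Module.Finite.of_basis pb.basis
  haveI : Finite L := Module.finite_of_finite Fq
  haveI : Fintype L := Fintype.ofFinite L
  have hcardL : Fintype.card L = q ^ k := by
    rw [Module.card_fintype pb.basis, Fintype.card_fin]
    rfl
  -- characteristic
  set p := ringChar Fq with hp
  haveI hpfact : Fact p.Prime := ⟨CharP.char_is_prime Fq p⟩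
  obtain ⟨s, _, hqps⟩ := FiniteField.card Fq p
  rw [← hq] at hqps
  haveI : CharP L p := charP_of_injective_algebraMap (algebraMap Fq L).injective p
  have hpq : p ∣ q := by
    rw [hqps]
    exact dvd_pow_self p (by exact_mod_cast s.ne_zero)
  have hcopmq : Nat.Coprime (2 ^ n * r) q :=
    Nat.Coprime.mul (Nat.Coprime.pow_left _ (Nat.coprime_two_left.mpr hodd)) hcop
  have hpm : ¬ p ∣ (2 ^ n * r) := by
    intro hdp
    have : p ∣ 1 := hcopmq ▸ Nat.dvd_gcd hdp hpq
    have := Nat.le_of_dvd one_pos this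
    exact absurd this (by have := hpfact.out.two_le; omega)
  haveI : NeZero ((2 ^ n * r : ℕ) : L) :=
    ⟨fun H => hpm ((CharP.cast_eq_zero_iff L p _).mp H)⟩
  -- the root
  set α := AdjoinRoot.root h with hα
  have hroot : aeval α h = 0 := by rw [AdjoinRoot.aeval_eq, AdjoinRoot.mk_self]
  have hcyc : aeval α (cyclotomic (2 ^ n * r) Fq) = 0 := by
    obtain ⟨c, hc⟩ := hdvd
    rw [hc, map_mul, hroot, zero_mul]
  have hisroot : (cyclotomic (2 ^ n * r) L).IsRoot α := by
    rw [← map_cyclotomic (2 ^ n * r) (algebraMap Fq L), IsRoot, eval_map, ← aeval_def]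
    exact hcyc
  have hprim : IsPrimitiveRoot α (2 ^ n * r) := (isRoot_cyclotomic_iff).mp hisroot
  have horder : orderOf α = 2 ^ n * r := hprim.eq_orderOf.symm
  have hm1 : 1 ≤ 2 ^ n * r := Nat.one_le_iff_ne_zero.mpr (NeZero.ne _)
  have hα0 : α ≠ 0 := by
    intro H
    have := hprim.pow_eq_one
    rw [H, zero_pow (by omega)] at this
    exact one_ne_zero this.symm
  -- auxiliary : α ^ (q ^ j) = α when (2^n r) ∣ q^j - 1
  have hαpow : ∀ j : ℕ, 2 ^ n * r ∣ q ^ j - 1 → α ^ q ^ j = α := by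
    intro j hj
    have h1 : 1 ≤ q ^ j := Nat.one_le_pow _ _ (by omega)
    have : α ^ (q ^ j - 1) = 1 := by
      rw [← horder] at hj
      exact orderOf_dvd_iff_pow_eq_one.mp hj
    calc α ^ q ^ j = α ^ ((q ^ j - 1) + 1) := by rw [Nat.sub_add_cancel h1]
      _ = α ^ (q ^ j - 1) * α := pow_succ α _
      _ = α := by rw [this, one_mul]
  -- d ∣ k
  have hαqk : α ^ q ^ k = α := by
    rw [← hcardL]; exact FiniteField.pow_card α
  have hqk1 : 1 ≤ q ^ k := Nat.one_le_pow _ _ (by omega)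
  have hm_dvd_qk : 2 ^ n * r ∣ q ^ k - 1 := by
    have h1 : α ^ (q ^ k - 1) * α = 1 * α := by
      rw [← pow_succ, Nat.sub_add_cancel hqk1, hαqk, one_mul]
    have h2 : α ^ (q ^ k - 1) = 1 := mul_right_cancel₀ hα0 h1
    rw [← horder]
    exact orderOf_dvd_iff_pow_eq_one.mpr h2
  have hdk : d ∣ k := hordm ▸ orderOf_dvd_of_pow_eq_one (key _ _ hm_dvd_qk)
  -- k ≤ d
  have hqd : (q : ℕ) ^ d = p ^ ((s : ℕ) * d) := by rw [hqps, ← pow_mul]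
  have hfix : ∀ x : L, x ^ q ^ d = x := by
    intro x
    have hx : x ∈ Algebra.adjoin Fq ({α} : Set L) := by
      rw [hα, AdjoinRoot.adjoinRoot_eq_top]; trivial
    induction hx using Algebra.adjoin_induction with
    | mem y hy =>
      rw [Set.mem_singleton_iff] at hy
      rw [hy]
      exact hαpow d hm_dvd
    | algebraMap c =>
      rw [← map_pow]
      congr 1
      exact FiniteField.pow_card_pow d c
    | add x y hx hy ihx ihy =>
      rw [hqd] at ihx ihy ⊢
      rw [add_pow_char_pow, ihx, ihy]
    | mul x y hx hy ihx ihy =>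
      rw [mul_pow, ihx, ihy]
  have hd0 : d ≠ 0 := by omega
  have hcard_le : Fintype.card L ≤ q ^ d := by
    set f : L[X] := X ^ q ^ d - X with hf
    have hf0 : f ≠ 0 := FiniteField.X_pow_card_pow_sub_X_ne_zero L hd0 hq2
    have hroots : ∀ x : L, x ∈ f.roots := by
      intro x
      rw [mem_roots hf0]
      simp [hf, IsRoot, hfix x]
    calc Fintype.card L = Finset.univ.card := rfl
      _ ≤ f.roots.toFinset.card :=
          Finset.card_le_card (fun x _ => Multiset.mem_toFinset.mpr (hroots x))
      _ ≤ Multiset.card f.roots := f.roots.toFinset_card_le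
      _ ≤ f.natDegree := f.card_roots'
      _ = q ^ d := FiniteField.X_pow_card_pow_sub_X_natDegree_eq L hd0 hq2
  have hkd : k ≤ d := by
    rw [hcardL] at hcard_le
    exact (Nat.pow_le_pow_iff_right hq2).mp hcard_le
  have hdk' : d ≤ k := Nat.le_of_dvd hk0 hdk
  omega
end

section
/- Let q be an odd prime power, r ≥ 3 odd with gcd(r,q) = 1, d_r = ord_r(q), K = v_2(q^{d_r} − 1), and assume q ≡ 1 (mod 4) if d_r is odd. If h is a monic irreducible factor of Φ_{2^K r} over F_q, then for every n > K the polynomial h(x^{2^{n−K}}) is irreducible over F_q, and Φ_{2^n r}(x) = ∏_i h_i(x^{2^{n−K}}) is the complete factorization of Φ_{2^n r} over F_q, where Φ_{2^K r} = ∏_i h_i is the factorization into monic irreducibles. -/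
open Polynomial

lemma zmodPowEqOne (q t M : ℕ) (hq : 0 < q) :
    ((q : ZMod M)) ^ t = 1 ↔ M ∣ q ^ t - 1 := by
  have h1 : 1 ≤ q ^ t := Nat.one_le_pow _ _ hq
  rw [← Nat.cast_pow, ← Nat.cast_one, ZMod.natCast_eq_natCast_iff]
  exact ⟨fun h => (Nat.modEq_iff_dvd' h1).mp h.symm,
    fun h => ((Nat.modEq_iff_dvd' h1).mpr h).symm⟩

lemma orderZmodDvdIff (q t M : ℕ) (hq : 0 < q) :
    orderOf ((q : ZMod M)) ∣ t ↔ M ∣ q ^ t - 1 := by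
  rw [orderOf_dvd_iff_pow_eq_one, zmodPowEqOne q t M hq]

lemma zmodSelfDvd (q M : ℕ) (hq : 0 < q) :
    M ∣ q ^ orderOf ((q : ZMod M)) - 1 :=
  (orderZmodDvdIff q _ M hq).mp dvd_rfl

lemma orderZmodPos (q M : ℕ) (hcop : Nat.Coprime q M) (hM : 0 < M) :
    0 < orderOf ((q : ZMod M)) := by
  haveI : NeZero M := ⟨hM.ne'⟩
  obtain ⟨u, hu⟩ := (ZMod.isUnit_iff_coprime q M).mpr hcop
  rw [← hu, orderOf_units]
  exact orderOf_pos u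

lemma degFactorCyclotomic (Fq : Type*) [Field Fq] [Fintype Fq]
    (m : ℕ) (hm : 0 < m) (hcop : Nat.Coprime m (Fintype.card Fq))
    (g : Fq[X]) (hg : Irreducible g) (hdvd : g ∣ cyclotomic m Fq) :
    g.natDegree = orderOf ((Fintype.card Fq : ZMod m)) := by
  set q := Fintype.card Fq with hqdef
  have hq1 : 1 < q := Fintype.one_lt_card
  have hq0 : 0 < q := by omega
  haveI : Fact (Irreducible g) := ⟨hg⟩
  have hg0 : g ≠ 0 := hg.ne_zero
  set L := AdjoinRoot g with hL
  let pb : PowerBasis Fq L := AdjoinRoot.powerBasis hg0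
  haveI : Fintype L := Module.fintypeOfFintype pb.basis
  have cardL : Fintype.card L = q ^ g.natDegree := by
    rw [Module.card_fintype pb.basis, Fintype.card_fin]
    congr 1
  set ζ : L := AdjoinRoot.root g with hζ
  -- ζ is a root of cyclotomic m L
  have hζroot : IsRoot (cyclotomic m L) ζ := by
    obtain ⟨t, ht⟩ := hdvd
    have haev : aeval ζ (cyclotomic m Fq) = 0 := by
      rw [ht, map_mul, AdjoinRoot.aeval_eq, AdjoinRoot.mk_self, zero_mul]
    rwa [IsRoot.def, ← map_cyclotomic m (algebraMap Fq L), eval_map, ← aeval_def]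
  -- characteristic
  set p := ringChar Fq with hp
  haveI : CharP Fq p := ringChar.charP Fq
  have hpprime : p.Prime := CharP.char_is_prime Fq p
  haveI : Fact p.Prime := ⟨hpprime⟩
  obtain ⟨f, _, hqpf⟩ := FiniteField.card Fq p
  haveI : CharP L p := charP_of_injective_algebraMap (algebraMap Fq L).injective p
  have hpm : ¬ p ∣ m := by
    intro hdm
    have hpq : p ∣ q := by rw [hqdef, hqpf]; exact dvd_pow_self p f.pos.ne'
    have : p ∣ 1 := hcop ▸ Nat.dvd_gcd hdm hpq
    exact hpprime.one_lt.ne' (Nat.dvd_one.mp this)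
  haveI : NeZero (m : L) := ⟨fun hc => hpm ((CharP.cast_eq_zero_iff L p m).mp hc)⟩
  have hprim : IsPrimitiveRoot ζ m := isRoot_cyclotomic_iff.mp hζroot
  have horder : orderOf ζ = m := hprim.eq_orderOf.symm
  set t := g.natDegree with htdef
  have ht0 : 0 < t := hg.natDegree_pos
  set s := orderOf ((q : ZMod m)) with hsdef
  have hs0 : 0 < s := orderZmodPos q m (Nat.Coprime.symm hcop) hm
  -- direction 1 : s ∣ t
  have hζne : ζ ≠ 0 := hprim.ne_zero hm.ne'
  have hst : s ∣ t := by
    refine (orderZmodDvdIff q t m hq0).mpr ?_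
    have h1q : 1 ≤ q ^ t := Nat.one_le_pow _ _ hq0
    have hζq : ζ ^ q ^ t = ζ := by rw [← cardL]; exact FiniteField.pow_card ζ
    have hpow1 : ζ ^ (q ^ t - 1) = 1 := by
      have hmul : ζ ^ (q ^ t - 1) * ζ = 1 * ζ := by
        rw [← pow_succ, Nat.sub_add_cancel h1q, hζq, one_mul]
      exact mul_right_cancel₀ hζne hmul
    exact horder ▸ orderOf_dvd_of_pow_eq_one hpow1
  -- direction 2 : t ≤ s
  have hts : t ≤ s := by
    have hqs1 : 1 ≤ q ^ s := Nat.one_le_pow _ _ hq0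
    have hms : m ∣ q ^ s - 1 := zmodSelfDvd q m hq0
    have hζs : ζ ^ q ^ s = ζ := by
      have h1 : ζ ^ (q ^ s - 1) = 1 :=
        orderOf_dvd_iff_pow_eq_one.mp (horder ▸ hms)
      calc ζ ^ q ^ s = ζ ^ (q ^ s - 1) * ζ := by
            rw [← pow_succ, Nat.sub_add_cancel hqs1]
        _ = ζ := by rw [h1, one_mul]
    -- the (f*s)-th iterate of Frobenius fixes everything
    have hfix : ∀ x : L, x ^ q ^ s = x := by
      haveI : ExpChar L p := ExpChar.prime hpprime
      set φ : L →+* L := iterateFrobenius L p (f * s) with hφdef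
      have hφ : ∀ x : L, φ x = x ^ q ^ s := fun x => by
        rw [hφdef, iterateFrobenius_def, pow_mul, ← hqpf]
      have hfixFq : ∀ c : Fq, φ (algebraMap Fq L c) = algebraMap Fq L c := fun c => by
        rw [hφ, ← map_pow, FiniteField.pow_card_pow]
      let φalg : L →ₐ[Fq] L := AlgHom.mk' φ (fun c x => by
        rw [Algebra.smul_def, map_mul, hfixFq, Algebra.smul_def])
      have hζfix : φalg ζ = AlgHom.id Fq L ζ := by
        show φ ζ = ζ
        rw [hφ, hζs]
      have hle : Algebra.adjoin Fq ({ζ} : Set L) ≤ AlgHom.equalizer φalg (AlgHom.id Fq L) :=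
        Algebra.adjoin_le (Set.singleton_subset_iff.mpr hζfix)
      intro x
      have hx : x ∈ Algebra.adjoin Fq ({ζ} : Set L) := by
        rw [hζ, AdjoinRoot.adjoinRoot_eq_top]; trivial
      have := hle hx
      rw [AlgHom.mem_equalizer] at this
      rw [← hφ]; exact this
    have hcardle : Fintype.card L ≤ q ^ s := by
      classical
      have hne : (X ^ q ^ s - X : L[X]) ≠ 0 :=
        FiniteField.X_pow_card_pow_sub_X_ne_zero L hs0.ne' hq1
      have hdeg : (X ^ q ^ s - X : L[X]).natDegree = q ^ s :=
        FiniteField.X_pow_card_pow_sub_X_natDegree_eq L hs0.ne' hq1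
      have hsub : Finset.univ.val ≤ (X ^ q ^ s - X : L[X]).roots := by
        refine Multiset.le_iff_count.mpr fun a => ?_
        rw [count_roots]
        have hroot : IsRoot (X ^ q ^ s - X : L[X]) a := by
          simp [IsRoot.def, hfix a]
        have : 0 < rootMultiplicity a (X ^ q ^ s - X : L[X]) :=
          (rootMultiplicity_pos hne).mpr hroot
        have hc : Finset.univ.val.count a ≤ 1 :=
          Multiset.nodup_iff_count_le_one.mp Finset.univ.nodup a
        omega
      calc Fintype.card L = Multiset.card (Finset.univ.val : Multiset L) := rfl
        _ ≤ Multiset.card (X ^ q ^ s - X : L[X]).roots := Multiset.card_le_card hsub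
        _ ≤ (X ^ q ^ s - X : L[X]).natDegree := card_roots' _
        _ = q ^ s := hdeg
    have := cardL ▸ hcardle
    exact (Nat.pow_le_pow_iff_right hq1).mp this
  exact le_antisymm hts (Nat.le_of_dvd ht0 hst)
lemma keyArith (q r d K : ℕ) (hq : 2 ≤ q) (hrpos : 0 < r) (hrodd : Odd r)
    (hcop : Nat.Coprime q r)
    (hd : d = orderOf ((q : ZMod r)))
    (hK : K = padicValNat 2 (q ^ d - 1)) (hK2 : 2 ≤ K) :
    ∀ m, K ≤ m → orderOf ((q : ZMod (2 ^ m * r))) = 2 ^ (m - K) * d ∧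
      padicValNat 2 (q ^ (2 ^ (m - K) * d) - 1) = m := by
  haveI : Fact (Nat.Prime 2) := ⟨Nat.prime_two⟩
  have hq0 : 0 < q := by omega
  have hdpos : 0 < d := hd ▸ orderZmodPos q r hcop hrpos
  have h2r : Nat.Coprime 2 r := by
    refine (Nat.prime_two.coprime_iff_not_dvd).mpr ?_
    rw [Nat.odd_iff] at hrodd; omega
  have hrd : r ∣ q ^ d - 1 := by
    rw [← orderZmodDvdIff q d r hq0, hd]
  intro m hm
  induction m, hm using Nat.le_induction with
  | base =>
    have hMd : 2 ^ K * r ∣ q ^ d - 1 :=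
      (Nat.Coprime.pow_left K h2r).mul_dvd_of_dvd_of_dvd
        (hK ▸ pow_padicValNat_dvd) hrd
    have h1 : orderOf ((q : ZMod (2 ^ K * r))) ∣ d := (orderZmodDvdIff q d _ hq0).mpr hMd
    have h2 : d ∣ orderOf ((q : ZMod (2 ^ K * r))) := by
      rw [hd]
      exact (orderZmodDvdIff q _ r hq0).mpr
        ((dvd_mul_left r (2 ^ K)).trans (zmodSelfDvd q _ hq0))
    have heq : orderOf ((q : ZMod (2 ^ K * r))) = d := Nat.dvd_antisymm h1 h2
    simpa [heq] using hK.symm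
  | succ m hm ih =>
    obtain ⟨hord, hval⟩ := ih
    set D := 2 ^ (m - K) * d with hD
    have hD0 : 0 < D := by positivity
    have hqD2 : 2 ≤ q ^ D := le_trans hq (Nat.le_self_pow hD0.ne' q)
    have hne1 : q ^ D - 1 ≠ 0 := by omega
    have hMdvd : 2 ^ m * r ∣ q ^ D - 1 := hord ▸ zmodSelfDvd q _ hq0
    have h4 : 4 ∣ q ^ D - 1 := by
      have h2m : (2:ℕ) ^ 2 ∣ 2 ^ m := pow_dvd_pow 2 (le_trans hK2 hm)
      calc (4:ℕ) = 2 ^ 2 := by norm_num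
        _ ∣ 2 ^ m * r := Dvd.dvd.mul_right h2m r
        _ ∣ q ^ D - 1 := hMdvd
    obtain ⟨k, hk⟩ : ∃ k, q ^ D = 4 * k + 1 := by
      obtain ⟨c, hc⟩ := h4; exact ⟨c, by omega⟩
    obtain ⟨N, hN⟩ : ∃ N, q ^ D = N + 1 := ⟨q ^ D - 1, by omega⟩
    have hfactn : q ^ (2 * D) - 1 = (q ^ D - 1) * (q ^ D + 1) := by
      have h1 : q ^ (2 * D) = q ^ D * q ^ D := by rw [two_mul, pow_add]
      rw [h1, hN, Nat.add_sub_cancel]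
      have e1 : (N + 1) * (N + 1) = N * (N + 1 + 1) + 1 := by ring
      rw [e1, Nat.add_sub_cancel]
    have hv1 : padicValNat 2 (q ^ D + 1) = 1 := by
      have e : q ^ D + 1 = 2 * (2 * k + 1) := by omega
      rw [e, padicValNat.mul (by omega) (by omega), padicValNat_self,
        padicValNat.eq_zero_of_not_dvd (by omega)]
    have hvstep : padicValNat 2 (q ^ (2 * D) - 1) = m + 1 := by
      rw [hfactn, padicValNat.mul hne1 (by omega), hval, hv1]
    have hM'dvd : 2 ^ (m + 1) * r ∣ q ^ (2 * D) - 1 := by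
      refine (Nat.Coprime.pow_left (m+1) h2r).mul_dvd_of_dvd_of_dvd ?_ ?_
      · rw [← hvstep]; exact pow_padicValNat_dvd
      · refine ((dvd_mul_left r (2 ^ m)).trans hMdvd).trans ?_
        rw [hfactn]; exact dvd_mul_right _ _
    have hdvd2D : orderOf ((q : ZMod (2 ^ (m+1) * r))) ∣ 2 * D :=
      (orderZmodDvdIff q _ _ hq0).mpr hM'dvd
    have hDdvd : D ∣ orderOf ((q : ZMod (2 ^ (m+1) * r))) := by
      rw [← hord]
      refine (orderZmodDvdIff q _ _ hq0).mpr ?_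
      exact dvd_trans (mul_dvd_mul (pow_dvd_pow 2 (Nat.le_succ m)) dvd_rfl)
        (zmodSelfDvd q _ hq0)
    have hneD : orderOf ((q : ZMod (2 ^ (m+1) * r))) ≠ D := by
      intro hEq
      have hdd : 2 ^ (m+1) * r ∣ q ^ D - 1 := hEq ▸ zmodSelfDvd q _ hq0
      have h2m1 : 2 ^ (m+1) ∣ q ^ D - 1 := (dvd_mul_right (2 ^ (m+1)) r).trans hdd
      have := (padicValNat_dvd_iff_le hne1).mp h2m1
      omega
    obtain ⟨c, hc⟩ := hDdvd
    have hc2 : c ∣ 2 := by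
      have hdc : D * c ∣ D * 2 := by rw [← hc, mul_comm D 2]; exact hdvd2D
      exact (Nat.mul_dvd_mul_iff_left hD0).mp hdc
    have hcval : c = 2 := by
      rcases Nat.prime_two.eq_one_or_self_of_dvd c hc2 with h1 | h2
      · exact absurd (by rw [hc, h1, mul_one]) hneD
      · exact h2
    have hOrd' : orderOf ((q : ZMod (2 ^ (m+1) * r))) = 2 * D := by
      rw [hc, hcval, mul_comm]
    have hexp : 2 ^ (m + 1 - K) * d = 2 * D := by
      rw [hD, show m + 1 - K = (m - K) + 1 by omega, pow_succ]; ring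
    exact ⟨by rw [hOrd', hexp], by rw [hexp, hvstep]⟩

theorem stmt16 (Fq : Type*) [Field Fq] [Fintype Fq] (hodd : Odd (Fintype.card Fq))
    (r : ℕ) (hr : 3 ≤ r) (hrodd : Odd r) (hcop : Nat.Coprime r (Fintype.card Fq))
    (d K : ℕ) (hd : d = orderOf ((Fintype.card Fq : ZMod r)))
    (hK : K = padicValNat 2 ((Fintype.card Fq) ^ d - 1))
    (hmod4 : Odd d → Fintype.card Fq % 4 = 1)
    (I : ℕ) (h : Fin I → Fq[X])
    (hmon : ∀ i, (h i).Monic) (hirr : ∀ i, Irreducible (h i))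
    (hfact : cyclotomic (2 ^ K * r) Fq = ∏ i, h i) :
    ∀ n : ℕ, K < n →
      (∀ i, Irreducible ((h i).comp (X ^ 2 ^ (n - K)))) ∧
      cyclotomic (2 ^ n * r) Fq = ∏ i, (h i).comp (X ^ 2 ^ (n - K)) := by
  haveI : Fact (Nat.Prime 2) := ⟨Nat.prime_two⟩
  intro n hn
  set q := Fintype.card Fq with hqdef
  have hq1 : 1 < q := Fintype.one_lt_card
  have hq0 : 0 < q := by omega
  have hrpos : 0 < r := by omega
  have hcop' : Nat.Coprime q r := hcop.symm
  have hd0 : 0 < d := hd ▸ orderZmodPos q r hcop' hrpos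
  -- q^d % 4 = 1
  have hqd4 : q ^ d % 4 = 1 := by
    rcases Nat.even_or_odd d with he | ho
    · obtain ⟨e2, rfl⟩ := he
      have hqe : Odd (q ^ e2) := hodd.pow
      obtain ⟨k, hk⟩ := hqe
      have : q ^ (e2 + e2) = (q ^ e2) * (q ^ e2) := by rw [pow_add]
      rw [this, hk]
      have : (2 * k + 1) * (2 * k + 1) = 4 * (k * k + k) + 1 := by ring
      rw [this]
      omega
    · have h1 := hmod4 ho
      conv_lhs => rw [Nat.pow_mod, h1, one_pow]
      norm_num
  have hqd2 : 2 ≤ q ^ d := le_trans (by omega) (Nat.le_self_pow hd0.ne' q)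
  have hK2 : 2 ≤ K := by
    have h4 : 4 ∣ q ^ d - 1 := by omega
    rw [hK]
    have : (2:ℕ) ^ 2 ∣ q ^ d - 1 := by norm_num; omega
    exact (padicValNat_dvd_iff_le (by omega)).mp this
  have harith := keyArith q r d K (by omega) hrpos hrodd hcop' hd hK hK2
  have hKn : K ≤ n := le_of_lt hn
  -- the expand identity
  have hexpand : ∀ e : ℕ, cyclotomic (2 ^ (K + e) * r) Fq
      = expand Fq (2 ^ e) (cyclotomic (2 ^ K * r) Fq) := by
    intro e
    induction e with
    | zero => simp
    | succ e ih =>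
      have h2 : (2:ℕ) ∣ 2 ^ (K + e) * r :=
        Dvd.dvd.mul_right (dvd_pow_self 2 (by omega : K + e ≠ 0)) r
      calc cyclotomic (2 ^ (K + (e+1)) * r) Fq
          = cyclotomic ((2 ^ (K + e) * r) * 2) Fq := by
            rw [show 2 ^ (K + (e+1)) * r = 2 ^ (K + e) * r * 2 by ring]
        _ = expand Fq 2 (cyclotomic (2 ^ (K + e) * r) Fq) :=
            (cyclotomic_expand_eq_cyclotomic Nat.prime_two h2 Fq).symm
        _ = expand Fq 2 (expand Fq (2 ^ e) (cyclotomic (2 ^ K * r) Fq)) := by rw [ih]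
        _ = expand Fq (2 ^ (e+1)) (cyclotomic (2 ^ K * r) Fq) := by
            rw [expand_expand]; rw [show 2 * 2 ^ e = 2 ^ (e+1) by ring]
  have hexp : cyclotomic (2 ^ n * r) Fq
      = expand Fq (2 ^ (n - K)) (cyclotomic (2 ^ K * r) Fq) := by
    have := hexpand (n - K)
    rwa [show K + (n - K) = n by omega] at this
  have hfact2 : cyclotomic (2 ^ n * r) Fq = ∏ i, (h i).comp (X ^ 2 ^ (n - K)) := by
    rw [hexp, hfact, map_prod]
    rfl
  refine ⟨?_, hfact2⟩
  intro i
  -- coprimality of moduli with q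
  have h2q : Nat.Coprime 2 q := by
    refine (Nat.prime_two.coprime_iff_not_dvd).mpr ?_
    rw [Nat.odd_iff] at hodd; omega
  have hcopm : ∀ m' : ℕ, Nat.Coprime (2 ^ m' * r) q := fun m' =>
    Nat.Coprime.mul (Nat.Coprime.pow_left m' h2q) hcop
  have hmKpos : 0 < 2 ^ K * r := by positivity
  have hmnpos : 0 < 2 ^ n * r := by positivity
  -- degree of h i
  have hdegh : (h i).natDegree = d := by
    have hdvdi : h i ∣ cyclotomic (2 ^ K * r) Fq := by
      rw [hfact]; exact Finset.dvd_prod_of_mem h (Finset.mem_univ i)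
    have := degFactorCyclotomic Fq (2 ^ K * r) hmKpos (hcopm K) (h i) (hirr i) hdvdi
    rw [this, (harith K le_rfl).1]
    simp
  set F := (h i).comp (X ^ 2 ^ (n - K)) with hF
  have hFdeg : F.natDegree = d * 2 ^ (n - K) := by
    rw [hF, natDegree_comp, natDegree_X_pow, hdegh]
  have hFdegpos : 0 < F.natDegree := by
    rw [hFdeg]; positivity
  have hFne : F ≠ 0 := fun h0 => by simp [h0] at hFdegpos
  have hFnu : ¬ IsUnit F := fun hu => by
    have := natDegree_eq_zero_of_isUnit hu; omega
  obtain ⟨g, hgirr, hgdvd⟩ := WfDvdMonoid.exists_irreducible_factor hFnu hFne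
  have hFdvd : F ∣ cyclotomic (2 ^ n * r) Fq := by
    rw [hfact2]; exact Finset.dvd_prod_of_mem _ (Finset.mem_univ i)
  have hgdeg : g.natDegree = 2 ^ (n - K) * d := by
    have := degFactorCyclotomic Fq (2 ^ n * r) hmnpos (hcopm n) g hgirr (hgdvd.trans hFdvd)
    rw [this, (harith n hKn).1]
  obtain ⟨c, hc⟩ := hgdvd
  have hg0 : g ≠ 0 := hgirr.ne_zero
  have hc0 : c ≠ 0 := fun h0 => hFne (by rw [hc, h0, mul_zero])
  have hcdeg : c.natDegree = 0 := by
    have h1 := natDegree_mul hg0 hc0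
    rw [← hc, hFdeg, hgdeg, mul_comm d] at h1
    omega
  have hcunit : IsUnit c := by
    rw [Polynomial.eq_C_of_natDegree_eq_zero hcdeg]
    refine Polynomial.isUnit_C.mpr (IsUnit.mk0 _ ?_)
    intro h0
    apply hc0
    rw [Polynomial.eq_C_of_natDegree_eq_zero hcdeg, h0, map_zero]
  have hassoc : Associated g F := ⟨hcunit.unit, by rw [IsUnit.unit_spec, ← hc]⟩
  exact hassoc.irreducible hgirr
end

section
/- Let q ≡ 3 (mod 4) be a prime power, write q = 2^A m − 1 with A ≥ 2 and m odd. For 2 ≤ n ≤ A, Φ_{2^n}(x) = ∏_{u ∈ U_n} (x^2 + (u + u^{−1}) x + 1) is the factorization of Φ_{2^n} into 2^{n−2} monic irreducible quadratic trinomials over F_q, where U_n is the set of primitive 2^n-th roots of unity in F_{q^2} (taking one from each conjugate pair). -/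
open Polynomial

theorem stmt18 (Fq : Type*) [Field Fq] [Fintype Fq] (A m : ℕ)
    (hA : 2 ≤ A) (hm : Odd m) (hq : Fintype.card Fq = 2 ^ A * m - 1)
    (hq4 : Fintype.card Fq % 4 = 3)
    (n : ℕ) (hn2 : 2 ≤ n) (hnA : n ≤ A) :
    ∃ (u : Fin (2 ^ (n - 2)) → AlgebraicClosure Fq) (c : Fin (2 ^ (n - 2)) → Fq),
      (∀ i, IsPrimitiveRoot (u i) (2 ^ n)) ∧
      (∀ i, algebraMap Fq (AlgebraicClosure Fq) (c i) = u i + (u i)⁻¹) ∧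
      Function.Injective c ∧
      cyclotomic (2 ^ n) Fq = ∏ i, (X ^ 2 + C (c i) * X + 1) ∧
      ∀ i, Irreducible (X ^ 2 + C (c i) * X + (1 : Fq[X])) := by
  classical
  set K := AlgebraicClosure Fq with hK
  set q := Fintype.card Fq with hqdef
  have hm1 : 1 ≤ m := hm.pos
  have hq3 : 3 ≤ q := by omega
  have hq1 : q + 1 = 2 ^ A * m := by
    have h1 : 1 ≤ 2 ^ A * m := Nat.one_le_iff_ne_zero.mpr (by positivity)
    omega
  have hdvd : (2 : ℕ) ^ n ∣ q + 1 := hq1 ▸ (pow_dvd_pow 2 hnA).mul_right m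
  -- characteristic
  obtain ⟨p, hpI⟩ := CharP.exists Fq
  haveI : CharP Fq p := hpI
  obtain ⟨f, hp, hcard⟩ := FiniteField.card Fq p
  haveI hfact : Fact p.Prime := ⟨hp⟩
  have hp2 : p ≠ 2 := by
    rintro rfl
    have h2 : 2 ∣ q := by rw [hqdef, hcard]; exact dvd_pow_self 2 f.pos.ne'
    omega
  haveI : CharP K p := charP_of_injective_algebraMap (algebraMap Fq K).injective p
  haveI hnz : NeZero ((2 ^ n : ℕ) : K) := ⟨by
    rw [Ne, CharP.cast_eq_zero_iff K p]
    intro h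
    exact hp2 ((Nat.prime_dvd_prime_iff_eq hp Nat.prime_two).mp (hp.dvd_of_dvd_pow h))⟩
  have h2npos : 0 < 2 ^ n := Nat.pow_pos (by norm_num)
  obtain ⟨ζ, hζ⟩ := HasEnoughRootsOfUnity.exists_primitiveRoot K (2 ^ n)
  have h4N : 2 ^ n = 4 * 2 ^ (n - 2) := by
    calc 2 ^ n = 2 ^ (2 + (n - 2)) := by congr 1; omega
      _ = 4 * 2 ^ (n - 2) := by rw [pow_add]; norm_num
  have h2N : 2 ^ (n - 1) = 2 * 2 ^ (n - 2) := by
    calc 2 ^ (n - 1) = 2 ^ (1 + (n - 2)) := by congr 1; omega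
      _ = 2 * 2 ^ (n - 2) := by rw [pow_add]; norm_num
  set N := 2 ^ (n - 2) with hN
  have hζq1 : ζ ^ (q + 1) = 1 := by
    obtain ⟨k, hk⟩ := hdvd
    rw [hk, pow_mul, hζ.pow_eq_one, one_pow]
  have hζ0 : ζ ≠ 0 := hζ.ne_zero h2npos.ne'
  set a : ℕ → K := fun j => ζ ^ (2 * j + 1) with ha
  have ha0 : ∀ j, a j ≠ 0 := fun j => pow_ne_zero _ hζ0
  have hcop : ∀ j : ℕ, Nat.Coprime (2 * j + 1) (2 ^ n) :=
    fun j => Nat.Coprime.pow_right _ ((Nat.odd_iff.mpr (by omega)).coprime_two_right)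
  have haprim : ∀ j, IsPrimitiveRoot (a j) (2 ^ n) := fun j => hζ.pow_of_coprime _ (hcop j)
  have haq : ∀ j, (a j) ^ q = (a j)⁻¹ := by
    intro j
    have h1 : (a j) ^ (q + 1) = 1 := by
      have h2 : a j ^ (q + 1) = (ζ ^ (q + 1)) ^ (2 * j + 1) := by
        rw [ha]; dsimp only; rw [← pow_mul, ← pow_mul, Nat.mul_comm]
      rw [h2, hζq1, one_pow]
    rw [pow_succ] at h1
    exact eq_inv_of_mul_eq_one_left h1
  -- Frobenius
  have hfrob : ∀ x y : K, (x + y) ^ q = x ^ q + y ^ q := by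
    intro x y
    haveI : ExpChar K p := ExpChar.prime hp
    rw [hqdef, hcard]; apply add_pow_char_pow
  have hqodd : Odd q := Nat.odd_iff.mpr (by omega)
  -- frobenius-fixed elements come from Fq
  have hrange : ∀ x : K, x ^ q = x → ∃ cv : Fq, algebraMap Fq K cv = x := by
    intro x hx
    by_contra hcon
    push_neg at hcon
    set T : Finset K := Finset.univ.image (algebraMap Fq K) with hT
    have hTcard : T.card = q := by
      rw [hT, Finset.card_image_of_injective _ (algebraMap Fq K).injective, Finset.card_univ]
    have hxT : x ∉ T := by
      intro hmem
      obtain ⟨b, -, hb⟩ := Finset.mem_image.mp hmem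
      exact hcon b hb
    have hq1' : 1 < q := by omega
    have hf0 : (X ^ q - X : K[X]) ≠ 0 := FiniteField.X_pow_card_sub_X_ne_zero K hq1'
    have hsub : insert x T ⊆ (X ^ q - X : K[X]).roots.toFinset := by
      intro t ht
      rw [Multiset.mem_toFinset, mem_roots hf0]
      simp only [IsRoot, eval_sub, eval_pow, eval_X, sub_eq_zero]
      rcases Finset.mem_insert.mp ht with rfl | ht'
      · exact hx
      · obtain ⟨b, -, rfl⟩ := Finset.mem_image.mp ht'
        rw [← map_pow, hqdef, FiniteField.pow_card]
    have hle : (insert x T).card ≤ q := by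
      calc (insert x T).card ≤ (X ^ q - X : K[X]).roots.toFinset.card :=
            Finset.card_le_card hsub
        _ ≤ Multiset.card (X ^ q - X : K[X]).roots := Multiset.toFinset_card_le _
        _ ≤ (X ^ q - X : K[X]).natDegree := card_roots' _
        _ = q := FiniteField.X_pow_card_sub_X_natDegree_eq K hq1'
    rw [Finset.card_insert_of_notMem hxT, hTcard] at hle
    omega
  -- the traces are frobenius-fixed
  have hsfix : ∀ j, (-(a j + (a j)⁻¹)) ^ q = -(a j + (a j)⁻¹) := by
    intro j
    rw [hqodd.neg_pow, hfrob, haq, inv_pow, haq, inv_inv]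
    ring
  have hexists : ∀ i : Fin N, ∃ cv : Fq, algebraMap Fq K cv = -(a i + (a i)⁻¹) :=
    fun i => hrange _ (hsfix i)
  choose c hc using hexists
  -- ζ^(2^(n-1)) = -1
  have hneg1 : ζ ^ (2 ^ (n - 1)) = -1 := by
    have hprod : 2 ^ n = 2 ^ (n - 1) * 2 := by
      calc 2 ^ n = 2 ^ ((n - 1) + 1) := by congr 1; omega
        _ = 2 ^ (n - 1) * 2 := by rw [pow_succ]
    exact (hζ.pow h2npos hprod).eq_neg_one_of_two_right
  have huprim : ∀ i : Fin N, IsPrimitiveRoot (-a (i : ℕ)) (2 ^ n) := by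
    intro i
    have he : -a (i : ℕ) = ζ ^ (2 * (2 ^ (n - 2) + (i : ℕ)) + 1) := by
      rw [ha]; dsimp only
      rw [show 2 * (2 ^ (n - 2) + (i : ℕ)) + 1 = 2 ^ (n - 1) + (2 * (i : ℕ) + 1) by omega,
        pow_add ζ (2 ^ (n - 1)) (2 * (i : ℕ) + 1), hneg1]
      ring
    rw [he]
    exact hζ.pow_of_coprime _ (hcop _)
  have hcu : ∀ i : Fin N, algebraMap Fq K (c i) = -a (i : ℕ) + (-a (i : ℕ))⁻¹ := by
    intro i
    rw [hc, inv_neg]; ring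
  -- inverse of a j
  have hainv : ∀ j : ℕ, j < 2 * N → (a j)⁻¹ = ζ ^ (2 ^ n - (2 * j + 1)) := by
    intro j hj
    symm
    apply eq_inv_of_mul_eq_one_left
    rw [ha]; dsimp only
    rw [← pow_add, show 2 ^ n - (2 * j + 1) + (2 * j + 1) = 2 ^ n by omega, hζ.pow_eq_one]
  have hpair : ∀ i : ℕ, i < N → a (2 * N - 1 - i) = (a i)⁻¹ := by
    intro i hi
    rw [hainv i (by omega), ha]; dsimp only
    congr 1
    omega
  -- injectivity of c
  have hcinj : Function.Injective c := by
    intro i j hij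
    have hs : a i + (a i)⁻¹ = a j + (a j)⁻¹ := by
      have := congrArg (algebraMap Fq K) hij
      rw [hc, hc] at this
      exact neg_injective this
    have key : (a i - a j) * (a i - (a j)⁻¹) = 0 := by
      have h1 : a j * (a j)⁻¹ = 1 := mul_inv_cancel₀ (ha0 j)
      have h2 : a i * (a i)⁻¹ = 1 := mul_inv_cancel₀ (ha0 i)
      have h3 : (a i - a j) * (a i - (a j)⁻¹)
          = a i * a i - a i * (a j + (a j)⁻¹) + a j * (a j)⁻¹ := by ring
      rw [h3, ← hs, h1, mul_add, h2]; ring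
    have hiN : (i : ℕ) < N := i.isLt
    have hjN : (j : ℕ) < N := j.isLt
    rcases mul_eq_zero.mp key with h | h
    · have : a i = a j := by linear_combination h
      have := hζ.pow_inj (i := 2 * i + 1) (j := 2 * j + 1) (by omega) (by omega) this
      exact Fin.ext (by omega)
    · exfalso
      have hprod : a i * a j = 1 := by
        have h' : a i = (a j)⁻¹ := by linear_combination h
        rw [h', inv_mul_cancel₀ (ha0 j)]
      rw [ha] at hprod; dsimp only at hprod
      rw [← pow_add] at hprod
      have := (hζ.pow_eq_one_iff_dvd _).mp hprod
      have hle := Nat.le_of_dvd (by omega) this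
      omega
  -- factorization over K
  have hinjmap : Function.Injective (Polynomial.map (algebraMap Fq K)) :=
    Polynomial.map_injective _ (algebraMap Fq K).injective
  have hfac : ∀ x : K, x ≠ 0 →
      (X - C x) * (X - C x⁻¹) = X ^ 2 + C (-(x + x⁻¹)) * X + 1 := by
    intro x hx
    have h1 : (X - C x) * (X - C x⁻¹) = X ^ 2 + C (-(x + x⁻¹)) * X + C (x * x⁻¹) := by
      rw [C_neg, C_add, C_mul]; ring
    rw [h1, mul_inv_cancel₀ hx, C_1]
  have himinj : Set.InjOn (fun j => a j) (Finset.range (2 * N)) := by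
    intro j1 h1 j2 h2 he
    rw [Finset.mem_coe, Finset.mem_range] at h1 h2
    rw [ha] at he; dsimp only at he
    have := hζ.pow_inj (i := 2 * j1 + 1) (j := 2 * j2 + 1) (by omega) (by omega) he
    omega
  have hprimset : primitiveRoots (2 ^ n) K
      = (Finset.range (2 * N)).image (fun j => a j) := by
    symm
    apply Finset.eq_of_subset_of_card_le
    · intro x hx
      obtain ⟨j, hj, rfl⟩ := Finset.mem_image.mp hx
      exact (mem_primitiveRoots h2npos).mpr (haprim j)
    · rw [hζ.card_primitiveRoots, Nat.totient_prime_pow Nat.prime_two (by omega),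
        Finset.card_image_of_injOn himinj, Finset.card_range]
      omega
  have hmain : cyclotomic (2 ^ n) K = ∏ i ∈ Finset.range N, (X ^ 2 + C (-(a i + (a i)⁻¹)) * X + 1) := by
    rw [cyclotomic_eq_prod_X_sub_primitiveRoots hζ, hprimset,
      Finset.prod_image (fun x hx y hy => himinj hx hy)]
    have hsplit : (∏ j ∈ Finset.range (2 * N), (X - C (a j)))
        = (∏ i ∈ Finset.range N, (X - C (a i)))
          * ∏ i ∈ Finset.range N, (X - C (a (2 * N - 1 - i))) := by
      have h1 : (∏ i ∈ Finset.range N, (X - C (a (2 * N - 1 - i))))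
          = ∏ i ∈ Finset.range N, (X - C (a (N + i))) := by
        rw [← Finset.prod_range_reflect (fun i => (X - C (a (N + i)))) N]
        apply Finset.prod_congr rfl
        intro i hi
        rw [Finset.mem_range] at hi
        have he : N + (N - 1 - i) = 2 * N - 1 - i := by omega
        rw [← he]
      have h2 : Finset.range (2 * N) = Finset.range (N + N) := by rw [two_mul]
      rw [h2, Finset.prod_range_add, h1]
    rw [hsplit, ← Finset.prod_mul_distrib]
    apply Finset.prod_congr rfl
    intro i hi
    rw [Finset.mem_range] at hi
    rw [hpair i hi, hfac _ (ha0 i)]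
  -- conclude
  refine ⟨fun i => -a (i : ℕ), c, huprim, hcu, hcinj, ?_, ?_⟩
  · apply hinjmap
    rw [Polynomial.map_prod, map_cyclotomic, hmain, ← Fin.prod_univ_eq_prod_range
      (fun j => (X ^ 2 + C (-(a j + (a j)⁻¹)) * X + 1 : K[X])) N]
    apply Finset.prod_congr rfl
    intro i _
    rw [Polynomial.map_add, Polynomial.map_add, Polynomial.map_mul, Polynomial.map_pow,
      map_X, map_C, Polynomial.map_one, hc]
  · intro i
    have hdeg : (X ^ 2 + C (c i) * X + 1 : Fq[X]).natDegree = 2 := by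
      compute_degree!
    rw [irreducible_iff_roots_eq_zero_of_degree_le_three (by rw [hdeg]) (by rw [hdeg]; norm_num)]
    rw [Multiset.eq_zero_iff_forall_notMem]
    intro r hr
    have hne : (X ^ 2 + C (c i) * X + 1 : Fq[X]) ≠ 0 := by
      intro h0; rw [h0] at hdeg; simp at hdeg
    rw [mem_roots hne] at hr
    have heval : r ^ 2 + c i * r + 1 = 0 := by
      simpa [IsRoot, eval_add, eval_mul, eval_pow] using hr
    have hr0 : r ≠ 0 := by
      intro h; rw [h] at heval; simp at heval
    set x := algebraMap Fq K r with hx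
    have hxeval : x ^ 2 + (-(a i + (a i)⁻¹)) * x + 1 = 0 := by
      have h2 := congrArg (algebraMap Fq K) heval
      rw [map_add, map_add, map_mul, map_pow, map_one, map_zero, hc] at h2
      exact h2
    have hkey : (x - a i) * (x - (a i)⁻¹) = 0 := by
      have h1 : (x - a i) * (x - (a i)⁻¹)
          = x ^ 2 + (-(a i + (a i)⁻¹)) * x + a i * (a i)⁻¹ := by ring
      rw [h1, mul_inv_cancel₀ (ha0 i)]
      exact hxeval
    have hxq : x ^ (q - 1) = 1 := by
      rw [hx, ← map_pow, hqdef, FiniteField.pow_card_sub_one_eq_one r hr0, map_one]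
    have hdv : 2 ^ n ∣ q - 1 := by
      rcases mul_eq_zero.mp hkey with h | h
      · have hxa : x = a i := by linear_combination h
        exact ((haprim i).pow_eq_one_iff_dvd _).mp (hxa ▸ hxq)
      · have hxa : x = (a i)⁻¹ := by linear_combination h
        exact ((haprim i).inv.pow_eq_one_iff_dvd _).mp (hxa ▸ hxq)
    have h4' : (4 : ℕ) ∣ q - 1 := dvd_trans ⟨N, h4N⟩ hdv
    omega
end

section
/- Let q ≡ 3 (mod 4) be a prime power, r ≥ 3 odd with gcd(q, r) = 1, and suppose d_r = ord_r(q) is odd. Let q = 2^A m − 1 with A ≥ 2, m odd, and n > A. If u is a primitive 2^A-th root of unity in F_{q^2} and Z_u(x) = Σ_{i=0}^{d_r} u^i S_{i,w} x^{2^{n−A}(d_r − i)} is a monic irreducible factor of Φ_{2^n r} over F_{q^2} (with S_{i,w} the i-th elementary symmetric function of the conjugates of a primitive r-th root of unity w), then Z_u(x) · Z_{u^{-1}}(x) has coefficients in F_q, has degree 2^{n−A+1} d_r, and is irreducible over F_q; moreover Z_u ≠ Z_{u^{-1}}. -/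
open Polynomial

private lemma esymm_ringHom_map {R S : Type*} [CommRing R] [CommRing S] (f : R →+* S)
    (s : Multiset R) (i : ℕ) : f (s.esymm i) = ((s.map f).esymm i) := by
  simp only [Multiset.esymm, Multiset.powersetCard_map, Multiset.map_map, Function.comp]
  rw [map_multiset_sum, Multiset.map_map]
  congr 1
  apply Multiset.map_congr rfl
  intro t _
  simp [map_multiset_prod]

private lemma range_succ_shift (d : ℕ) :
    Multiset.range (d + 1) = 0 ::ₘ (Multiset.range d).map (fun j => j + 1) := by
  rw [add_comm d 1, Multiset.range_add]
  rw [show Multiset.range 1 = ({0} : Multiset ℕ) by rfl, Multiset.singleton_add]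
  congr 1
  exact Multiset.map_congr rfl fun x _ => add_comm 1 x

private lemma map_range_shift {α : Type*} (f : ℕ → α) (d : ℕ) (hfd : f d = f 0) :
    (Multiset.range d).map (fun j => f (j + 1)) = (Multiset.range d).map f := by
  have h1 := congrArg (Multiset.map f) (Multiset.range_succ d)
  rw [range_succ_shift, Multiset.map_cons, Multiset.map_cons, Multiset.map_map, hfd] at h1
  exact (Multiset.cons_inj_right (f 0)).mp h1

private lemma esymm_card_eq_prod {R : Type*} [CommRing R] (s : Multiset R) :
    s.esymm (Multiset.card s) = s.prod := by
  have hcard : Multiset.card (Multiset.powersetCard (Multiset.card s) s) = 1 := by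
    rw [Multiset.card_powersetCard, Nat.choose_self]
  obtain ⟨t, ht⟩ := Multiset.card_eq_one.mp hcard
  have hmem : t ∈ Multiset.powersetCard (Multiset.card s) s := by
    rw [ht]; exact Multiset.mem_singleton_self t
  rw [Multiset.mem_powersetCard] at hmem
  have hts : t = s := Multiset.eq_of_le_of_card_le hmem.1 hmem.2.ge
  rw [Multiset.esymm, ht, hts]
  simp

private lemma isUnit_of_map_isUnit {F L : Type*} [Field F] [Field L] (f : F →+* L) (p : F[X])
    (h : IsUnit (p.map f)) : IsUnit p := by
  rw [Polynomial.isUnit_iff_degree_eq_zero] at h ⊢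
  rwa [Polynomial.degree_map_eq_of_injective f.injective] at h

private lemma fix_pow_card {Fq K : Type*} [Field Fq] [Fintype Fq] [Field K] [Algebra Fq K]
    {x : K} (hx : x ^ (Fintype.card Fq) = x) : ∃ a : Fq, algebraMap Fq K a = x := by
  classical
  have hq1 : 1 < Fintype.card Fq := Fintype.one_lt_card
  have hmon : ((X : Fq[X]) ^ (Fintype.card Fq) - X).Monic := by
    apply monic_X_pow_sub
    rw [degree_X]
    exact_mod_cast hq1
  have hcard : Multiset.card ((X : Fq[X]) ^ (Fintype.card Fq) - X).roots
      = ((X : Fq[X]) ^ (Fintype.card Fq) - X).natDegree := by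
    rw [FiniteField.roots_X_pow_card_sub_X, FiniteField.X_pow_card_sub_X_natDegree_eq Fq hq1]
    simp
  have hprod := prod_multiset_X_sub_C_of_monic_of_roots_card_eq hmon hcard
  rw [FiniteField.roots_X_pow_card_sub_X] at hprod
  have hev := congrArg (fun P => Polynomial.eval x (Polynomial.map (algebraMap Fq K) P)) hprod
  simp only [Polynomial.map_multiset_prod, Multiset.map_map, Function.comp,
    Polynomial.map_sub, Polynomial.map_X, Polynomial.map_C, Polynomial.eval_multiset_prod,
    Polynomial.map_pow, Polynomial.eval_sub, Polynomial.eval_pow, Polynomial.eval_X,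
    Polynomial.eval_C] at hev
  rw [hx, sub_self] at hev
  obtain ⟨y, -, h0⟩ := Multiset.mem_map.mp (Multiset.prod_eq_zero_iff.mp hev)
  exact ⟨y, (sub_eq_zero.mp h0).symm⟩

set_option maxHeartbeats 800000 in

theorem stmt19 (Fq : Type*) [Field Fq] [Fintype Fq]
    (q : ℕ) (hq : q = Fintype.card Fq) (hq4 : q % 4 = 3)
    (r : ℕ) (hr3 : 3 ≤ r) (hrodd : Odd r) (hcop : Nat.Coprime r q)
    (d : ℕ) (hd : d = orderOf ((q : ZMod r))) (hdodd : Odd d)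
    (A m : ℕ) (hA : 2 ≤ A) (hm : Odd m) (hqAm : q = 2 ^ A * m - 1)
    (n : ℕ) (hn : A < n)
    (u w : AlgebraicClosure Fq)
    (hu : IsPrimitiveRoot u (2 ^ A)) (hw : IsPrimitiveRoot w r)
    -- `S i` is the i-th elementary symmetric function of the conjugates `w, w^q, …, w^{q^{d-1}}`
    (S : ℕ → AlgebraicClosure Fq)
    (hS : ∀ i, S i = (((Finset.range d).val.map fun j => w ^ q ^ j)).esymm i)
    -- `Z v = Σ_{i=0}^{d} v^i S_i x^{2^{n-A}(d-i)}`
    (Z : AlgebraicClosure Fq → (AlgebraicClosure Fq)[X])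
    (hZ : ∀ v, Z v = ∑ i ∈ Finset.range (d + 1), C (v ^ i * S i) * X ^ (2 ^ (n - A) * (d - i)))
    -- `Z u` is a monic irreducible factor of `Φ_{2^n r}` over `F_{q²}`:
    (hmon : (Z u).Monic)
    (hfac : Z u ∣ (cyclotomic (2 ^ n * r) Fq).map (algebraMap Fq (AlgebraicClosure Fq)))
    (hcoeffq2 : ∀ k, (Z u).coeff k ^ q ^ 2 = (Z u).coeff k)
    (hdeg : (Z u).natDegree = 2 ^ (n - A) * d)
    (hirr2 : ∀ P₁ P₂ : (AlgebraicClosure Fq)[X],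
        (∀ k, P₁.coeff k ^ q ^ 2 = P₁.coeff k) → (∀ k, P₂.coeff k ^ q ^ 2 = P₂.coeff k) →
        Z u = P₁ * P₂ → IsUnit P₁ ∨ IsUnit P₂) :
    (∃ P : Fq[X], P.map (algebraMap Fq (AlgebraicClosure Fq)) = Z u * Z u⁻¹ ∧
      P.natDegree = 2 ^ (n - A + 1) * d ∧ Irreducible P) ∧
    Z u ≠ Z u⁻¹ := by
  classical
  -- numeric basics
  have hq3 : 3 ≤ q := by omega
  have hd1 : 1 ≤ d := hdodd.pos
  have hNpos : 0 < 2 ^ (n - A) * d := Nat.mul_pos ((by positivity)) hd1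
  have ht : 1 ≤ 2 ^ A * m := Nat.one_le_iff_ne_zero.mpr
    (Nat.mul_ne_zero (pow_ne_zero _ (by norm_num)) hm.pos.ne')
  have hq1 : q + 1 = 2 ^ A * m := by omega
  have hu0 : u ≠ 0 := hu.ne_zero (pow_ne_zero _ (by norm_num))
  have huq : u ^ q = u⁻¹ := by
    have h1 : u ^ (q + 1) = 1 := by rw [hq1, pow_mul, hu.pow_eq_one, one_pow]
    rw [pow_succ] at h1
    exact eq_inv_of_mul_eq_one_left h1
  have huq' : (u⁻¹) ^ q = u := by rw [inv_pow, huq, inv_inv]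
  -- characteristic and Frobenius
  have hpchar : CharP Fq (ringChar Fq) := ringChar.charP Fq
  obtain ⟨k0, hpp, hcard0⟩ := FiniteField.card Fq (ringChar Fq)
  set k : ℕ := (k0 : ℕ) with hkdef
  have hcard : Fintype.card Fq = ringChar Fq ^ k := hcard0
  haveI hfp : Fact (ringChar Fq).Prime := ⟨hpp⟩
  haveI hKchar : CharP (AlgebraicClosure Fq) (ringChar Fq) :=
    charP_of_injective_algebraMap (algebraMap Fq (AlgebraicClosure Fq)).injective _
  set φ : AlgebraicClosure Fq →+* AlgebraicClosure Fq :=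
    iterateFrobenius (AlgebraicClosure Fq) (ringChar Fq) k with hφdef
  have hφ : ∀ x, φ x = x ^ q := by
    intro x; rw [hφdef, iterateFrobenius_def, hq, hcard]
  have hq2p : q ^ 2 = (ringChar Fq) ^ (2 * k) := by
    rw [hq, hcard, ← pow_mul, Nat.mul_comm k 2]
  have haddq2 : ∀ a b : AlgebraicClosure Fq, (a + b) ^ q ^ 2 = a ^ q ^ 2 + b ^ q ^ 2 := by
    intro a b; rw [hq2p]; exact add_pow_char_pow a b (ringChar Fq) (2 * k)
  have hoddq2 : Odd (q ^ 2) := (Nat.odd_iff.mpr (by omega)).pow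
  -- the subfield of q²-fixed elements
  let F2 : Subfield (AlgebraicClosure Fq) :=
  { carrier := {x | x ^ q ^ 2 = x}
    one_mem' := one_pow _
    mul_mem' := fun {a b} ha hb => by
      simp only [Set.mem_setOf_eq, mul_pow] at *; rw [ha, hb]
    zero_mem' := by
      simp only [Set.mem_setOf_eq]; exact zero_pow (pow_ne_zero _ (by omega))
    add_mem' := fun {a b} ha hb => by
      simp only [Set.mem_setOf_eq] at *; rw [haddq2, ha, hb]
    neg_mem' := fun {a} ha => by
      simp only [Set.mem_setOf_eq] at *; rw [hoddq2.neg_pow, ha]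
    inv_mem' := fun a ha => by
      simp only [Set.mem_setOf_eq] at *; rw [inv_pow, ha] }
  have hmemF2 : ∀ x : AlgebraicClosure Fq, x ∈ F2 ↔ x ^ q ^ 2 = x := fun x => Iff.rfl
  let ι : F2 →+* AlgebraicClosure Fq := F2.subtype
  have hιinj : Function.Injective ι := Subtype.val_injective
  -- embedding Fq into F2
  have halg_fix : ∀ a : Fq,
      (algebraMap Fq (AlgebraicClosure Fq) a) ^ q = algebraMap Fq (AlgebraicClosure Fq) a := by
    intro a; rw [← map_pow, hq, FiniteField.pow_card]
  have halg_mem : ∀ a : Fq, algebraMap Fq (AlgebraicClosure Fq) a ∈ F2 := by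
    intro a; rw [hmemF2, pow_two, pow_mul, halg_fix, halg_fix]
  let ψ : Fq →+* F2 := (algebraMap Fq (AlgebraicClosure Fq)).codRestrict F2 halg_mem
  have hcompιψ : ι.comp ψ = algebraMap Fq (AlgebraicClosure Fq) := RingHom.ext fun a => rfl
  have hψι : ∀ P : Fq[X], (P.map ψ).map ι = P.map (algebraMap Fq (AlgebraicClosure Fq)) := by
    intro P; rw [Polynomial.map_map, hcompιψ]
  -- Frobenius fixes the S i
  have hwd : w ^ q ^ d = w := by
    have h1 : ((q : ZMod r)) ^ d = 1 := by rw [hd]; exact pow_orderOf_eq_one _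
    have h2 : ((q ^ d : ℕ) : ZMod r) = ((1 : ℕ) : ZMod r) := by push_cast; simpa using h1
    have h3 : r ∣ q ^ d - 1 :=
      (Nat.modEq_iff_dvd' (Nat.one_le_pow _ _ (by omega))).mp
        ((ZMod.natCast_eq_natCast_iff _ _ _).mp h2).symm
    obtain ⟨c, hc⟩ := h3
    have hqd1 : q ^ d = r * c + 1 := by
      have := Nat.one_le_pow d q (by omega); omega
    rw [hqd1, pow_add, pow_one, pow_mul, hw.pow_eq_one, one_pow, one_mul]
  have hfd : w ^ q ^ d = w ^ q ^ 0 := by simpa using hwd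
  have hSq : ∀ i, (S i) ^ q = S i := by
    intro i
    rw [hS i, ← hφ]
    rw [esymm_ringHom_map φ]
    congr 1
    rw [Multiset.map_map, Finset.range_val]
    have : ((Multiset.range d).map ((φ : AlgebraicClosure Fq → AlgebraicClosure Fq) ∘
        fun j => w ^ q ^ j)) = (Multiset.range d).map (fun j => w ^ q ^ (j + 1)) := by
      apply Multiset.map_congr rfl
      intro j _
      simp only [Function.comp_apply, hφ]
      rw [← pow_mul, ← pow_succ]
    rw [this, map_range_shift (fun j => w ^ q ^ j) d hfd]
  -- S 0 = 1 and S d ≠ 0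
  have hS0 : S 0 = 1 := by
    rw [hS]
    simp [Multiset.esymm, Multiset.powersetCard_zero_left]
  have hSd : S d = (((Finset.range d).val.map fun j => w ^ q ^ j)).prod := by
    rw [hS]
    have hcardM : Multiset.card ((Finset.range d).val.map fun j => w ^ q ^ j) = d := by simp
    have h := esymm_card_eq_prod ((Finset.range d).val.map fun j => w ^ q ^ j)
    rw [hcardM] at h
    rw [h]
  have hSd0 : S d ≠ 0 := by
    rw [hSd]
    apply Multiset.prod_ne_zero
    intro h0
    obtain ⟨j, -, hj⟩ := Multiset.mem_map.mp h0
    exact pow_ne_zero _ (hw.ne_zero (by omega)) hj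
  -- shape of Z v
  have hZsplit : ∀ v, Z v = X ^ (2 ^ (n - A) * d) +
      ∑ i ∈ Finset.range d, C (v ^ (i + 1) * S (i + 1)) * X ^ (2 ^ (n - A) * (d - (i + 1))) := by
    intro v
    rw [hZ v, Finset.sum_range_succ']
    rw [add_comm]
    congr 1
    rw [hS0]
    simp
  have hElt : ∀ v, (∑ i ∈ Finset.range d,
      C (v ^ (i + 1) * S (i + 1)) * X ^ (2 ^ (n - A) * (d - (i + 1)))).degree
      < ((X : (AlgebraicClosure Fq)[X]) ^ (2 ^ (n - A) * d)).degree := by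
    intro v
    rw [degree_X_pow]
    apply lt_of_le_of_lt (degree_sum_le _ _)
    rw [Finset.sup_lt_iff (WithBot.bot_lt_coe _)]
    intro i _
    apply lt_of_le_of_lt (degree_C_mul_X_pow_le _ _)
    have hlt : 2 ^ (n - A) * (d - (i + 1)) < 2 ^ (n - A) * d :=
      mul_lt_mul_of_pos_left (by omega) (by positivity)
    exact_mod_cast hlt
  have hZmon : ∀ v, (Z v).Monic := by
    intro v
    rw [hZsplit v]
    exact (monic_X_pow _).add_of_left (hElt v)
  have hZdeg : ∀ v, (Z v).natDegree = 2 ^ (n - A) * d := by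
    intro v
    have hdeg' : (Z v).degree = ((2 ^ (n - A) * d : ℕ) : WithBot ℕ) := by
      rw [hZsplit v, degree_add_eq_left_of_degree_lt (hElt v), degree_X_pow]
    exact natDegree_eq_of_degree_eq_some hdeg'
  have hZne0 : ∀ v, Z v ≠ 0 := fun v => (hZmon v).ne_zero
  -- Frobenius action on Z
  have hZmap : ∀ v, (Z v).map φ = Z (v ^ q) := by
    intro v
    rw [hZ v, hZ (v ^ q), Polynomial.map_sum]
    apply Finset.sum_congr rfl
    intro i _
    rw [Polynomial.map_mul, Polynomial.map_C, Polynomial.map_pow, Polynomial.map_X, hφ]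
    congr 2
    rw [mul_pow, ← pow_mul, mul_comm i q, pow_mul, hSq]
  have hZmapu : (Z u).map φ = Z u⁻¹ := by rw [hZmap, huq]
  have hZmapu' : (Z u⁻¹).map φ = Z u := by rw [hZmap, huq']
  -- Z u ≠ Z u⁻¹
  have hcoeff0 : ∀ v, (Z v).coeff 0 = v ^ d * S d := by
    intro v
    rw [hZ, finset_sum_coeff]
    rw [Finset.sum_eq_single d]
    · rw [Nat.sub_self, Nat.mul_zero, pow_zero, mul_one, coeff_C_zero]
    · intro i hi hne
      rw [coeff_C_mul, coeff_X_pow, if_neg, mul_zero]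
      have hild : i < d := by
        have := Finset.mem_range.mp hi; omega
      have : 0 < 2 ^ (n - A) * (d - i) := Nat.mul_pos ((by positivity)) (by omega)
      omega
    · intro hd'
      exact absurd (Finset.self_mem_range_succ d) hd'
  have hZne : Z u ≠ Z u⁻¹ := by
    intro hEq
    have h0 : u ^ d * S d = (u⁻¹) ^ d * S d := by
      rw [← hcoeff0, ← hcoeff0, hEq]
    have hud : u ^ d = (u⁻¹) ^ d := mul_right_cancel₀ hSd0 h0
    have hu2d : u ^ (d * 2) = 1 := by
      rw [pow_mul, pow_two]
      nth_rewrite 2 [hud]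
      rw [inv_pow]
      exact mul_inv_cancel₀ (pow_ne_zero _ hu0)
    have hdvd : 2 ^ A ∣ d * 2 := (hu.pow_eq_one_iff_dvd _).mp hu2d
    have hA' : 2 ^ (A - 1) * 2 = 2 ^ A := by
      rw [← pow_succ]; congr 1; omega
    rw [← hA'] at hdvd
    have hdvd2 : 2 ^ (A - 1) ∣ d := (Nat.mul_dvd_mul_iff_right (by norm_num : 0 < 2)).mp hdvd
    have h2d : 2 ∣ d := dvd_trans (dvd_pow_self 2 (by omega : A - 1 ≠ 0)) hdvd2
    rw [Nat.odd_iff] at hdodd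
    omega
  -- the product has coefficients in Fq
  have hprodfix : ∀ j, (Z u * Z u⁻¹).coeff j ^ q = (Z u * Z u⁻¹).coeff j := by
    have hmapeq : (Z u * Z u⁻¹).map φ = Z u * Z u⁻¹ := by
      rw [Polynomial.map_mul, hZmapu, hZmapu', mul_comm]
    intro j
    have hcj := congrArg (fun P => P.coeff j) hmapeq
    simp only [coeff_map, hφ] at hcj
    exact hcj
  obtain ⟨P, hPmap⟩ : ∃ P : Fq[X],
      P.map (algebraMap Fq (AlgebraicClosure Fq)) = Z u * Z u⁻¹ := by
    refine (Polynomial.mem_lifts _).mp ((Polynomial.lifts_iff_coeff_lifts _).mpr (fun j => ?_))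
    exact fix_pow_card (by rw [← hq]; exact hprodfix j)
  have hproddeg : (Z u * Z u⁻¹).natDegree = 2 ^ (n - A + 1) * d := by
    rw [natDegree_mul (hZne0 u) (hZne0 u⁻¹), hZdeg, hZdeg, pow_succ]
    ring
  have hPdeg : P.natDegree = 2 ^ (n - A + 1) * d := by
    rw [← hproddeg, ← hPmap,
      natDegree_map_eq_of_injective (algebraMap Fq (AlgebraicClosure Fq)).injective]
  -- lift Z u and Z u⁻¹ to F2
  have hcoeffq2' : ∀ j, (Z u⁻¹).coeff j ^ q ^ 2 = (Z u⁻¹).coeff j := by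
    intro j
    have hc : (Z u⁻¹).coeff j = (Z u).coeff j ^ q := by rw [← hZmapu, coeff_map, hφ]
    rw [hc, ← pow_mul, mul_comm, pow_mul, hcoeffq2]
  obtain ⟨ZU, hZU⟩ : ∃ ZU : F2[X], ZU.map ι = Z u := by
    refine (Polynomial.mem_lifts _).mp ((Polynomial.lifts_iff_coeff_lifts _).mpr (fun j => ?_))
    exact ⟨⟨(Z u).coeff j, hcoeffq2 j⟩, rfl⟩
  obtain ⟨ZU', hZU'⟩ : ∃ ZU' : F2[X], ZU'.map ι = Z u⁻¹ := by
    refine (Polynomial.mem_lifts _).mp ((Polynomial.lifts_iff_coeff_lifts _).mpr (fun j => ?_))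
    exact ⟨⟨(Z u⁻¹).coeff j, hcoeffq2' j⟩, rfl⟩
  have hZUdeg : ZU.natDegree = 2 ^ (n - A) * d := by
    rw [← hZdeg u, ← hZU, natDegree_map_eq_of_injective hιinj]
  have hZU'deg : ZU'.natDegree = 2 ^ (n - A) * d := by
    rw [← hZdeg u⁻¹, ← hZU', natDegree_map_eq_of_injective hιinj]
  have hnotunit : ∀ QQ : F2[X], QQ.natDegree = 2 ^ (n - A) * d → ¬ IsUnit QQ := by
    intro QQ hQQ hun
    have := natDegree_eq_zero_of_isUnit hun
    omega
  have hfixcoe : ∀ (c : F2[X]) (j : ℕ),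
      (c.map ι).coeff j ^ q ^ 2 = (c.map ι).coeff j := by
    intro c j; rw [coeff_map]; exact (c.coeff j).2
  have hirrZU : Irreducible ZU := by
    constructor
    · exact hnotunit ZU hZUdeg
    · intro a b hab
      have hZab : Z u = a.map ι * b.map ι := by rw [← hZU, hab, Polynomial.map_mul]
      rcases hirr2 _ _ (hfixcoe a) (hfixcoe b) hZab with h | h
      · exact Or.inl (isUnit_of_map_isUnit ι a h)
      · exact Or.inr (isUnit_of_map_isUnit ι b h)
  have hfixmap : ∀ P' : (AlgebraicClosure Fq)[X],
      (∀ j, P'.coeff j ^ q ^ 2 = P'.coeff j) →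
      ∀ j, (P'.map φ).coeff j ^ q ^ 2 = (P'.map φ).coeff j := by
    intro P' hP' j
    rw [coeff_map, hφ, ← pow_mul, mul_comm, pow_mul, hP']
  have hirr2' : ∀ P₁ P₂ : (AlgebraicClosure Fq)[X],
      (∀ j, P₁.coeff j ^ q ^ 2 = P₁.coeff j) → (∀ j, P₂.coeff j ^ q ^ 2 = P₂.coeff j) →
      Z u⁻¹ = P₁ * P₂ → IsUnit P₁ ∨ IsUnit P₂ := by
    intro P₁ P₂ h1 h2 hEq
    have hEq2 : Z u = P₁.map φ * P₂.map φ := by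
      rw [← hZmapu', hEq, Polynomial.map_mul]
    rcases hirr2 _ _ (hfixmap P₁ h1) (hfixmap P₂ h2) hEq2 with h | h
    · exact Or.inl (isUnit_of_map_isUnit φ _ h)
    · exact Or.inr (isUnit_of_map_isUnit φ _ h)
  have hirrZU' : Irreducible ZU' := by
    constructor
    · exact hnotunit ZU' hZU'deg
    · intro a b hab
      have hZab : Z u⁻¹ = a.map ι * b.map ι := by rw [← hZU', hab, Polynomial.map_mul]
      rcases hirr2' _ _ (hfixcoe a) (hfixcoe b) hZab with h | h
      · exact Or.inl (isUnit_of_map_isUnit ι a h)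
      · exact Or.inr (isUnit_of_map_isUnit ι b h)
  -- P maps to ZU * ZU' over F2
  have hψP : P.map ψ = ZU * ZU' := by
    apply Polynomial.map_injective ι hιinj
    rw [Polynomial.map_mul, hZU, hZU', hψι, hPmap]
  have hcompφ : φ.comp (algebraMap Fq (AlgebraicClosure Fq))
      = algebraMap Fq (AlgebraicClosure Fq) := by
    ext a
    rw [RingHom.comp_apply, hφ, halg_fix]
  -- key step for irreducibility
  have key : ∀ Q₁ Q₂ : Fq[X], ¬IsUnit Q₂ →
      Q₁.map ψ * Q₂.map ψ = ZU * ZU' → ZU ∣ Q₁.map ψ → False := by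
    intro Q₁ Q₂ hu2 hmul hdvd
    obtain ⟨B, hB⟩ := hdvd
    have hZU0 : ZU ≠ 0 := hirrZU.ne_zero
    have hZU'eq : ZU' = B * Q₂.map ψ := by
      apply mul_left_cancel₀ hZU0
      rw [← hmul, hB, mul_assoc]
    rcases hirrZU'.isUnit_or_isUnit hZU'eq with hB1 | hB2
    · obtain ⟨c, hcu, hc⟩ := Polynomial.isUnit_iff.mp hB1
      have hc0 : (c : AlgebraicClosure Fq) ≠ 0 := by
        intro h
        exact hcu.ne_zero (by exact_mod_cast h)
      have hmapK : Q₁.map (algebraMap Fq (AlgebraicClosure Fq))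
          = Z u * C (c : AlgebraicClosure Fq) := by
        rw [← hψι, hB, ← hc, Polynomial.map_mul, hZU, Polynomial.map_C]
        rfl
      have hmapK2 : Q₁.map (algebraMap Fq (AlgebraicClosure Fq))
          = Z u⁻¹ * C ((c : AlgebraicClosure Fq) ^ q) := by
        have h1 := congrArg (Polynomial.map φ) hmapK
        rw [Polynomial.map_map, hcompφ] at h1
        rw [h1, Polynomial.map_mul, hZmapu, Polynomial.map_C, hφ]
      have heq : Z u * C (c : AlgebraicClosure Fq)
          = Z u⁻¹ * C ((c : AlgebraicClosure Fq) ^ q) := hmapK.symm.trans hmapK2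
      have hlc := congrArg Polynomial.leadingCoeff heq
      rw [leadingCoeff_mul, leadingCoeff_mul, leadingCoeff_C, leadingCoeff_C,
        (hZmon u).leadingCoeff, (hZmon u⁻¹).leadingCoeff, one_mul, one_mul] at hlc
      rw [← hlc] at heq
      exact hZne (mul_right_cancel₀ (Polynomial.C_ne_zero.mpr hc0) heq)
    · exact hu2 (isUnit_of_map_isUnit ψ Q₂ hB2)
  have hPirr : Irreducible P := by
    constructor
    · intro hun
      have h0 := natDegree_eq_zero_of_isUnit hun
      rw [hPdeg] at h0
      have : 0 < 2 ^ (n - A + 1) * d := Nat.mul_pos ((by positivity)) hd1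
      omega
    · intro a b hab
      by_contra hcon
      push_neg at hcon
      obtain ⟨ha, hb⟩ := hcon
      have hmul : a.map ψ * b.map ψ = ZU * ZU' := by
        rw [← Polynomial.map_mul, ← hab, hψP]
      have hZUprime : Prime ZU := UniqueFactorizationMonoid.irreducible_iff_prime.mp hirrZU
      have hZUdvd : ZU ∣ a.map ψ * b.map ψ := by
        rw [hmul]; exact dvd_mul_right _ _
      rcases hZUprime.2.2 _ _ hZUdvd with h | h
      · exact key a b hb hmul h
      · exact key b a ha (by rw [mul_comm]; exact hmul) h
  exact ⟨⟨P, hPmap, hPdeg, hPirr⟩, hZne⟩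
end
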